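/- arXiv:1907.08459 — 5 statements merged into one kernel-verified Lean document; each statement's English description precedes it below -/
import Mathlib

section
/- Let n ∈ ℕ, 1 < p < ∞, 1 ≤ r ≤ q < ∞, and let b ∈ SV(0,∞) satisfy condition (C). Then there exists a constant C > 0 such that ‖f‖_{Z_{p,q,n,b̄_{(r,q)}}} ≤ C ‖f‖_{Z_{p,r,n,b}} for every measurable function f on ℝ^n (that is, Z_{p,r,n,b}(ℝ^n) = Z_{p,r,n,b̄_{(r,r)}}(ℝ^n) is continuously embedded into Z_{p,q,n,b̄_{(r,q)}}(ℝ^n); note that b̄_{(r,r)} = b). -/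
open MeasureTheory Set Filter
open scoped ENNReal NNReal Topology

noncomputable section

/-- The `L_q` quasinorm (real exponent `q`) of an `ℝ≥0∞`-valued function on a set `s ⊆ ℝ`. -/
def eLq (g : ℝ → ℝ≥0∞) (q : ℝ) (s : Set ℝ) : ℝ≥0∞ :=
  (∫⁻ t in s, g t ^ q) ^ (1 / q)

/-- The `L_q` quasinorm (real exponent `q`) of a real-valued function on a set `s ⊆ ℝ`. -/
def eLqR (g : ℝ → ℝ) (q : ℝ) (s : Set ℝ) : ℝ≥0∞ :=
  eLq (fun t => ENNReal.ofReal |g t|) q s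

/-- Two real functions are equivalent on `(0,∞)`: each is bounded by a positive constant
multiple of the other. -/
def EquivOn (f g : ℝ → ℝ) : Prop :=
  ∃ c C : ℝ, 0 < c ∧ 0 < C ∧ ∀ t ∈ Ioi (0 : ℝ), c * g t ≤ f t ∧ f t ≤ C * g t

/-- `b` is slowly varying on `(0,∞)`. -/
def SlowlyVarying (b : ℝ → ℝ) : Prop :=
  Measurable b ∧ (∀ t ∈ Ioi (0 : ℝ), 0 < b t) ∧
  ∀ ε : ℝ, 0 < ε →
    (∃ g : ℝ → ℝ, MonotoneOn g (Ioi (0 : ℝ)) ∧ EquivOn (fun t => t ^ ε * b t) g) ∧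
    (∃ g : ℝ → ℝ, AntitoneOn g (Ioi (0 : ℝ)) ∧ EquivOn (fun t => t ^ (-ε) * b t) g)

/-- Condition (C): `‖t^{-1/r} b(t)‖_{r;(0,1)} = ∞` and `‖t^{-1/r} b(t)‖_{r;(1,∞)} < ∞`. -/
def CondC (b : ℝ → ℝ) (r : ℝ) : Prop :=
  eLqR (fun t => t ^ (-(1 / r)) * b t) r (Ioo 0 1) = ∞ ∧
  eLqR (fun t => t ^ (-(1 / r)) * b t) r (Ioi 1) ≠ ∞

/-- `b_r(t) := ‖τ^{-1/r} b(τ)‖_{r;(t,∞)}`. -/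
def brF (b : ℝ → ℝ) (r t : ℝ) : ℝ≥0∞ :=
  eLqR (fun τ => τ ^ (-(1 / r)) * b τ) r (Ioi t)

/-- `b̄_{(r,q)}(t) := (b_r(t))^{1-r/q} (b(t))^{r/q}`. -/
def bbarF (b : ℝ → ℝ) (r q t : ℝ) : ℝ :=
  (brF b r t).toReal ^ (1 - r / q) * b t ^ (r / q)

/-- `b̃_{(r,q,n,p)}(t) := (b_r(t^{1/n}))^{1-r/q+r/max{p,q}} (b(t^{1/n}))^{r/q-r/max{p,q}}`. -/
def btildeF (b : ℝ → ℝ) (r q p : ℝ) (n : ℕ) (t : ℝ) : ℝ :=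
  (brF b r (t ^ ((n : ℝ)⁻¹))).toReal ^ (1 - r / q + r / max p q) *
    b (t ^ ((n : ℝ)⁻¹)) ^ (r / q - r / max p q)

/-- The non-increasing rearrangement
`f^*(t) = inf {λ ≥ 0 : |{x : |f(x)| > λ}|ₙ ≤ t}` (with value `∞` if no such `λ` exists). -/
def rearr {n : ℕ} (f : EuclideanSpace ℝ (Fin n) → ℝ) (t : ℝ) : ℝ≥0∞ :=
  sInf {l : ℝ≥0∞ | volume {x : EuclideanSpace ℝ (Fin n) | l < (‖f x‖₊ : ℝ≥0∞)} ≤ ENNReal.ofReal t}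

/-- The quasinorm of the space `Z_{p,q,n,β}(ℝⁿ)`:
`‖ t^{-1/q} β(t^{1/n}) ‖f^*‖_{p;(0,t)} ‖_{q;(0,∞)}`. -/
def Znorm (p q : ℝ) (n : ℕ) (β : ℝ → ℝ) (f : EuclideanSpace ℝ (Fin n) → ℝ) : ℝ≥0∞ :=
  eLq (fun t => ENNReal.ofReal (t ^ (-(1 / q)) * β (t ^ ((n : ℝ)⁻¹))) *
        eLq (rearr f) p (Ioo 0 t)) q (Ioi 0)

/-- The Lorentz–Karamata quasinorm `‖f‖_{p,q;β} = ‖ t^{1/p-1/q} β(t) f^*(t) ‖_{q;(0,∞)}`. -/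
def LKnorm (p q : ℝ) {n : ℕ} (β : ℝ → ℝ) (f : EuclideanSpace ℝ (Fin n) → ℝ) : ℝ≥0∞ :=
  eLq (fun t => ENNReal.ofReal (t ^ (1 / p - 1 / q) * β t) * rearr f t) q (Ioi 0)

/-- The modulus of smoothness `ω₁(f,t)_p = sup_{|h| ≤ t} ‖f(·+h) - f‖_p`. -/
def smoothMod {n : ℕ} (p : ℝ) (f : EuclideanSpace ℝ (Fin n) → ℝ) (t : ℝ) : ℝ≥0∞ :=
  ⨆ (h : EuclideanSpace ℝ (Fin n)) (_ : ‖h‖ ≤ t),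
    eLpNorm (fun x => f (x + h) - f x) (ENNReal.ofReal p) volume

/-- The Besov norm `‖f‖_{B^{0,b}_{p,r}} = ‖f‖_p + ‖t^{-1/r} b(t) ω₁(f,t)_p‖_{r;(0,∞)}`. -/
def besovNorm {n : ℕ} (p r : ℝ) (b : ℝ → ℝ) (f : EuclideanSpace ℝ (Fin n) → ℝ) : ℝ≥0∞ :=
  eLpNorm f (ENNReal.ofReal p) volume +
    eLq (fun t => ENNReal.ofReal (t ^ (-(1 / r)) * b t) * smoothMod p f t) r (Ioi 0)

/-- Membership in the Besov space `B^{0,b}_{p,r}(ℝⁿ)`. -/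
def MemBesov {n : ℕ} (p r : ℝ) (b : ℝ → ℝ) (f : EuclideanSpace ℝ (Fin n) → ℝ) : Prop :=
  MemLp f (ENNReal.ofReal p) volume ∧ besovNorm p r b f ≠ ∞


section Aux

open MeasureTheory Set
open scoped ENNReal

private lemma lintegral_image_deriv {s : Set ℝ} {f f' : ℝ → ℝ}
    (hs : MeasurableSet s) (hf' : ∀ x ∈ s, HasDerivWithinAt f (f' x) s x)
    (hf : Set.InjOn f s) (g : ℝ → ℝ≥0∞) :
    ∫⁻ x in f '' s, g x = ∫⁻ x in s, ENNReal.ofReal |f' x| * g (f x) := by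
  simpa only [ContinuousLinearMap.det_toSpanSingleton] using
    lintegral_image_eq_lintegral_abs_det_fderiv_mul volume hs
      (fun x hx => (hf' x hx).hasFDerivWithinAt) hf g

private lemma image_rpow_Ioi {t m : ℝ} (ht : 0 < t) (hm : 0 < m) :
    (fun u : ℝ => u ^ m) '' Ioi t = Ioi (t ^ m) := by
  ext y
  simp only [mem_image, mem_Ioi]
  constructor
  · rintro ⟨u, hu, rfl⟩
    exact Real.rpow_lt_rpow ht.le hu hm
  · intro hy
    have hy0 : 0 < y := (Real.rpow_pos_of_pos ht m).trans hy
    refine ⟨y ^ m⁻¹, ?_, ?_⟩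
    · have h := Real.rpow_lt_rpow (Real.rpow_pos_of_pos ht m).le hy (inv_pos.2 hm)
      rwa [← Real.rpow_mul ht.le, mul_inv_cancel₀ hm.ne', Real.rpow_one] at h
    · rw [← Real.rpow_mul hy0.le, inv_mul_cancel₀ hm.ne', Real.rpow_one]

private lemma main_aux (n : ℕ) (hn : 0 < n) (r q : ℝ) (hr : 1 ≤ r) (hrq : r ≤ q)
    (b : ℝ → ℝ) (hb : ∀ t ∈ Ioi (0 : ℝ), 0 < b t)
    (Φ : ℝ → ℝ≥0∞) (hΦ : Monotone Φ) :
    (∫⁻ t in Ioi (0 : ℝ),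
        (ENNReal.ofReal (t ^ (-(1 / q)) * bbarF b r q (t ^ ((n : ℝ)⁻¹))) * Φ t) ^ q) ^ (1 / q)
      ≤ (∫⁻ t in Ioi (0 : ℝ),
        (ENNReal.ofReal (t ^ (-(1 / r)) * b (t ^ ((n : ℝ)⁻¹))) * Φ t) ^ r) ^ (1 / r) := by
  have hr0 : (0 : ℝ) < r := zero_lt_one.trans_le hr
  have hq0 : (0 : ℝ) < q := hr0.trans_le hrq
  have hn' : (0 : ℝ) < n := by exact_mod_cast hn
  set m : ℝ := (n : ℝ)⁻¹ with hmdef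
  have hm : 0 < m := inv_pos.2 hn'
  have hm1 : m ≤ 1 := inv_le_one_of_one_le₀ (by exact_mod_cast hn)
  set A : ℝ≥0∞ :=
    ∫⁻ t in Ioi (0 : ℝ), (ENNReal.ofReal (t ^ (-(1 / r)) * b (t ^ m)) * Φ t) ^ r with hAdef
  -- key pointwise bound
  have key : ∀ t : ℝ, 0 < t → brF b r (t ^ m) ^ r * Φ t ^ r ≤ A := by
    intro t ht
    have hBr : brF b r (t ^ m) ^ r
        = ∫⁻ τ in Ioi (t ^ m), (ENNReal.ofReal |τ ^ (-(1 / r)) * b τ|) ^ r := by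
      rw [brF, eLqR, eLq, ← ENNReal.rpow_mul, one_div, inv_mul_cancel₀ hr0.ne', ENNReal.rpow_one]
    have hderiv : ∀ u ∈ Ioi t,
        HasDerivWithinAt (fun u : ℝ => u ^ m) (m * u ^ (m - 1)) (Ioi t) u :=
      fun u hu => (Real.hasDerivAt_rpow_const (Or.inl (ht.trans hu).ne')).hasDerivWithinAt
    have hsm : StrictMonoOn (fun u : ℝ => u ^ m) (Ioi t) :=
      fun a ha b' _ hab => Real.rpow_lt_rpow (ht.trans ha).le hab hm
    have hsub : brF b r (t ^ m) ^ r
        = ∫⁻ u in Ioi t, ENNReal.ofReal |m * u ^ (m - 1)|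
            * (ENNReal.ofReal |(u ^ m) ^ (-(1 / r)) * b (u ^ m)|) ^ r := by
      rw [hBr, ← image_rpow_Ioi ht hm,
        lintegral_image_deriv measurableSet_Ioi hderiv hsm.injOn]
    calc brF b r (t ^ m) ^ r * Φ t ^ r
        = Φ t ^ r * ∫⁻ u in Ioi t, ENNReal.ofReal |m * u ^ (m - 1)|
            * (ENNReal.ofReal |(u ^ m) ^ (-(1 / r)) * b (u ^ m)|) ^ r := by
          rw [hsub, mul_comm]
      _ ≤ ∫⁻ u in Ioi t, Φ t ^ r * (ENNReal.ofReal |m * u ^ (m - 1)|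
            * (ENNReal.ofReal |(u ^ m) ^ (-(1 / r)) * b (u ^ m)|) ^ r) :=
          lintegral_const_mul_le _ _
      _ ≤ ∫⁻ u in Ioi t, (ENNReal.ofReal (u ^ (-(1 / r)) * b (u ^ m)) * Φ u) ^ r := by
          refine lintegral_mono_ae (((ae_restrict_mem measurableSet_Ioi)).mono ?_)
          intro u hu
          have hu0 : 0 < u := ht.trans hu
          have hum : 0 < u ^ m := Real.rpow_pos_of_pos hu0 m
          have hbu : 0 < b (u ^ m) := hb _ hum
          set U : ℝ≥0∞ := ENNReal.ofReal u with hUdef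
          have hU0 : U ≠ 0 := (ENNReal.ofReal_pos.2 hu0).ne'
          have hUt : U ≠ ∞ := ENNReal.ofReal_ne_top
          set β : ℝ≥0∞ := ENNReal.ofReal (b (u ^ m)) with hβdef
          have e1 : ENNReal.ofReal |m * u ^ (m - 1)| = ENNReal.ofReal m * U ^ (m - 1) := by
            rw [abs_of_pos (mul_pos hm (Real.rpow_pos_of_pos hu0 _)),
              ENNReal.ofReal_mul hm.le, ← ENNReal.ofReal_rpow_of_pos hu0]
          have e2 : (ENNReal.ofReal |(u ^ m) ^ (-(1 / r)) * b (u ^ m)|) ^ r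
              = U ^ (-m) * β ^ r := by
            rw [abs_of_pos (mul_pos (Real.rpow_pos_of_pos hum _) hbu),
              ← Real.rpow_mul hu0.le,
              ENNReal.ofReal_mul (Real.rpow_nonneg hu0.le _),
              ← ENNReal.ofReal_rpow_of_pos hu0,
              ENNReal.mul_rpow_of_nonneg _ _ hr0.le, ← ENNReal.rpow_mul,
              show m * -(1 / r) * r = -m by
                rw [mul_assoc, neg_mul, one_div, inv_mul_cancel₀ hr0.ne', mul_neg_one]]
          have e3 : (ENNReal.ofReal (u ^ (-(1 / r)) * b (u ^ m)) * Φ u) ^ r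
              = U ^ (-1 : ℝ) * (β ^ r * Φ u ^ r) := by
            rw [ENNReal.ofReal_mul (Real.rpow_nonneg hu0.le _),
              ← ENNReal.ofReal_rpow_of_pos hu0,
              ENNReal.mul_rpow_of_nonneg _ _ hr0.le,
              ENNReal.mul_rpow_of_nonneg _ _ hr0.le, ← ENNReal.rpow_mul,
              show -(1 / r) * r = -1 by rw [neg_mul, one_div, inv_mul_cancel₀ hr0.ne'],
              mul_assoc]
          rw [e1, e2, e3]
          calc Φ t ^ r * (ENNReal.ofReal m * U ^ (m - 1) * (U ^ (-m) * β ^ r))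
              = ENNReal.ofReal m * (U ^ (m - 1) * U ^ (-m) * (β ^ r * Φ t ^ r)) := by ring
            _ = ENNReal.ofReal m * (U ^ (-1 : ℝ) * (β ^ r * Φ t ^ r)) := by
                rw [← ENNReal.rpow_add _ _ hU0 hUt, show m - 1 + -m = (-1 : ℝ) by ring]
            _ ≤ 1 * (U ^ (-1 : ℝ) * (β ^ r * Φ u ^ r)) := by
                gcongr
                · exact ENNReal.ofReal_le_one.2 hm1
                · exact hΦ hu.le
            _ = U ^ (-1 : ℝ) * (β ^ r * Φ u ^ r) := one_mul _
      _ ≤ A := lintegral_mono' (Measure.restrict_mono (Ioi_subset_Ioi ht.le) le_rfl) le_rfl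
  -- pointwise comparison of the two integrands
  have he : (0 : ℝ) ≤ (q - r) / r := div_nonneg (sub_nonneg.2 hrq) hr0.le
  have step2 : ∀ t : ℝ, 0 < t →
      (ENNReal.ofReal (t ^ (-(1 / q)) * bbarF b r q (t ^ m)) * Φ t) ^ q
        ≤ A ^ ((q - r) / r)
          * ((ENNReal.ofReal (t ^ (-(1 / r)) * b (t ^ m)) * Φ t) ^ r) := by
    intro t ht
    have hs : 0 < t ^ m := Real.rpow_pos_of_pos ht m
    have hbs : 0 < b (t ^ m) := hb _ hs
    set B : ℝ≥0∞ := brF b r (t ^ m) with hBdef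
    set βt : ℝ≥0∞ := ENNReal.ofReal (b (t ^ m)) with hβtdef
    set T : ℝ≥0∞ := ENNReal.ofReal t with hTdef
    have he1 : (0 : ℝ) ≤ 1 - r / q := sub_nonneg.2 ((div_le_one hq0).2 hrq)
    have he2 : (0 : ℝ) ≤ r / q := div_nonneg hr0.le hq0.le
    have h1 : ENNReal.ofReal (t ^ (-(1 / q)) * bbarF b r q (t ^ m))
        ≤ T ^ (-(1 / q)) * (B ^ (1 - r / q) * βt ^ (r / q)) := by
      rw [bbarF, ENNReal.ofReal_mul (Real.rpow_nonneg ht.le _),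
        ENNReal.ofReal_mul (Real.rpow_nonneg ENNReal.toReal_nonneg _),
        ← ENNReal.ofReal_rpow_of_pos ht,
        ← ENNReal.ofReal_rpow_of_nonneg ENNReal.toReal_nonneg he1,
        ← ENNReal.ofReal_rpow_of_nonneg hbs.le he2]
      gcongr
      exact ENNReal.ofReal_toReal_le
    have hsplit : Φ t ^ q = Φ t ^ (q - r) * Φ t ^ r := by
      rw [← ENNReal.rpow_add_of_nonneg _ _ (sub_nonneg.2 hrq) hr0.le, sub_add_cancel]
    have h2 : (T ^ (-(1 / q)) * (B ^ (1 - r / q) * βt ^ (r / q)) * Φ t) ^ q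
        = (B ^ (q - r) * Φ t ^ (q - r)) * (T ^ (-1 : ℝ) * (βt ^ r * Φ t ^ r)) := by
      rw [ENNReal.mul_rpow_of_nonneg _ _ hq0.le, ENNReal.mul_rpow_of_nonneg _ _ hq0.le,
        ENNReal.mul_rpow_of_nonneg _ _ hq0.le,
        ← ENNReal.rpow_mul T, ← ENNReal.rpow_mul B, ← ENNReal.rpow_mul βt,
        show -(1 / q) * q = -1 by rw [neg_mul, one_div, inv_mul_cancel₀ hq0.ne'],
        show (1 - r / q) * q = q - r by rw [sub_mul, one_mul, div_mul_cancel₀ _ hq0.ne'],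
        show r / q * q = r by rw [div_mul_cancel₀ _ hq0.ne'], hsplit]
      ring
    have h3 : B ^ (q - r) * Φ t ^ (q - r) ≤ A ^ ((q - r) / r) := by
      have h := ENNReal.rpow_le_rpow (key t ht) he
      rwa [ENNReal.mul_rpow_of_nonneg _ _ he, ← ENNReal.rpow_mul, ← ENNReal.rpow_mul,
        show r * ((q - r) / r) = q - r by rw [mul_comm, div_mul_cancel₀ _ hr0.ne']] at h
    have h4 : (ENNReal.ofReal (t ^ (-(1 / r)) * b (t ^ m)) * Φ t) ^ r
        = T ^ (-1 : ℝ) * (βt ^ r * Φ t ^ r) := by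
      rw [ENNReal.ofReal_mul (Real.rpow_nonneg ht.le _),
        ← ENNReal.ofReal_rpow_of_pos ht,
        ENNReal.mul_rpow_of_nonneg _ _ hr0.le, ENNReal.mul_rpow_of_nonneg _ _ hr0.le,
        ← ENNReal.rpow_mul,
        show -(1 / r) * r = -1 by rw [neg_mul, one_div, inv_mul_cancel₀ hr0.ne'],
        mul_assoc]
    calc (ENNReal.ofReal (t ^ (-(1 / q)) * bbarF b r q (t ^ m)) * Φ t) ^ q
        ≤ (T ^ (-(1 / q)) * (B ^ (1 - r / q) * βt ^ (r / q)) * Φ t) ^ q := by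
          gcongr
      _ = (B ^ (q - r) * Φ t ^ (q - r)) * (T ^ (-1 : ℝ) * (βt ^ r * Φ t ^ r)) := h2
      _ ≤ A ^ ((q - r) / r) * (T ^ (-1 : ℝ) * (βt ^ r * Φ t ^ r)) := by gcongr
      _ = A ^ ((q - r) / r) * ((ENNReal.ofReal (t ^ (-(1 / r)) * b (t ^ m)) * Φ t) ^ r) := by
          rw [h4]
  -- assemble
  by_cases hA : A = ∞
  · rw [hA, ENNReal.top_rpow_of_pos (by positivity : (0 : ℝ) < 1 / r)]
    exact le_top
  · have hint : (∫⁻ t in Ioi (0 : ℝ),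
        (ENNReal.ofReal (t ^ (-(1 / q)) * bbarF b r q (t ^ m)) * Φ t) ^ q)
          ≤ A ^ (q / r) := by
      calc (∫⁻ t in Ioi (0 : ℝ),
            (ENNReal.ofReal (t ^ (-(1 / q)) * bbarF b r q (t ^ m)) * Φ t) ^ q)
          ≤ ∫⁻ t in Ioi (0 : ℝ), A ^ ((q - r) / r)
              * ((ENNReal.ofReal (t ^ (-(1 / r)) * b (t ^ m)) * Φ t) ^ r) :=
            lintegral_mono_ae (((ae_restrict_mem measurableSet_Ioi)).mono
              fun t ht => step2 t ht)
        _ = A ^ ((q - r) / r) * A := by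
            rw [lintegral_const_mul' _ _ (ENNReal.rpow_ne_top_of_nonneg he hA), ← hAdef]
        _ = A ^ (q / r) := by
            rw [show q / r = (q - r) / r + 1 by field_simp; ring,
              ENNReal.rpow_add_of_nonneg _ _ he zero_le_one, ENNReal.rpow_one]
    have := ENNReal.rpow_le_rpow hint (by positivity : (0 : ℝ) ≤ 1 / q)
    rwa [← ENNReal.rpow_mul,
      show q / r * (1 / q) = 1 / r by
        rw [div_mul_div_comm, mul_one, mul_comm r q, ← div_div, div_self hq0.ne']] at this

end Aux


/-- `Z_{p,r,n,b}(ℝⁿ) ↪ Z_{p,q,n,b̄_{(r,q)}}(ℝⁿ)` for `1 ≤ r ≤ q < ∞`. -/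
theorem Z_embed_Z (n : ℕ) (hn : 0 < n) (p r q : ℝ)
    (hp1 : 1 < p) (hr : 1 ≤ r) (hrq : r ≤ q)
    (b : ℝ → ℝ) (hb : SlowlyVarying b) (hbC : CondC b r) :
    ∃ C : ℝ, 0 < C ∧ ∀ f : EuclideanSpace ℝ (Fin n) → ℝ, Measurable f →
      Znorm p q n (bbarF b r q) f ≤ ENNReal.ofReal C * Znorm p r n b f := by
  refine ⟨1, one_pos, fun f hf => ?_⟩
  rw [ENNReal.ofReal_one, one_mul]
  have hp0 : (0 : ℝ) < p := zero_lt_one.trans hp1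
  have hΦ : Monotone fun t : ℝ => eLq (rearr f) p (Ioo 0 t) := by
    intro a b' hab
    exact ENNReal.rpow_le_rpow
      (lintegral_mono' (Measure.restrict_mono (Ioo_subset_Ioo le_rfl hab) le_rfl) le_rfl)
      (by positivity)
  exact main_aux n hn r q hr hrq b hb.2.1 _ hΦ

end
end

section
/- Let n ∈ ℕ, 1 < p < ∞, let b ∈ SV(0,∞) satisfy condition (C) with 1 ≤ r ≤ p, and take q = p. Set b̄ = b̄_{(r,p)} and b̃ = b̃_{(r,p,n,p)}. Then the quasi-norms are equivalent: there exist constants c, C > 0 such that c ‖f‖_{p,p;b̃} ≤ ‖f‖_{Z_{p,p,n,b̄}} ≤ C ‖f‖_{p,p;b̃} for every measurable function f on ℝ^n; in particular Z_{p,p,n,b̄}(ℝ^n) = L_{p,p;b̃}(ℝ^n). -/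
open MeasureTheory Set Filter
open scoped ENNReal NNReal Topology

noncomputable section

/-! ### Auxiliary development -/

/-- The weight density `W(τ) = (|τ^{-1/r} b(τ)|)^r` as an `ℝ≥0∞`-valued function. -/
def ZLK_W (b : ℝ → ℝ) (r τ : ℝ) : ℝ≥0∞ := ENNReal.ofReal |τ ^ (-(1 / r)) * b τ| ^ r

/-- The tail integral `G(x) = ∫_x^∞ W`. -/
def ZLK_G (b : ℝ → ℝ) (r x : ℝ) : ℝ≥0∞ := ∫⁻ τ in Ioi x, ZLK_W b r τ

lemma ZLK_brF_eq (b : ℝ → ℝ) (r x : ℝ) : brF b r x = ZLK_G b r x ^ (1 / r) := rfl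

lemma ZLK_measurable_W {b : ℝ → ℝ} (hb : Measurable b) (r : ℝ) : Measurable (ZLK_W b r) := by
  unfold ZLK_W; fun_prop

lemma ZLK_antitone_G (b : ℝ → ℝ) (r : ℝ) : Antitone (ZLK_G b r) := fun x y hxy =>
  lintegral_mono_set (Ioi_subset_Ioi hxy)

lemma ZLK_measurable_G (b : ℝ → ℝ) (r : ℝ) : Measurable (ZLK_G b r) :=
  (ZLK_antitone_G b r).measurable

lemma ZLK_W_eq {b : ℝ → ℝ} {r : ℝ} (hr0 : 0 < r) {u : ℝ} (hu : 0 < u) (hbu : 0 < b u) :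
    ZLK_W b r u = ENNReal.ofReal u⁻¹ * ENNReal.ofReal (b u ^ r) := by
  unfold ZLK_W
  rw [abs_of_pos (mul_pos (Real.rpow_pos_of_pos hu _) hbu),
    ENNReal.ofReal_rpow_of_nonneg (mul_pos (Real.rpow_pos_of_pos hu _) hbu).le hr0.le,
    Real.mul_rpow (Real.rpow_nonneg hu.le _) hbu.le, ← Real.rpow_mul hu.le,
    (show -(1 / r) * r = -1 by field_simp), Real.rpow_neg_one,
    ENNReal.ofReal_mul (inv_nonneg.mpr hu.le)]

lemma ZLK_G_ne_top {b : ℝ → ℝ} {r : ℝ} (hb : SlowlyVarying b) (hr0 : 0 < r)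
    (hG1 : ZLK_G b r 1 ≠ ∞) {x : ℝ} (hx : 0 < x) : ZLK_G b r x ≠ ∞ := by
  rcases le_or_gt 1 x with h1 | h1
  · exact ne_top_of_le_ne_top hG1 (ZLK_antitone_G b r h1)
  · obtain ⟨g, hg, c0, C0, hc0, hC0, heq⟩ := (hb.2.2 1 one_pos).2
    set M := C0 * ((x⁻¹ * b x) / c0) with hM
    have hbx : 0 < b x := hb.2.1 x hx
    have hbound : ∀ τ ∈ Ioc x 1, ZLK_W b r τ ≤ ENNReal.ofReal (x ^ (-(1 / r)) * M) ^ r := by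
      intro τ hτ
      have hτ0 : 0 < τ := hx.trans hτ.1
      have hbτ : 0 < b τ := hb.2.1 τ hτ0
      have h1τ := heq τ hτ0
      have h1x := heq x hx
      simp only [Real.rpow_neg_one] at h1τ h1x
      have hCgτ : 0 < C0 * g τ := lt_of_lt_of_le (mul_pos (inv_pos.mpr hτ0) hbτ) h1τ.2
      have h2 : b τ ≤ C0 * g τ := by
        calc b τ = τ * (τ⁻¹ * b τ) := by field_simp
          _ ≤ τ * (C0 * g τ) := mul_le_mul_of_nonneg_left h1τ.2 hτ0.le
          _ ≤ 1 * (C0 * g τ) := mul_le_mul_of_nonneg_right hτ.2 hCgτ.le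
          _ = C0 * g τ := one_mul _
      have hgτx : g τ ≤ g x := hg (mem_Ioi.mpr hx) (mem_Ioi.mpr hτ0) hτ.1.le
      have h4 : g x ≤ (x⁻¹ * b x) / c0 := (le_div_iff₀' hc0).mpr h1x.1
      have h5 : b τ ≤ M := by
        calc b τ ≤ C0 * g τ := h2
          _ ≤ C0 * g x := mul_le_mul_of_nonneg_left hgτx hC0.le
          _ ≤ M := by rw [hM]; exact mul_le_mul_of_nonneg_left h4 hC0.le
      unfold ZLK_W
      rw [abs_of_pos (mul_pos (Real.rpow_pos_of_pos hτ0 _) hbτ)]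
      apply ENNReal.rpow_le_rpow _ hr0.le
      apply ENNReal.ofReal_le_ofReal
      exact mul_le_mul
        (Real.rpow_le_rpow_of_nonpos hx hτ.1.le
          (neg_nonpos.mpr (div_nonneg zero_le_one hr0.le)))
        h5 hbτ.le (Real.rpow_nonneg hx.le _)
    have hsplit : ZLK_G b r x = (∫⁻ τ in Ioc x 1, ZLK_W b r τ) + ZLK_G b r 1 := by
      unfold ZLK_G
      rw [show Ioi x = Ioc x 1 ∪ Ioi 1 from (Ioc_union_Ioi_eq_Ioi h1.le).symm,
        lintegral_union measurableSet_Ioi (Ioc_disjoint_Ioi le_rfl)]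
    rw [hsplit]
    apply ENNReal.add_ne_top.mpr
    refine ⟨?_, hG1⟩
    have hle : (∫⁻ τ in Ioc x 1, ZLK_W b r τ) ≤
        ENNReal.ofReal (x ^ (-(1 / r)) * M) ^ r * volume (Ioc x 1) := by
      rw [← setLIntegral_const]
      exact setLIntegral_mono measurable_const hbound
    refine ne_top_of_le_ne_top ?_ hle
    exact ENNReal.mul_ne_top
      (ENNReal.rpow_ne_top_of_nonneg hr0.le ENNReal.ofReal_ne_top) measure_Ioc_lt_top.ne

lemma ZLK_key_upper {b : ℝ → ℝ} (hb : Measurable b) (r : ℝ) {x α : ℝ} (hα : 0 ≤ α) :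
    ∫⁻ u in Ioi x, ZLK_G b r u ^ α * ZLK_W b r u ≤ ZLK_G b r x ^ (α + 1) := by
  calc ∫⁻ u in Ioi x, ZLK_G b r u ^ α * ZLK_W b r u
      ≤ ∫⁻ u in Ioi x, ZLK_G b r x ^ α * ZLK_W b r u :=
        setLIntegral_mono (measurable_const.mul (ZLK_measurable_W hb r))
          (fun u hu => mul_le_mul_left
            (ENNReal.rpow_le_rpow (ZLK_antitone_G b r (le_of_lt hu)) hα) _)
    _ = ZLK_G b r x ^ α * ZLK_G b r x := lintegral_const_mul _ (ZLK_measurable_W hb r)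
    _ ≤ ZLK_G b r x ^ (α + 1) := by
        rcases eq_or_ne (ZLK_G b r x) 0 with h0 | h0
        · rcases eq_or_lt_of_le hα with hα0 | hα0
          · simp [h0, ← hα0]
          · simp [h0, ENNReal.zero_rpow_of_pos hα0,
              ENNReal.zero_rpow_of_pos (by linarith : (0:ℝ) < α + 1)]
        rcases eq_or_ne (ZLK_G b r x) ∞ with htop | htop
        · rw [htop, ENNReal.top_rpow_of_pos (by linarith : (0:ℝ) < α + 1)]
          exact le_top
        · rw [ENNReal.rpow_add α 1 h0 htop, ENNReal.rpow_one]

lemma ZLK_key_lower {b : ℝ → ℝ} (hb : Measurable b) (r : ℝ) {x α : ℝ} (hα : 0 ≤ α)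
    (hx : ZLK_G b r x ≠ ∞) :
    (ZLK_G b r x / 2) ^ (α + 1) ≤ ∫⁻ u in Ioi x, ZLK_G b r u ^ α * ZLK_W b r u := by
  rcases eq_or_ne (ZLK_G b r x) 0 with h0 | h0
  · rw [h0]
    simp [ENNReal.zero_rpow_of_pos (by linarith : (0:ℝ) < α + 1)]
  set ν := volume.withDensity (ZLK_W b r) with hν
  have hνs : ∀ {s : Set ℝ}, MeasurableSet s → ν s = ∫⁻ u in s, ZLK_W b r u :=
    fun hs => withDensity_apply _ hs
  have hνsing : ∀ z : ℝ, ν {z} = 0 := fun z =>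
    (withDensity_absolutelyContinuous volume (ZLK_W b r)) Real.volume_singleton
  set m := ZLK_G b r x / 2 with hm
  have hm_ne_top : m ≠ ∞ := (ENNReal.div_lt_top hx (by norm_num)).ne
  have hm0 : m ≠ 0 := by simp [hm, ENNReal.div_eq_zero_iff, h0]
  set A := {u : ℝ | x < u ∧ m < ZLK_G b r u} with hA
  have hAmeas : MeasurableSet A := by
    have : A = Ioi x ∩ {u : ℝ | m < ZLK_G b r u} := rfl
    rw [this]
    exact measurableSet_Ioi.inter (measurableSet_lt measurable_const (ZLK_measurable_G b r))
  set B := {u : ℝ | x < u ∧ ZLK_G b r u ≤ m} with hB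
  have hIci : ∀ w : ℝ, Ici w ⊆ {w} ∪ Ioi w := fun w v hv =>
    (eq_or_lt_of_le hv).imp Eq.symm id
  have hBν : ν B ≤ m := by
    rcases eq_empty_or_nonempty B with hBe | hBne
    · simp [hBe]
    set z := sInf B with hz
    have hbdd : BddBelow B := ⟨x, fun u hu => hu.1.le⟩
    have hIoi_subset : Ioi z ⊆ B := by
      intro v hv
      obtain ⟨u, huB, huv⟩ := exists_lt_of_csInf_lt hBne hv
      exact ⟨huB.1.trans huv, le_trans (ZLK_antitone_G b r huv.le) huB.2⟩
    have hGle : ∀ w : ℝ, z < w → ν (Ioi w) ≤ m := by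
      intro w hw
      calc ν (Ioi w) = ∫⁻ u in Ioi w, ZLK_W b r u := hνs measurableSet_Ioi
        _ = ZLK_G b r w := rfl
        _ ≤ m := (hIoi_subset hw).2
    have hIoiz : ν (Ioi z) ≤ m := by
      have hmono : Monotone (fun k : ℕ => Ici (z + ((k : ℝ) + 1)⁻¹)) := by
        intro k l hkl
        apply Ici_subset_Ici.mpr
        have h1 : ((k : ℝ) + 1) ≤ ((l : ℝ) + 1) := by exact_mod_cast add_le_add_left (Nat.cast_le.mpr hkl) 1
        have : ((l : ℝ) + 1)⁻¹ ≤ ((k : ℝ) + 1)⁻¹ := inv_anti₀ (by positivity) h1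
        linarith
      have hUnion : ⋃ k : ℕ, Ici (z + ((k : ℝ) + 1)⁻¹) = Ioi z := by
        ext v
        simp only [mem_iUnion, mem_Ici, mem_Ioi]
        constructor
        · rintro ⟨k, hk⟩
          have : (0:ℝ) < ((k : ℝ) + 1)⁻¹ := by positivity
          linarith
        · intro hv
          obtain ⟨k, hk⟩ := exists_nat_one_div_lt (by linarith : (0:ℝ) < v - z)
          rw [one_div] at hk
          exact ⟨k, by linarith⟩
      have htend := tendsto_measure_iUnion_atTop (μ := ν) hmono
      rw [hUnion] at htend
      apply le_of_tendsto' htend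
      intro k
      have hzk : z < z + ((k : ℝ) + 1)⁻¹ := by
        have : (0:ℝ) < ((k : ℝ) + 1)⁻¹ := by positivity
        linarith
      calc ν (Ici (z + ((k : ℝ) + 1)⁻¹))
          ≤ ν ({z + ((k : ℝ) + 1)⁻¹} ∪ Ioi (z + ((k : ℝ) + 1)⁻¹)) := measure_mono (hIci _)
        _ ≤ ν {z + ((k : ℝ) + 1)⁻¹} + ν (Ioi (z + ((k : ℝ) + 1)⁻¹)) := measure_union_le _ _
        _ ≤ m := by rw [hνsing, zero_add]; exact hGle _ hzk
    have hBsub : B ⊆ Ici z := fun u hu => csInf_le hbdd hu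
    calc ν B ≤ ν (Ici z) := measure_mono hBsub
      _ ≤ ν ({z} ∪ Ioi z) := measure_mono (hIci _)
      _ ≤ ν {z} + ν (Ioi z) := measure_union_le _ _
      _ ≤ m := by rw [hνsing, zero_add]; exact hIoiz
  have hcover : Ioi x ⊆ A ∪ B := by
    intro u hu
    rcases lt_or_ge m (ZLK_G b r u) with h | h
    · exact Or.inl ⟨hu, h⟩
    · exact Or.inr ⟨hu, h⟩
  have hAν : m ≤ ν A := by
    have h1 : ν (Ioi x) ≤ ν A + ν B := le_trans (measure_mono hcover) (measure_union_le _ _)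
    have h2 : ZLK_G b r x ≤ ν A + m := by
      have hGx : ZLK_G b r x = ν (Ioi x) := (hνs measurableSet_Ioi).symm
      rw [hGx]
      exact h1.trans (add_le_add_right hBν _)
    have h3 : ZLK_G b r x - m ≤ ν A := tsub_le_iff_right.mpr h2
    rwa [hm, ENNReal.sub_half hx] at h3
  calc (m : ℝ≥0∞) ^ (α + 1) = m ^ α * m := by
        rw [ENNReal.rpow_add α 1 hm0 hm_ne_top, ENNReal.rpow_one]
    _ ≤ m ^ α * ν A := mul_le_mul_right hAν _
    _ = m ^ α * ∫⁻ u in A, ZLK_W b r u := by rw [hνs hAmeas]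
    _ = ∫⁻ u in A, m ^ α * ZLK_W b r u :=
        (lintegral_const_mul' _ _ (ENNReal.rpow_ne_top_of_nonneg hα hm_ne_top)).symm
    _ ≤ ∫⁻ u in A, ZLK_G b r u ^ α * ZLK_W b r u :=
        setLIntegral_mono (((ZLK_measurable_G b r).pow_const α).mul (ZLK_measurable_W hb r))
          (fun u hu => mul_le_mul_left (ENNReal.rpow_le_rpow hu.2.le hα) _)
    _ ≤ ∫⁻ u in Ioi x, ZLK_G b r u ^ α * ZLK_W b r u := lintegral_mono_set (fun u hu => hu.1)

/-- Change of variables `t = u^n` in a lintegral over a tail interval. -/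
lemma ZLK_subst {n : ℕ} (hn : 0 < n) (c : ℝ → ℝ≥0∞) {y : ℝ} (hy : 0 < y) :
    ∫⁻ t in Ioi (y ^ n), ENNReal.ofReal t⁻¹ * c (t ^ ((n : ℝ)⁻¹)) =
      (n : ℝ≥0∞) * ∫⁻ u in Ioi y, ENNReal.ofReal u⁻¹ * c u := by
  have himg : (fun u : ℝ => u ^ n) '' Ioi y = Ioi (y ^ n) := by
    apply Subset.antisymm
    · rintro t ⟨u, hu, rfl⟩
      exact pow_lt_pow_left₀ hu hy.le hn.ne'
    · intro t ht
      have hyn : 0 < y ^ n := pow_pos hy n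
      have ht0 : 0 < t := hyn.trans ht
      refine ⟨t ^ ((n : ℝ)⁻¹), ?_, Real.rpow_inv_natCast_pow ht0.le hn.ne'⟩
      have h2 : (y ^ n : ℝ) ^ ((n : ℝ)⁻¹) < t ^ ((n : ℝ)⁻¹) :=
        Real.rpow_lt_rpow hyn.le ht (by positivity)
      rwa [Real.pow_rpow_inv_natCast hy.le hn.ne'] at h2
  have hderiv : ∀ u ∈ Ioi y, HasFDerivWithinAt (fun u : ℝ => u ^ n)
      (ContinuousLinearMap.smulRight (1 : ℝ →L[ℝ] ℝ) ((n : ℝ) * u ^ (n - 1))) (Ioi y) u :=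
    fun u _ => (hasDerivAt_pow n u).hasDerivWithinAt.hasFDerivWithinAt
  have hinj : InjOn (fun u : ℝ => u ^ n) (Ioi y) :=
    (pow_left_strictMonoOn₀ hn.ne').injOn.mono (fun u hu => (hy.trans hu).le)
  rw [← himg, lintegral_image_eq_lintegral_abs_det_fderiv_mul volume measurableSet_Ioi hderiv hinj,
    ← lintegral_const_mul' _ _ (by simp : (n : ℝ≥0∞) ≠ ⊤)]
  apply setLIntegral_congr_fun measurableSet_Ioi
  intro u hu
  have hu0 : 0 < u := hy.trans hu
  have hpow : (0:ℝ) < u ^ (n - 1) := pow_pos hu0 _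
  dsimp only
  rw [ContinuousLinearMap.smulRight_one_eq_toSpanSingleton, ContinuousLinearMap.det_toSpanSingleton, Real.pow_rpow_inv_natCast hu0.le hn.ne',
    abs_of_pos (by positivity : (0:ℝ) < (n : ℝ) * u ^ (n - 1)), ← mul_assoc,
    ← ENNReal.ofReal_mul (by positivity : (0:ℝ) ≤ (n : ℝ) * u ^ (n - 1))]
  have harith : (n : ℝ) * u ^ (n - 1) * (u ^ n)⁻¹ = (n : ℝ) * u⁻¹ := by
    have h1 : (u : ℝ) ^ n = u ^ (n - 1) * u := by
      conv_lhs => rw [← Nat.sub_add_cancel hn]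
      rw [pow_succ]
    rw [h1, mul_inv]
    field_simp
  rw [harith, ENNReal.ofReal_mul (by positivity : (0:ℝ) ≤ (n : ℝ)), ENNReal.ofReal_natCast,
    mul_assoc]

/-- Tonelli-type swap for the weighted Hardy operator. -/
lemma ZLK_tonelli (φ ψ : ℝ → ℝ≥0∞) (hφ : Measurable φ) (hψ : Measurable ψ) :
    ∫⁻ t in Ioi (0:ℝ), φ t * ∫⁻ s in Ioo 0 t, ψ s =
      ∫⁻ s in Ioi (0:ℝ), ψ s * ∫⁻ t in Ioi s, φ t := by
  have hset : MeasurableSet {q : ℝ × ℝ | q.2 ∈ Ioo 0 q.1} := by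
    have h1 : {q : ℝ × ℝ | q.2 ∈ Ioo 0 q.1} =
        {q : ℝ × ℝ | (0:ℝ) < q.2} ∩ {q : ℝ × ℝ | q.2 < q.1} := by
      ext q; simp [mem_Ioo, mem_setOf_eq]
    rw [h1]
    exact (measurableSet_lt measurable_const measurable_snd).inter
      (measurableSet_lt measurable_snd measurable_fst)
  have huncurry : Measurable (Function.uncurry fun t s => φ t * (Ioo (0:ℝ) t).indicator ψ s) := by
    have heq : (Function.uncurry fun t s => φ t * (Ioo (0:ℝ) t).indicator ψ s) =
        fun q : ℝ × ℝ => φ q.1 * ({q : ℝ × ℝ | q.2 ∈ Ioo 0 q.1}.indicator (fun q => ψ q.2) q) := by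
      ext q
      simp only [Function.uncurry, Set.indicator_apply, Set.mem_Ioo, Set.mem_setOf_eq]
    rw [heq]
    exact (hφ.comp measurable_fst).mul ((hψ.comp measurable_snd).indicator hset)
  have h1 : ∀ t : ℝ, φ t * ∫⁻ s in Ioo 0 t, ψ s =
      ∫⁻ s in Ioi (0:ℝ), φ t * (Ioo (0:ℝ) t).indicator ψ s := by
    intro t
    rw [lintegral_const_mul _ (hψ.indicator measurableSet_Ioo),
      lintegral_indicator measurableSet_Ioo, Measure.restrict_restrict measurableSet_Ioo,
      inter_eq_left.mpr (fun s hs => hs.1)]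
  have h2 : ∀ s ∈ Ioi (0:ℝ), (∫⁻ t in Ioi (0:ℝ), φ t * (Ioo (0:ℝ) t).indicator ψ s) =
      ψ s * ∫⁻ t in Ioi s, φ t := by
    intro s hs
    have hpt : ∀ t ∈ Ioi (0:ℝ), φ t * (Ioo (0:ℝ) t).indicator ψ s =
        ψ s * (Ioi s).indicator φ t := by
      intro t _
      by_cases hst : s < t
      · rw [indicator_of_mem (show s ∈ Ioo (0:ℝ) t from ⟨hs, hst⟩),
          indicator_of_mem (show t ∈ Ioi s from hst), mul_comm]
      · rw [indicator_of_notMem (fun h => hst h.2),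
          indicator_of_notMem (show t ∉ Ioi s from hst), mul_zero, mul_zero]
    rw [setLIntegral_congr_fun measurableSet_Ioi hpt,
      lintegral_const_mul _ (hφ.indicator measurableSet_Ioi),
      lintegral_indicator measurableSet_Ioi, Measure.restrict_restrict measurableSet_Ioi,
      inter_eq_left.mpr (Ioi_subset_Ioi (le_of_lt hs))]
  rw [setLIntegral_congr_fun measurableSet_Ioi (fun t _ => h1 t),
    ← setLIntegral_congr_fun measurableSet_Ioi h2]
  exact lintegral_lintegral_swap huncurry.aemeasurable

/-- Pointwise identification of the `Z`-norm weight. -/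
lemma ZLK_Abar_pow {b : ℝ → ℝ} {r p : ℝ} (hp0 : 0 < p) (hr0 : 0 < r) (hrp : r ≤ p)
    {t u : ℝ} (ht : 0 < t) (hbu : 0 ≤ b u) (hG : ZLK_G b r u ≠ ∞) :
    ENNReal.ofReal (t ^ (-(1 / p)) * bbarF b r p u) ^ p =
      ENNReal.ofReal t⁻¹ * (ZLK_G b r u ^ ((p - r) / r) * ENNReal.ofReal (b u ^ r)) := by
  have hGr : ZLK_G b r u ^ (1 / r) ≠ ∞ :=
    ENNReal.rpow_ne_top_of_nonneg (div_nonneg zero_le_one hr0.le) hG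
  have hX : (0:ℝ) ≤ (ZLK_G b r u ^ (1 / r)).toReal := ENNReal.toReal_nonneg
  unfold bbarF
  rw [ZLK_brF_eq]
  rw [ENNReal.ofReal_mul (Real.rpow_nonneg ht.le _),
    ENNReal.ofReal_mul (Real.rpow_nonneg hX _),
    ENNReal.mul_rpow_of_nonneg _ _ hp0.le, ENNReal.mul_rpow_of_nonneg _ _ hp0.le]
  congr 1
  · rw [ENNReal.ofReal_rpow_of_pos (Real.rpow_pos_of_pos ht _), ← Real.rpow_mul ht.le,
      (show -(1 / p) * p = -1 by field_simp), Real.rpow_neg_one]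
  congr 1
  · rw [ENNReal.ofReal_rpow_of_nonneg (Real.rpow_nonneg hX _) hp0.le,
      ← Real.rpow_mul hX, (show (1 - r / p) * p = p - r by field_simp),
      ← ENNReal.ofReal_rpow_of_nonneg hX (by linarith : (0:ℝ) ≤ p - r),
      ENNReal.ofReal_toReal hGr, ← ENNReal.rpow_mul,
      (show 1 / r * (p - r) = (p - r) / r by ring)]
  · rw [ENNReal.ofReal_rpow_of_nonneg (Real.rpow_nonneg hbu _) hp0.le,
      ← Real.rpow_mul hbu, div_mul_cancel₀ _ hp0.ne']

/-- Pointwise identification of the Lorentz–Karamata weight when `q = p`. -/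
lemma ZLK_btilde_pow {b : ℝ → ℝ} {r p : ℝ} {n : ℕ} (hp0 : 0 < p) (hr0 : 0 < r)
    {t : ℝ} (hG : ZLK_G b r (t ^ ((n : ℝ)⁻¹)) ≠ ∞) (v : ℝ≥0∞) :
    (ENNReal.ofReal (t ^ (1 / p - 1 / p) * btildeF b r p p n t) * v) ^ p =
      ZLK_G b r (t ^ ((n : ℝ)⁻¹)) ^ (p / r) * v ^ p := by
  have h1 : btildeF b r p p n t = (ZLK_G b r (t ^ ((n : ℝ)⁻¹)) ^ (1 / r)).toReal := by
    unfold btildeF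
    rw [ZLK_brF_eq, max_self, (show 1 - r / p + r / p = (1:ℝ) by ring), sub_self,
      Real.rpow_one, Real.rpow_zero, mul_one]
  rw [h1, sub_self, Real.rpow_zero, one_mul,
    ENNReal.ofReal_toReal (ENNReal.rpow_ne_top_of_nonneg (div_nonneg zero_le_one hr0.le) hG),
    ENNReal.mul_rpow_of_nonneg _ _ hp0.le, ← ENNReal.rpow_mul,
    (show 1 / r * p = p / r by ring)]

lemma ZLK_rearr_antitone {n : ℕ} (f : EuclideanSpace ℝ (Fin n) → ℝ) : Antitone (rearr f) := by
  intro s t hst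
  exact sInf_le_sInf (fun l hl => le_trans hl (ENNReal.ofReal_le_ofReal hst))

/-- For `q = p` the quasinorms of `Z_{p,p,n,b̄}(ℝⁿ)` and `L_{p,p;b̃}(ℝⁿ)` are
equivalent. -/
theorem Z_eq_LK_of_q_eq_p (n : ℕ) (hn : 0 < n) (p r : ℝ)
    (hp1 : 1 < p) (hr : 1 ≤ r) (hrp : r ≤ p)
    (b : ℝ → ℝ) (hb : SlowlyVarying b) (hbC : CondC b r) :
    ∃ c C : ℝ, 0 < c ∧ 0 < C ∧ ∀ f : EuclideanSpace ℝ (Fin n) → ℝ, Measurable f →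
      ENNReal.ofReal c * LKnorm p p (btildeF b r p p n) f ≤ Znorm p p n (bbarF b r p) f ∧
      Znorm p p n (bbarF b r p) f ≤ ENNReal.ofReal C * LKnorm p p (btildeF b r p p n) f := by
  have hp0 : 0 < p := lt_trans one_pos hp1
  have hr0 : 0 < r := lt_of_lt_of_le one_pos hr
  have hpne : p ≠ 0 := hp0.ne'
  have hrne : r ≠ 0 := hr0.ne'
  have h1p : (0:ℝ) ≤ 1 / p := div_nonneg zero_le_one hp0.le
  have hnR : (0:ℝ) < (n : ℝ) := by exact_mod_cast hn
  refine ⟨(n : ℝ) ^ (1 / p) / 2 ^ ((1:ℝ) / r), (n : ℝ) ^ (1 / p),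
    div_pos (Real.rpow_pos_of_pos hnR _) (Real.rpow_pos_of_pos two_pos _),
    Real.rpow_pos_of_pos hnR _, ?_⟩
  intro f _hf
  have hbm : Measurable b := hb.1
  have hG1 : ZLK_G b r 1 ≠ ∞ := by
    intro h
    apply hbC.2
    have he : eLqR (fun t => t ^ (-(1 / r)) * b t) r (Ioi 1) = ZLK_G b r 1 ^ (1 / r) := rfl
    rw [he, h, ENNReal.top_rpow_of_pos (div_pos one_pos hr0)]
  have hGfin : ∀ x : ℝ, 0 < x → ZLK_G b r x ≠ ∞ := fun x hx => ZLK_G_ne_top hb hr0 hG1 hx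
  have hroot : ∀ t : ℝ, 0 < t → 0 < t ^ ((n : ℝ)⁻¹) := fun t ht => Real.rpow_pos_of_pos ht _
  have hrearrm : Measurable (rearr f) := (ZLK_rearr_antitone f).measurable
  have hψm : Measurable (fun s : ℝ => rearr f s ^ p) := hrearrm.pow_const p
  have hGm : Measurable (ZLK_G b r) := ZLK_measurable_G b r
  have hrootm : Measurable (fun t : ℝ => t ^ ((n : ℝ)⁻¹)) := by fun_prop
  have hφm : Measurable (fun t : ℝ => ENNReal.ofReal t⁻¹ *
      (ZLK_G b r (t ^ ((n : ℝ)⁻¹)) ^ ((p - r) / r) *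
        ENNReal.ofReal (b (t ^ ((n : ℝ)⁻¹)) ^ r))) := by fun_prop
  -- identification of the Z-norm
  have hZ : Znorm p p n (bbarF b r p) f =
      (∫⁻ t in Ioi (0:ℝ), (ENNReal.ofReal t⁻¹ *
        (ZLK_G b r (t ^ ((n : ℝ)⁻¹)) ^ ((p - r) / r) *
          ENNReal.ofReal (b (t ^ ((n : ℝ)⁻¹)) ^ r))) *
        ∫⁻ s in Ioo 0 t, rearr f s ^ p) ^ (1 / p) := by
    have hid : Znorm p p n (bbarF b r p) f =
        (∫⁻ t in Ioi (0:ℝ), (ENNReal.ofReal (t ^ (-(1 / p)) * bbarF b r p (t ^ ((n : ℝ)⁻¹))) *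
          (∫⁻ s in Ioo 0 t, rearr f s ^ p) ^ (1 / p)) ^ p) ^ (1 / p) := rfl
    rw [hid]
    congr 1
    refine setLIntegral_congr_fun measurableSet_Ioi (fun t ht => ?_)
    have ht0 : (0:ℝ) < t := ht
    rw [ENNReal.mul_rpow_of_nonneg _ _ hp0.le, ← ENNReal.rpow_mul,
      one_div_mul_cancel hpne, ENNReal.rpow_one,
      ZLK_Abar_pow hp0 hr0 hrp ht0 (hb.2.1 _ (hroot t ht0)).le (hGfin _ (hroot t ht0))]
  -- identification of the LK-norm
  have hLK : LKnorm p p (btildeF b r p p n) f =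
      (∫⁻ t in Ioi (0:ℝ), ZLK_G b r (t ^ ((n : ℝ)⁻¹)) ^ (p / r) * rearr f t ^ p) ^ (1 / p) := by
    have hid : LKnorm p p (btildeF b r p p n) f =
        (∫⁻ t in Ioi (0:ℝ), (ENNReal.ofReal (t ^ (1 / p - 1 / p) * btildeF b r p p n t) *
          rearr f t) ^ p) ^ (1 / p) := rfl
    rw [hid]
    congr 1
    refine setLIntegral_congr_fun measurableSet_Ioi (fun t ht => ?_)
    have ht0 : (0:ℝ) < t := ht
    rw [ZLK_btilde_pow hp0 hr0 (hGfin _ (hroot t ht0)) (rearr f t)]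
  -- Tonelli
  have hton : (∫⁻ t in Ioi (0:ℝ), (ENNReal.ofReal t⁻¹ *
        (ZLK_G b r (t ^ ((n : ℝ)⁻¹)) ^ ((p - r) / r) *
          ENNReal.ofReal (b (t ^ ((n : ℝ)⁻¹)) ^ r))) *
        ∫⁻ s in Ioo 0 t, rearr f s ^ p) =
      ∫⁻ s in Ioi (0:ℝ), rearr f s ^ p * ∫⁻ t in Ioi s, (ENNReal.ofReal t⁻¹ *
        (ZLK_G b r (t ^ ((n : ℝ)⁻¹)) ^ ((p - r) / r) *
          ENNReal.ofReal (b (t ^ ((n : ℝ)⁻¹)) ^ r))) :=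
    ZLK_tonelli _ _ hφm hψm
  -- two-sided bound for the tail integral
  have hΦ : ∀ s : ℝ, s ∈ Ioi (0:ℝ) →
      (n : ℝ≥0∞) * ((ZLK_G b r (s ^ ((n : ℝ)⁻¹)) / 2) ^ (p / r)) ≤
        (∫⁻ t in Ioi s, ENNReal.ofReal t⁻¹ *
          (ZLK_G b r (t ^ ((n : ℝ)⁻¹)) ^ ((p - r) / r) *
            ENNReal.ofReal (b (t ^ ((n : ℝ)⁻¹)) ^ r))) ∧
        (∫⁻ t in Ioi s, ENNReal.ofReal t⁻¹ *
          (ZLK_G b r (t ^ ((n : ℝ)⁻¹)) ^ ((p - r) / r) *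
            ENNReal.ofReal (b (t ^ ((n : ℝ)⁻¹)) ^ r))) ≤
          (n : ℝ≥0∞) * (ZLK_G b r (s ^ ((n : ℝ)⁻¹)) ^ (p / r)) := by
    intro s hs
    have hs0 : (0:ℝ) < s := hs
    have hy : 0 < s ^ ((n : ℝ)⁻¹) := hroot s hs0
    have hIoi : Ioi s = Ioi ((s ^ ((n : ℝ)⁻¹)) ^ n) := by
      rw [Real.rpow_inv_natCast_pow hs0.le hn.ne']
    have hsub : (∫⁻ t in Ioi s, ENNReal.ofReal t⁻¹ *
        (ZLK_G b r (t ^ ((n : ℝ)⁻¹)) ^ ((p - r) / r) *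
          ENNReal.ofReal (b (t ^ ((n : ℝ)⁻¹)) ^ r))) =
        (n : ℝ≥0∞) * ∫⁻ u in Ioi (s ^ ((n : ℝ)⁻¹)),
          ZLK_G b r u ^ ((p - r) / r) * ZLK_W b r u := by
      rw [hIoi,
        ZLK_subst hn (fun u => ZLK_G b r u ^ ((p - r) / r) * ENNReal.ofReal (b u ^ r)) hy]
      congr 1
      refine setLIntegral_congr_fun measurableSet_Ioi (fun u hu => ?_)
      have hu0 : 0 < u := hy.trans hu
      rw [ZLK_W_eq hr0 hu0 (hb.2.1 u hu0)]
      ring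
    have hα : (0:ℝ) ≤ (p - r) / r := div_nonneg (by linarith) hr0.le
    have hα1 : (p - r) / r + 1 = p / r := by field_simp; ring
    constructor
    · rw [hsub]
      apply mul_le_mul_right
      have hk := ZLK_key_lower hbm r hα (hGfin _ hy)
      rwa [hα1] at hk
    · rw [hsub]
      apply mul_le_mul_right
      have hk := ZLK_key_upper hbm r (x := s ^ ((n : ℝ)⁻¹)) hα
      rwa [hα1] at hk
  have hmeasR : Measurable (fun s : ℝ =>
      ZLK_G b r (s ^ ((n : ℝ)⁻¹)) ^ (p / r) * rearr f s ^ p) := by fun_prop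
  -- upper integral bound
  have hup : (∫⁻ s in Ioi (0:ℝ), rearr f s ^ p * ∫⁻ t in Ioi s, ENNReal.ofReal t⁻¹ *
      (ZLK_G b r (t ^ ((n : ℝ)⁻¹)) ^ ((p - r) / r) *
        ENNReal.ofReal (b (t ^ ((n : ℝ)⁻¹)) ^ r))) ≤
      (n : ℝ≥0∞) * ∫⁻ t in Ioi (0:ℝ),
        ZLK_G b r (t ^ ((n : ℝ)⁻¹)) ^ (p / r) * rearr f t ^ p := by
    rw [← lintegral_const_mul' _ _ (by simp : (n : ℝ≥0∞) ≠ ⊤)]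
    refine setLIntegral_mono (measurable_const.mul hmeasR) (fun s hs => ?_)
    calc rearr f s ^ p * (∫⁻ t in Ioi s, ENNReal.ofReal t⁻¹ *
          (ZLK_G b r (t ^ ((n : ℝ)⁻¹)) ^ ((p - r) / r) *
            ENNReal.ofReal (b (t ^ ((n : ℝ)⁻¹)) ^ r)))
        ≤ rearr f s ^ p * ((n : ℝ≥0∞) * (ZLK_G b r (s ^ ((n : ℝ)⁻¹)) ^ (p / r))) :=
          mul_le_mul_right (hΦ s hs).2 _
      _ = (n : ℝ≥0∞) * (ZLK_G b r (s ^ ((n : ℝ)⁻¹)) ^ (p / r) * rearr f s ^ p) := by ring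
  have hLmeas : Measurable (fun s : ℝ => ∫⁻ t in Ioi s, ENNReal.ofReal t⁻¹ *
      (ZLK_G b r (t ^ ((n : ℝ)⁻¹)) ^ ((p - r) / r) *
        ENNReal.ofReal (b (t ^ ((n : ℝ)⁻¹)) ^ r))) :=
    Antitone.measurable (fun a c hac => lintegral_mono_set (Ioi_subset_Ioi hac))
  -- lower integral bound
  have h2ne : ((2:ℝ≥0∞) ^ (p / r)) ≠ 0 :=
    (ENNReal.rpow_pos (by norm_num) (by norm_num)).ne'
  have hlo : ((n : ℝ≥0∞) / 2 ^ (p / r)) *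
      (∫⁻ t in Ioi (0:ℝ), ZLK_G b r (t ^ ((n : ℝ)⁻¹)) ^ (p / r) * rearr f t ^ p) ≤
      ∫⁻ s in Ioi (0:ℝ), rearr f s ^ p * ∫⁻ t in Ioi s, ENNReal.ofReal t⁻¹ *
        (ZLK_G b r (t ^ ((n : ℝ)⁻¹)) ^ ((p - r) / r) *
          ENNReal.ofReal (b (t ^ ((n : ℝ)⁻¹)) ^ r)) := by
    have hclo : ((n : ℝ≥0∞) / 2 ^ (p / r)) ≠ ⊤ :=
      (ENNReal.div_lt_top (by simp) h2ne).ne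
    rw [← lintegral_const_mul' _ _ hclo]
    refine setLIntegral_mono (hψm.mul hLmeas) (fun s hs => ?_)
    calc ((n : ℝ≥0∞) / 2 ^ (p / r)) *
          (ZLK_G b r (s ^ ((n : ℝ)⁻¹)) ^ (p / r) * rearr f s ^ p)
        = rearr f s ^ p *
            ((n : ℝ≥0∞) * ((ZLK_G b r (s ^ ((n : ℝ)⁻¹)) / 2) ^ (p / r))) := by
          rw [ENNReal.div_rpow_of_nonneg _ _ (div_nonneg hp0.le hr0.le)]
          simp only [div_eq_mul_inv]
          ring
      _ ≤ rearr f s ^ p * (∫⁻ t in Ioi s, ENNReal.ofReal t⁻¹ *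
            (ZLK_G b r (t ^ ((n : ℝ)⁻¹)) ^ ((p - r) / r) *
              ENNReal.ofReal (b (t ^ ((n : ℝ)⁻¹)) ^ r))) :=
          mul_le_mul_right (hΦ s hs).1 _
  -- constants
  have hofC : ENNReal.ofReal ((n : ℝ) ^ (1 / p)) = (n : ℝ≥0∞) ^ (1 / p) := by
    rw [← ENNReal.ofReal_rpow_of_pos hnR, ENNReal.ofReal_natCast]
  have hofc : ENNReal.ofReal ((n : ℝ) ^ (1 / p) / 2 ^ ((1:ℝ) / r)) =
      ((n : ℝ≥0∞) / 2 ^ (p / r)) ^ (1 / p) := by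
    rw [ENNReal.ofReal_div_of_pos (Real.rpow_pos_of_pos two_pos _),
      ENNReal.div_rpow_of_nonneg _ _ h1p, hofC]
    congr 1
    rw [← ENNReal.rpow_mul, (show p / r * (1 / p) = (1:ℝ) / r by field_simp; try ring),
      (show ((2:ℝ≥0∞)) = ENNReal.ofReal (2:ℝ) from (ENNReal.ofReal_ofNat 2).symm),
      ENNReal.ofReal_rpow_of_pos two_pos]
  constructor
  · rw [hLK, hZ, hton, hofc]
    exact le_trans (le_of_eq (ENNReal.mul_rpow_of_nonneg _ _ h1p).symm)
      (ENNReal.rpow_le_rpow hlo h1p)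
  · rw [hLK, hZ, hton, hofC]
    exact le_trans (ENNReal.rpow_le_rpow hup h1p)
      (le_of_eq (ENNReal.mul_rpow_of_nonneg _ _ h1p))

end
end

section
/- Let n ∈ ℕ, 1 ≤ p < ∞, 1 ≤ r ≤ q < ∞, and let b ∈ SV(0,∞) satisfy ‖t^{-1/r} b(t)‖_{r;(1,∞)} < ∞ (so that b_r(t) < ∞ for all t > 0). Set b̄ = b̄_{(r,q)}. Then there exists a constant C > 0 such that for every f ∈ L_p(ℝ^n): ‖f‖_{L_p(ℝ^n)} + ‖t^{-1/q} b̄(t) ω₁(f,t)_p‖_{q;(0,∞)} ≤ C ( ‖f‖_{L_p(ℝ^n)} + ‖t^{-1/r} b(t) ω₁(f,t)_p‖_{r;(0,∞)} ), i.e. B^{0,b}_{p,r}(ℝ^n) is continuously embedded into B^{0,b̄}_{p,q}(ℝ^n). -/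
open MeasureTheory Set Filter
open scoped ENNReal NNReal Topology

noncomputable section

private lemma setLIntegral_mono_on' {f g : ℝ → ℝ≥0∞} {s : Set ℝ} (hs : MeasurableSet s)
    (h : ∀ x ∈ s, f x ≤ g x) : ∫⁻ x in s, f x ≤ ∫⁻ x in s, g x := by
  rw [← lintegral_indicator hs f, ← lintegral_indicator hs g]
  refine lintegral_mono fun x => ?_
  by_cases hx : x ∈ s
  · simpa [Set.indicator_of_mem hx] using h x hx
  · simp [Set.indicator_of_notMem hx]

private lemma ennreal_rpow_cancel {x y : ℝ≥0∞} {r : ℝ} (hr : 0 < r) (h : x ^ r ≤ y ^ r) :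
    x ≤ y := by
  have h2 := ENNReal.rpow_le_rpow h (le_of_lt (one_div_pos.mpr hr))
  rwa [← ENNReal.rpow_mul, ← ENNReal.rpow_mul, mul_one_div, div_self hr.ne',
    ENNReal.rpow_one, ENNReal.rpow_one] at h2

private lemma key_alg (X Y Z W : ℝ≥0∞) {r q : ℝ} (hr0 : 0 < r) (hrq : r ≤ q) :
    (X ^ (-(1 / q)) * (Y ^ (1 - r / q) * Z ^ (r / q)) * W) ^ q
      = (Y * W) ^ (q - r) * (X ^ (-(1 / r)) * Z * W) ^ r := by
  have hq0 : 0 < q := hr0.trans_le hrq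
  have e1 : -(1 / q) * q = -1 := by field_simp
  have e2 : (1 - r / q) * q = q - r := by field_simp
  have e3 : r / q * q = r := by field_simp
  have e4 : -(1 / r) * r = -1 := by field_simp
  have e5 : W ^ q = W ^ (q - r) * W ^ r := by
    rw [← ENNReal.rpow_add_of_nonneg (x := W) _ _ (sub_nonneg.mpr hrq) hr0.le, sub_add_cancel]
  rw [ENNReal.mul_rpow_of_nonneg _ _ hq0.le, ENNReal.mul_rpow_of_nonneg _ _ hq0.le,
    ENNReal.mul_rpow_of_nonneg _ _ hq0.le,
    ENNReal.mul_rpow_of_nonneg _ _ (sub_nonneg.mpr hrq),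
    ENNReal.mul_rpow_of_nonneg _ _ hr0.le, ENNReal.mul_rpow_of_nonneg _ _ hr0.le,
    ← ENNReal.rpow_mul X, ← ENNReal.rpow_mul Y, ← ENNReal.rpow_mul Z,
    ← ENNReal.rpow_mul X, e1, e2, e3, e4, e5]
  ring

/-- `B^{0,b}_{p,r}(ℝⁿ) ↪ B^{0,b̄_{(r,q)}}_{p,q}(ℝⁿ)` for `1 ≤ r ≤ q < ∞`. -/
theorem besov_embed_besov (n : ℕ) (hn : 0 < n) (p r q : ℝ)
    (hp1 : 1 ≤ p) (hr : 1 ≤ r) (hrq : r ≤ q)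
    (b : ℝ → ℝ) (hb : SlowlyVarying b)
    (hbr : eLqR (fun t => t ^ (-(1 / r)) * b t) r (Ioi 1) ≠ ∞) :
    ∃ C : ℝ, 0 < C ∧ ∀ f : EuclideanSpace ℝ (Fin n) → ℝ,
      MemLp f (ENNReal.ofReal p) volume →
      besovNorm p q (bbarF b r q) f ≤ ENNReal.ofReal C * besovNorm p r b f := by
  have hr0 : (0:ℝ) < r := lt_of_lt_of_le one_pos hr
  have hq0 : (0:ℝ) < q := lt_of_lt_of_le hr0 hrq
  have hqr : (0:ℝ) ≤ q - r := sub_nonneg.mpr hrq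
  have hbpos : ∀ t ∈ Ioi (0:ℝ), 0 < b t := hb.2.1
  refine ⟨1, one_pos, fun f _ => ?_⟩
  rw [ENNReal.ofReal_one, one_mul]
  unfold besovNorm
  refine add_le_add le_rfl ?_
  set ω : ℝ → ℝ≥0∞ := smoothMod p f with hω
  set N : ℝ≥0∞ := eLq (fun t => ENNReal.ofReal (t ^ (-(1 / r)) * b t) * ω t) r (Ioi 0)
    with hNdef
  have hωmono : ∀ ⦃s t : ℝ⦄, s ≤ t → ω s ≤ ω t := by
    intro s t hst
    rw [hω]
    unfold smoothMod
    exact iSup_mono fun h => iSup_le fun hh => le_iSup_of_le (hh.trans hst) le_rfl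
  have hNr : N ^ r = ∫⁻ t in Ioi 0, (ENNReal.ofReal (t ^ (-(1 / r)) * b t) * ω t) ^ r := by
    rw [hNdef]
    unfold eLq
    rw [← ENNReal.rpow_mul, one_div_mul_cancel hr0.ne', ENNReal.rpow_one]
  by_cases hN : N = ⊤
  · exact hN ▸ le_top
  -- the modulus of smoothness is finite on (0,∞)
  have hωfin : ∀ t : ℝ, 0 < t → ω t ≠ ⊤ := by
    intro t ht hωt
    refine hN (top_le_iff.mp (ennreal_rpow_cancel hr0 ?_))
    rw [ENNReal.top_rpow_of_pos hr0, hNr]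
    have h1 : ∀ τ ∈ Ioi t, (⊤:ℝ≥0∞) ≤ (ENNReal.ofReal (τ ^ (-(1 / r)) * b τ) * ω τ) ^ r := by
      intro τ hτ
      have hτ0 : (0:ℝ) < τ := ht.trans hτ
      have hωτ : ω τ = ⊤ := top_le_iff.mp (hωt ▸ hωmono (le_of_lt hτ))
      have hc : (0:ℝ) < τ ^ (-(1 / r)) * b τ :=
        mul_pos (Real.rpow_pos_of_pos hτ0 _) (hbpos τ hτ0)
      rw [hωτ, ENNReal.mul_top (ENNReal.ofReal_pos.mpr hc).ne',
        ENNReal.top_rpow_of_pos hr0]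
    calc (⊤:ℝ≥0∞) = ∫⁻ _ in Ioi t, (⊤:ℝ≥0∞) := by
          rw [setLIntegral_const, Real.volume_Ioi]; simp
      _ ≤ ∫⁻ τ in Ioi t, (ENNReal.ofReal (τ ^ (-(1 / r)) * b τ) * ω τ) ^ r :=
          setLIntegral_mono_on' measurableSet_Ioi h1
      _ ≤ ∫⁻ τ in Ioi 0, (ENNReal.ofReal (τ ^ (-(1 / r)) * b τ) * ω τ) ^ r :=
          lintegral_mono_set (Ioi_subset_Ioi ht.le)
  -- the key pointwise estimate `b_r(t) ω(t) ≤ N`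
  have hkey : ∀ t : ℝ, 0 < t → brF b r t * ω t ≤ N := by
    intro t ht
    refine ennreal_rpow_cancel hr0 ?_
    have hbrpow : brF b r t ^ r
        = ∫⁻ τ in Ioi t, ENNReal.ofReal (τ ^ (-(1 / r)) * b τ) ^ r := by
      unfold brF eLqR eLq
      rw [← ENNReal.rpow_mul, one_div_mul_cancel hr0.ne', ENNReal.rpow_one]
      refine setLIntegral_congr_fun measurableSet_Ioi (
        fun τ hτ => ?_)
      show ENNReal.ofReal |τ ^ (-(1 / r)) * b τ| ^ r = ENNReal.ofReal (τ ^ (-(1 / r)) * b τ) ^ r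
      rw [abs_of_pos (mul_pos (Real.rpow_pos_of_pos (ht.trans hτ) _)
        (hbpos τ (ht.trans hτ)))]
    calc (brF b r t * ω t) ^ r
        = (∫⁻ τ in Ioi t, ENNReal.ofReal (τ ^ (-(1 / r)) * b τ) ^ r) * ω t ^ r := by
          rw [ENNReal.mul_rpow_of_nonneg _ _ hr0.le, hbrpow]
      _ = ∫⁻ τ in Ioi t, ENNReal.ofReal (τ ^ (-(1 / r)) * b τ) ^ r * ω t ^ r :=
          (lintegral_mul_const' _ _ (ENNReal.rpow_ne_top_of_nonneg hr0.le (hωfin t ht))).symm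
      _ ≤ ∫⁻ τ in Ioi t, (ENNReal.ofReal (τ ^ (-(1 / r)) * b τ) * ω τ) ^ r := by
          refine setLIntegral_mono_on' measurableSet_Ioi fun τ hτ => ?_
          rw [ENNReal.mul_rpow_of_nonneg _ _ hr0.le]
          exact mul_le_mul_right (ENNReal.rpow_le_rpow (hωmono (le_of_lt hτ)) hr0.le) _
      _ ≤ ∫⁻ τ in Ioi 0, (ENNReal.ofReal (τ ^ (-(1 / r)) * b τ) * ω τ) ^ r :=
          lintegral_mono_set (Ioi_subset_Ioi ht.le)
      _ = N ^ r := hNr.symm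
  -- main pointwise estimate
  have hmain : ∀ t ∈ Ioi (0:ℝ),
      (ENNReal.ofReal (t ^ (-(1 / q)) * bbarF b r q t) * ω t) ^ q
        ≤ N ^ (q - r) * (ENNReal.ofReal (t ^ (-(1 / r)) * b t) * ω t) ^ r := by
    intro t ht
    by_cases hω0 : ω t = 0
    · rw [hω0, mul_zero, ENNReal.zero_rpow_of_pos hq0]
      exact zero_le
    have hbf : brF b r t ≠ ⊤ := by
      intro htop
      refine hN (top_le_iff.mp ?_)
      have h := hkey t ht
      rwa [htop, ENNReal.top_mul hω0] at h
    have hbt : 0 < b t := hbpos t ht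
    have hA0 : (0:ℝ) ≤ (brF b r t).toReal := ENNReal.toReal_nonneg
    have h1rq : (0:ℝ) ≤ 1 - r / q := by
      rw [sub_nonneg]
      exact (div_le_one hq0).mpr hrq
    have hsplit : ENNReal.ofReal (t ^ (-(1 / q)) * bbarF b r q t)
        = ENNReal.ofReal t ^ (-(1 / q))
          * (brF b r t ^ (1 - r / q) * ENNReal.ofReal (b t) ^ (r / q)) := by
      unfold bbarF
      rw [ENNReal.ofReal_mul (Real.rpow_pos_of_pos ht _).le,
        ENNReal.ofReal_mul (Real.rpow_nonneg hA0 _),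
        ← ENNReal.ofReal_rpow_of_pos ht,
        ← ENNReal.ofReal_rpow_of_nonneg hA0 h1rq,
        ← ENNReal.ofReal_rpow_of_nonneg hbt.le (by positivity : (0:ℝ) ≤ r / q),
        ENNReal.ofReal_toReal hbf]
    have hsplit2 : ENNReal.ofReal (t ^ (-(1 / r)) * b t)
        = ENNReal.ofReal t ^ (-(1 / r)) * ENNReal.ofReal (b t) := by
      rw [ENNReal.ofReal_mul (Real.rpow_pos_of_pos ht _).le,
        ← ENNReal.ofReal_rpow_of_pos ht]
    calc (ENNReal.ofReal (t ^ (-(1 / q)) * bbarF b r q t) * ω t) ^ q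
        = (brF b r t * ω t) ^ (q - r)
            * (ENNReal.ofReal t ^ (-(1 / r)) * ENNReal.ofReal (b t) * ω t) ^ r := by
          rw [hsplit]; exact key_alg _ _ _ _ hr0 hrq
      _ = (brF b r t * ω t) ^ (q - r)
            * (ENNReal.ofReal (t ^ (-(1 / r)) * b t) * ω t) ^ r := by rw [hsplit2]
      _ ≤ N ^ (q - r) * (ENNReal.ofReal (t ^ (-(1 / r)) * b t) * ω t) ^ r :=
          mul_le_mul_left (ENNReal.rpow_le_rpow (hkey t ht) hqr) _
  -- integrate
  have hint : (∫⁻ t in Ioi 0, (ENNReal.ofReal (t ^ (-(1 / q)) * bbarF b r q t) * ω t) ^ q)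
      ≤ N ^ q := by
    calc ∫⁻ t in Ioi 0, (ENNReal.ofReal (t ^ (-(1 / q)) * bbarF b r q t) * ω t) ^ q
        ≤ ∫⁻ t in Ioi 0,
            N ^ (q - r) * (ENNReal.ofReal (t ^ (-(1 / r)) * b t) * ω t) ^ r :=
          setLIntegral_mono_on' measurableSet_Ioi hmain
      _ = N ^ (q - r) * ∫⁻ t in Ioi 0, (ENNReal.ofReal (t ^ (-(1 / r)) * b t) * ω t) ^ r :=
          lintegral_const_mul' _ _ (ENNReal.rpow_ne_top_of_nonneg hqr hN)
      _ = N ^ (q - r) * N ^ r := by rw [hNr]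
      _ = N ^ q := by
          rw [← ENNReal.rpow_add_of_nonneg (x := N) _ _ hqr hr0.le, sub_add_cancel]
  unfold eLq
  calc (∫⁻ t in Ioi 0, (ENNReal.ofReal (t ^ (-(1 / q)) * bbarF b r q t) * ω t) ^ q) ^ (1 / q)
      ≤ (N ^ q) ^ (1 / q) := ENNReal.rpow_le_rpow hint (by positivity)
    _ = N := by
        rw [← ENNReal.rpow_mul, mul_one_div, div_self hq0.ne', ENNReal.rpow_one]

end
end

section
/- Let θ ∈ [0,1), 0 < r, q < ∞, and let a, b ∈ SV(0,∞) satisfy ∫_1^∞ y^{-1} (b(y)/a(y))^r dy < ∞. Define d(x) := b(x) · ( [∫_x^∞ y^{-1} (b(y)/a(y))^r dy] / (b(x)/a(x))^r )^{1/max{q,r}} for x ∈ (0,∞). Then there exists a constant C > 0 such that for every measurable function k : (0,∞) → [0,∞] with t ↦ k(t)/t non-increasing on (0,∞): ‖ t^{-θ-1/r} d(t) k(t) ‖_{r;(0,∞)} ≤ C ‖ t^{-1/r} (b(t)/a(t)) ‖ τ^{-θ-1/q} a(τ) k(τ) ‖_{q;(0,t)} ‖_{r;(0,∞)}. -/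
open MeasureTheory Set Filter
open scoped ENNReal NNReal Topology

noncomputable section

/-- CDF bound: the `withDensity` measure of the sublevel set of the CDF is at most the level. -/
lemma cdf_bound {g : ℝ → ℝ≥0∞} (s : ℝ) (X : ℝ≥0∞) :
    (volume.withDensity g) {t | t ∈ Ioo 0 s ∧ (volume.withDensity g) (Ioo 0 t) < X} ≤ X := by
  set ν := volume.withDensity g with hν
  set E := {t | t ∈ Ioo 0 s ∧ ν (Ioo 0 t) < X} with hE
  rcases eq_empty_or_nonempty E with h | hne
  · simp [h]
  have hbdd : BddAbove E := BddAbove.mono (fun t ht => ht.1) (bddAbove_Ioo)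
  set u := sSup E with hu
  have hupos : 0 < u := by
    obtain ⟨t, ht⟩ := hne
    exact lt_of_lt_of_le ht.1.1 (le_csSup hbdd ht)
  have hsub : E ⊆ Ioo 0 u ∪ {u} := by
    intro t ht
    rcases lt_or_eq_of_le (le_csSup hbdd ht) with h | h
    · exact Or.inl ⟨ht.1.1, h⟩
    · exact Or.inr h
  have hsingle : ν {u} = 0 := by
    rw [hν, MeasureTheory.withDensity_apply _ (measurableSet_singleton u)]
    simp [MeasureTheory.Measure.restrict_singleton]
  have hylt : ∀ y, y < u → ν (Ioo 0 y) ≤ X := by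
    intro y hy
    obtain ⟨t, htE, hyt⟩ := exists_lt_of_lt_csSup hne hy
    exact le_trans (measure_mono (Ioo_subset_Ioo le_rfl hyt.le)) htE.2.le
  have hIoo : ν (Ioo 0 u) ≤ X := by
    have hunion : Ioo 0 u = ⋃ n : ℕ, Ioo 0 (u - u / (n + 1)) := by
      ext z
      simp only [mem_Ioo, mem_iUnion]
      constructor
      · rintro ⟨hz0, hzu⟩
        have hpos : 0 < (u - z) / u := div_pos (by linarith) hupos
        obtain ⟨n, hn⟩ := exists_nat_one_div_lt hpos
        refine ⟨n, hz0, ?_⟩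
        have h1 : 1 / ((n:ℝ) + 1) * u < (u - z) / u * u :=
          mul_lt_mul_of_pos_right hn hupos
        rw [div_mul_cancel₀ _ (ne_of_gt hupos)] at h1
        have h2 : u / ((n:ℝ) + 1) = 1 / ((n:ℝ) + 1) * u := by ring
        linarith [h1, h2.ge, h2.le]
      · rintro ⟨n, hz0, hzn⟩
        refine ⟨hz0, lt_of_lt_of_le hzn (by
          have : 0 ≤ u / (n + 1) := by positivity
          linarith)⟩
    have hdir : Directed (· ⊆ ·) (fun n : ℕ => Ioo (0:ℝ) (u - u / (n + 1))) := by
      refine (directed_of_isDirected_le ?_)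
      intro i j hij
      apply Ioo_subset_Ioo le_rfl
      have : u / ((j:ℝ) + 1) ≤ u / ((i:ℝ) + 1) := by
        apply div_le_div_of_nonneg_left hupos.le (by positivity)
        have := (Nat.cast_le (α := ℝ)).2 hij; linarith
      linarith
    rw [hunion, hdir.measure_iUnion]
    refine iSup_le fun n => hylt _ ?_
    have : 0 < u / ((n:ℝ) + 1) := by positivity
    linarith
  calc ν E ≤ ν (Ioo 0 u ∪ {u}) := measure_mono hsub
    _ ≤ ν (Ioo 0 u) + ν {u} := measure_union_le _ _
    _ ≤ X := by rw [hsingle, add_zero]; exact hIoo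

/-- tail integral of `(1-m) x^(m-2)` over `(c₀,∞)`. -/
lemma Wcalc {m : ℝ} (hm0 : 0 < m) (hm1 : m < 1) {c₀ : ℝ} (hc : 0 < c₀) :
    ∫⁻ x in Ioi c₀, ENNReal.ofReal ((1 - m) * x ^ (m - 2)) = ENNReal.ofReal (c₀ ^ (m - 1)) := by
  have hint : IntegrableOn (fun x : ℝ => (1 - m) * x ^ (m - 2)) (Ioi c₀) :=
    (integrableOn_Ioi_rpow_of_lt (by linarith) hc).const_mul _
  rw [← MeasureTheory.ofReal_integral_eq_lintegral_ofReal hint ?pos]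
  case pos =>
    filter_upwards [ae_restrict_mem measurableSet_Ioi] with x hx
    have : (0:ℝ) < x := lt_trans hc hx
    exact mul_nonneg (by linarith) (Real.rpow_nonneg this.le _)
  congr 1
  rw [MeasureTheory.integral_const_mul, integral_Ioi_rpow_of_lt (by linarith) hc]
  have : m - 2 + 1 = m - 1 := by ring
  rw [this]
  have hne : m - 1 ≠ 0 := by linarith
  field_simp
  ring

/-- integral of `(1-m) x^(m-2) * x` over `(0,y₀]`. -/
lemma Wcalc0 {m : ℝ} (hm0 : 0 < m) (hm1 : m < 1) {y₀ : ℝ} (hy : 0 < y₀) :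
    ∫⁻ x in Ioc (0:ℝ) y₀, ENNReal.ofReal ((1 - m) * x ^ (m - 2)) * ENNReal.ofReal x
      = ENNReal.ofReal ((1 - m) / m * y₀ ^ m) := by
  have hcongr : ∫⁻ x in Ioc (0:ℝ) y₀, ENNReal.ofReal ((1 - m) * x ^ (m - 2)) * ENNReal.ofReal x
      = ∫⁻ x in Ioc (0:ℝ) y₀, ENNReal.ofReal ((1 - m) * x ^ (m - 1)) := by
    refine setLIntegral_congr_fun measurableSet_Ioc (?_)
    intro x hx
    dsimp only
    rw [← ENNReal.ofReal_mul (by nlinarith [Real.rpow_nonneg hx.1.le (m-2)])]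
    congr 1
    rw [mul_assoc]
    congr 1
    rw [← Real.rpow_add_one (ne_of_gt hx.1)]
    congr 1; ring
  rw [hcongr]
  have hii : IntervalIntegrable (fun x : ℝ => x ^ (m - 1)) volume 0 y₀ :=
    intervalIntegral.intervalIntegrable_rpow' (by linarith)
  have hint : IntegrableOn (fun x : ℝ => (1 - m) * x ^ (m - 1)) (Ioc 0 y₀) := by
    have := (intervalIntegrable_iff_integrableOn_Ioc_of_le hy.le).1 hii
    exact this.const_mul _
  rw [← MeasureTheory.ofReal_integral_eq_lintegral_ofReal hint ?pos]
  case pos =>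
    filter_upwards [ae_restrict_mem measurableSet_Ioc] with x hx
    have : (0:ℝ) < x := hx.1
    exact mul_nonneg (by linarith) (Real.rpow_nonneg this.le _)
  congr 1
  rw [MeasureTheory.integral_const_mul]
  have : ∫ x in Ioc (0:ℝ) y₀, x ^ (m - 1) = ∫ x in (0:ℝ)..y₀, x ^ (m - 1) :=
    (intervalIntegral.integral_of_le hy.le).symm
  rw [this, integral_rpow (Or.inl (by linarith))]
  have hm1' : m - 1 + 1 = m := by ring
  rw [hm1', Real.zero_rpow (ne_of_gt hm0)]
  have hne : m ≠ 0 := ne_of_gt hm0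
  field_simp
  ring

/-- The key "chain rule" estimate `∫_0^s Φ^{m-1} dΦ ≤ Φ(s)^m / m` for `0 < m < 1`. -/
lemma dagger {g : ℝ → ℝ≥0∞} (hg : Measurable g) {m : ℝ} (hm0 : 0 < m) (hm1 : m < 1) (s : ℝ)
    (hfin : (∫⁻ τ in Ioo 0 s, g τ) ≠ ∞) :
    ∫⁻ t in Ioo 0 s, (∫⁻ τ in Ioo 0 t, g τ) ^ (m - 1) * g t ≤
      ENNReal.ofReal (1 / m) * (∫⁻ τ in Ioo 0 s, g τ) ^ m := by
  set ν := volume.withDensity g with hνdef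
  have hνapp : ∀ t : ℝ, ν (Ioo 0 t) = ∫⁻ τ in Ioo 0 t, g τ := fun t =>
    MeasureTheory.withDensity_apply _ measurableSet_Ioo
  set Φ : ℝ → ℝ≥0∞ := fun t => ν (Ioo 0 t) with hΦdef
  have hΦmono : Monotone Φ := fun x y hxy => measure_mono (Ioo_subset_Ioo le_rfl hxy)
  have hΦmeas : Measurable Φ := hΦmono.measurable
  have hΦr : Measurable (fun t => Φ t ^ (m - 1)) := by fun_prop
  set Y := ∫⁻ τ in Ioo 0 s, g τ with hYdef
  have hYν : ν (Ioo 0 s) = Y := hνapp s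
  have hLHS : ∫⁻ t in Ioo 0 s, (∫⁻ τ in Ioo 0 t, g τ) ^ (m - 1) * g t
      = ∫⁻ t in Ioo 0 s, Φ t ^ (m - 1) ∂ν := by
    rw [hνdef, MeasureTheory.restrict_withDensity measurableSet_Ioo,
      lintegral_withDensity_eq_lintegral_mul _ hg hΦr]
    refine setLIntegral_congr_fun measurableSet_Ioo (fun t _ => ?_)
    simp only [Pi.mul_apply, hΦdef, hνapp]
    rw [mul_comm]
  rw [hLHS]
  rcases eq_or_ne Y 0 with hY0 | hY0
  · rw [setLIntegral_measure_zero _ _ (hYν.trans hY0)]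
    exact zero_le
  set y₀ := Y.toReal with hy₀def
  have hy₀pos : 0 < y₀ := ENNReal.toReal_pos hY0 hfin
  have hYeq : Y = ENNReal.ofReal y₀ := (ENNReal.ofReal_toReal hfin).symm
  -- split the domain according to vanishing of Φ
  set S₁ := {t | t ∈ Ioo 0 s ∧ Φ t ≠ 0} with hS₁def
  have hS₁meas : MeasurableSet S₁ := by
    have : S₁ = Ioo 0 s ∩ (Φ ⁻¹' {0})ᶜ := by
      ext t; simp [hS₁def, and_comm]
    rw [this]
    exact measurableSet_Ioo.inter (hΦmeas (measurableSet_singleton 0)).compl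
  have hcdf : ∀ X : ℝ≥0∞, ν {t | t ∈ Ioo 0 s ∧ Φ t < X} ≤ X := fun X => cdf_bound s X
  have hνS₀ : ν {t | t ∈ Ioo 0 s ∧ Φ t = 0} = 0 := by
    have h1 : ∀ ε : ℝ≥0, 0 < ε → ν {t | t ∈ Ioo 0 s ∧ Φ t = 0} ≤ (ε : ℝ≥0∞) := by
      intro ε hε
      refine le_trans (measure_mono ?_) (hcdf ε)
      rintro t ⟨ht1, ht2⟩
      exact ⟨ht1, by rw [ht2]; exact_mod_cast hε⟩
    have h2 : ν {t | t ∈ Ioo 0 s ∧ Φ t = 0} ≤ 0 :=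
      ENNReal.le_of_forall_pos_le_add (fun ε hε _ => by simpa using h1 ε hε)
    exact le_antisymm h2 zero_le
  have hdecomp : ∫⁻ t in Ioo 0 s, Φ t ^ (m - 1) ∂ν = ∫⁻ t in S₁, Φ t ^ (m - 1) ∂ν := by
    have hun : Ioo 0 s = {t | t ∈ Ioo 0 s ∧ Φ t = 0} ∪ S₁ := by
      ext t; by_cases h : Φ t = 0 <;> simp [hS₁def, h]
    rw [hun, lintegral_union hS₁meas (by
      rintro A hA hA' t ht
      have h1 := hA ht
      have h2 := hA' ht
      exact absurd h1.2 (by simpa using h2.2)),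
      setLIntegral_measure_zero _ _ hνS₀, zero_add]
  rw [hdecomp]
  -- the layer-cake representation
  set W : ℝ → ℝ≥0∞ := fun x => ENNReal.ofReal ((1 - m) * x ^ (m - 2)) with hWdef
  have hWmeas : Measurable W := by fun_prop
  set T : Set (ℝ × ℝ) := {q : ℝ × ℝ | Φ q.1 < ENNReal.ofReal q.2} with hTdef
  have hTmeas : MeasurableSet T :=
    measurableSet_lt (hΦmeas.comp measurable_fst)
      (ENNReal.measurable_ofReal.comp measurable_snd)
  set ψ : ℝ → ℝ → ℝ≥0∞ := fun t x => W x * T.indicator 1 (t, x) with hψdef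
  have hA : ∀ t ∈ S₁, Φ t ^ (m - 1) = ∫⁻ x in Ioi (0:ℝ), ψ t x := by
    intro t ht
    have hc0 : Φ t ≠ 0 := ht.2
    have hcfin : Φ t ≠ ∞ := by
      refine ne_top_of_le_ne_top hfin ?_
      rw [← hYν]
      exact measure_mono (Ioo_subset_Ioo le_rfl ht.1.2.le)
    set c₀ := (Φ t).toReal with hc₀def
    have hc₀pos : 0 < c₀ := ENNReal.toReal_pos hc0 hcfin
    have hceq : Φ t = ENNReal.ofReal c₀ := (ENNReal.ofReal_toReal hcfin).symm
    have hindic : ∀ x ∈ Ioi (0:ℝ), ψ t x = (Ioi c₀).indicator W x := by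
      intro x _
      by_cases hxc : Φ t < ENNReal.ofReal x
      · have hx' : x ∈ Ioi c₀ := by
          rw [mem_Ioi]
          exact (ENNReal.lt_ofReal_iff_toReal_lt hcfin).1 hxc
        simp [hψdef, hTdef, Set.indicator_of_mem, hx', hxc, Set.indicator_apply, mem_setOf_eq]
      · have hx' : x ∉ Ioi c₀ := by
          rw [mem_Ioi]
          intro hcx
          exact hxc ((ENNReal.lt_ofReal_iff_toReal_lt hcfin).2 hcx)
        simp [hψdef, hTdef, hx', hxc, Set.indicator_apply, mem_setOf_eq]
    rw [setLIntegral_congr_fun measurableSet_Ioi (hindic)]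
    rw [setLIntegral_indicator measurableSet_Ioi]
    rw [Set.inter_eq_left.2 (Ioi_subset_Ioi hc₀pos.le)]
    rw [hWdef, Wcalc hm0 hm1 hc₀pos, hceq, ENNReal.ofReal_rpow_of_pos hc₀pos]
  have hYfin' : ν S₁ < ∞ := by
    refine lt_of_le_of_lt (measure_mono fun t ht => ht.1) ?_
    rw [hYν]; exact lt_top_iff_ne_top.2 hfin
  haveI : IsFiniteMeasure (ν.restrict S₁) := by
    constructor
    rw [Measure.restrict_apply_univ]
    exact hYfin'
  have hswap : ∫⁻ t in S₁, (∫⁻ x in Ioi (0:ℝ), ψ t x) ∂ν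
      = ∫⁻ x in Ioi (0:ℝ), (∫⁻ t in S₁, ψ t x ∂ν) := by
    refine lintegral_lintegral_swap ?_
    refine ((hWmeas.comp measurable_snd).mul ?_).aemeasurable
    exact (measurable_one.indicator hTmeas).comp measurable_id
  have hinner : ∀ x : ℝ, (∫⁻ t in S₁, ψ t x ∂ν) ≤ W x * min (ENNReal.ofReal x) Y := by
    intro x
    have hTx : MeasurableSet {t : ℝ | Φ t < ENNReal.ofReal x} :=
      measurableSet_lt hΦmeas measurable_const
    have heq : ∀ t : ℝ, ψ t x = W x * ({t : ℝ | Φ t < ENNReal.ofReal x}.indicator 1 t) := by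
      intro t
      simp only [hψdef, hTdef, Set.indicator_apply, mem_setOf_eq, Pi.one_apply]
    simp only [heq]
    rw [lintegral_const_mul _ (measurable_one.indicator hTx)]
    refine mul_le_mul_right ?_ _
    rw [lintegral_indicator hTx]
    simp only [Pi.one_apply]
    rw [setLIntegral_one, Measure.restrict_apply hTx]
    refine le_min ?_ ?_
    · refine le_trans (measure_mono ?_) (hcdf (ENNReal.ofReal x))
      rintro t ⟨ht1, ht2⟩
      exact ⟨ht2.1, ht1⟩
    · rw [← hYν]
      exact measure_mono fun t ht => ht.2.1
  calc ∫⁻ t in S₁, Φ t ^ (m - 1) ∂ν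
      = ∫⁻ t in S₁, (∫⁻ x in Ioi (0:ℝ), ψ t x) ∂ν := by
        refine setLIntegral_congr_fun hS₁meas (?_)
        exact fun t ht => hA t ht
    _ = ∫⁻ x in Ioi (0:ℝ), (∫⁻ t in S₁, ψ t x ∂ν) := hswap
    _ ≤ ∫⁻ x in Ioi (0:ℝ), W x * min (ENNReal.ofReal x) Y := by
        exact setLIntegral_mono' measurableSet_Ioi fun x _ => hinner x
    _ = (∫⁻ x in Ioc (0:ℝ) y₀, W x * min (ENNReal.ofReal x) Y)
        + ∫⁻ x in Ioi y₀, W x * min (ENNReal.ofReal x) Y := by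
        rw [← lintegral_union measurableSet_Ioi (Ioc_disjoint_Ioi le_rfl),
          Ioc_union_Ioi_eq_Ioi hy₀pos.le]
    _ ≤ (∫⁻ x in Ioc (0:ℝ) y₀, W x * ENNReal.ofReal x) + ∫⁻ x in Ioi y₀, W x * Y := by
        gcongr with x
        · exact min_le_left _ _
        · exact min_le_right _ _
    _ = ENNReal.ofReal ((1 - m) / m * y₀ ^ m) + ENNReal.ofReal (y₀ ^ (m - 1)) * Y := by
        rw [hWdef, Wcalc0 hm0 hm1 hy₀pos]
        congr 1
        rw [lintegral_mul_const _ hWmeas, Wcalc hm0 hm1 hy₀pos]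
    _ = ENNReal.ofReal (1 / m) * Y ^ m := by
        rw [hYeq, ← ENNReal.ofReal_mul (Real.rpow_nonneg hy₀pos.le _),
          ENNReal.ofReal_rpow_of_pos hy₀pos,
          ← ENNReal.ofReal_add (mul_nonneg (div_nonneg (by linarith) hm0.le) (Real.rpow_nonneg hy₀pos.le _)) (by positivity),
          ← ENNReal.ofReal_mul (by positivity)]
        congr 1
        rw [← Real.rpow_add_one (ne_of_gt hy₀pos)]
        have h1 : m - 1 + 1 = m := by ring
        rw [h1]
        field_simp
        ring

/-- Fubini for the tail kernel. -/
lemma fubini_tail {W ψ : ℝ → ℝ≥0∞} (hW : Measurable W) (hψ : Measurable ψ) :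
    ∫⁻ t in Ioi (0:ℝ), W t * (∫⁻ s in Ioi t, ψ s) =
      ∫⁻ s in Ioi (0:ℝ), ψ s * (∫⁻ t in Ioo 0 s, W t) := by
  set T : Set (ℝ × ℝ) := {p : ℝ × ℝ | p.1 < p.2} with hT
  have hTmeas : MeasurableSet T := measurableSet_lt measurable_fst measurable_snd
  set F : ℝ → ℝ → ℝ≥0∞ := fun t s => W t * ψ s * T.indicator 1 (t, s) with hF
  have h1 : ∀ t ∈ Ioi (0:ℝ), W t * (∫⁻ s in Ioi t, ψ s) = ∫⁻ s in Ioi (0:ℝ), F t s := by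
    intro t ht
    have : ∀ s : ℝ, F t s = W t * ((Ioi t).indicator ψ s) := by
      intro s
      by_cases hst : t < s
      · simp [hF, hT, Set.indicator_of_mem, hst, Set.indicator_apply, mem_setOf_eq, mul_assoc]
      · simp [hF, hT, Set.indicator_apply, mem_setOf_eq, hst, mem_Ioi]
    simp only [this]
    rw [lintegral_const_mul _ (hψ.indicator measurableSet_Ioi),
      setLIntegral_indicator measurableSet_Ioi,
      Set.inter_eq_left.2 (Ioi_subset_Ioi (le_of_lt ht))]
  have h2 : ∀ s ∈ Ioi (0:ℝ), ∫⁻ t in Ioi (0:ℝ), F t s = ψ s * (∫⁻ t in Ioo 0 s, W t) := by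
    intro s _
    have : ∀ t : ℝ, F t s = ψ s * ((Iio s).indicator W t) := by
      intro t
      by_cases hst : t < s
      · simp [hF, hT, Set.indicator_apply, mem_setOf_eq, hst, mem_Iio]
        ring
      · simp [hF, hT, Set.indicator_apply, mem_setOf_eq, hst, mem_Iio]
    simp only [this]
    rw [lintegral_const_mul _ (hW.indicator measurableSet_Iio),
      setLIntegral_indicator measurableSet_Iio]
    congr 1
    rw [show Iio s ∩ Ioi (0:ℝ) = Ioo 0 s from by ext x; simp [mem_Ioo, mem_Iio, mem_Ioi, and_comm]]
  rw [setLIntegral_congr_fun measurableSet_Ioi (h1),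
    ← setLIntegral_congr_fun measurableSet_Ioi (h2)]
  refine lintegral_lintegral_swap ?_
  refine Measurable.aemeasurable ?_
  refine (((hW.comp measurable_fst).mul (hψ.comp measurable_snd)).mul ?_)
  exact measurable_one.indicator hTmeas

/-- Lower bound for slowly varying functions on `[t/2, t]`. -/
lemma sv_lower {a : ℝ → ℝ} (ha : SlowlyVarying a) :
    ∃ c₂ : ℝ, 0 < c₂ ∧ ∀ t ∈ Ioi (0:ℝ), ∀ τ, t / 2 ≤ τ → τ ≤ t → c₂ * a t ≤ a τ := by
  obtain ⟨h, hanti, c, C, hc, hC, hequiv⟩ := (ha.2.2 1 one_pos).2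
  refine ⟨c / (2 * C), by positivity, ?_⟩
  intro t ht τ hτ1 hτ2
  have ht' : (0:ℝ) < t := ht
  have hτpos : 0 < τ := lt_of_lt_of_le (by linarith) hτ1
  have h1 := (hequiv τ hτpos).1
  have h2 := (hequiv t ht).2
  simp only [Real.rpow_neg_one] at h1 h2
  have h3 : h t ≤ h τ := hanti hτpos ht hτ2
  have hat : 0 < a t := ha.2.1 t ht
  have haτinv : 0 < t⁻¹ * a t := by positivity
  have hht : 0 < h t := by nlinarith
  have key : c * h t ≤ τ⁻¹ * a τ := le_trans (by nlinarith) h1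
  have key2 : τ⁻¹ * a τ ≥ c / C * (t⁻¹ * a t) := by
    have : c * h t ≥ c / C * (t⁻¹ * a t) := by
      rw [ge_iff_le, div_mul_eq_mul_div, div_le_iff₀ hC]
      nlinarith
    linarith [key, this]
  -- a τ ≥ τ * (c/C) * t⁻¹ * a t ≥ (c/(2C)) * a t
  have h4 : a τ ≥ τ * (c / C * (t⁻¹ * a t)) := by
    have := mul_le_mul_of_nonneg_left key2 hτpos.le
    calc a τ = τ * (τ⁻¹ * a τ) := by field_simp
    _ ≥ τ * (c / C * (t⁻¹ * a t)) := by nlinarith [key2, hτpos.le]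
  calc c / (2 * C) * a t = (t / 2) * (c / C * (t⁻¹ * a t)) := by field_simp
  _ ≤ τ * (c / C * (t⁻¹ * a t)) := by
      have hfac : 0 ≤ c / C * (t⁻¹ * a t) := by positivity
      exact mul_le_mul_of_nonneg_right hτ1 hfac
  _ ≤ a τ := h4

/-- Key estimate: `t * G(t)^q ≲ ∫_0^t G^q` for `G(τ) = τ^{-θ-1/q} a(τ) k(τ)`. -/
lemma key_estimate {a : ℝ → ℝ} {k : ℝ → ℝ≥0∞} {θ q c₂ : ℝ}
    (hq : 0 < q) (hθ0 : 0 ≤ θ) (hc₂ : 0 < c₂)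
    (hapos : ∀ t ∈ Ioi (0:ℝ), 0 < a t)
    (hsv : ∀ t ∈ Ioi (0:ℝ), ∀ τ, t / 2 ≤ τ → τ ≤ t → c₂ * a t ≤ a τ)
    (hk : AntitoneOn (fun t => k t / ENNReal.ofReal t) (Ioi 0))
    {t : ℝ} (ht : 0 < t) :
    ENNReal.ofReal t * (ENNReal.ofReal (t ^ (-θ - 1 / q) * a t) * k t) ^ q ≤
      ENNReal.ofReal (2 ^ (1 + q) / c₂ ^ q) *
        ∫⁻ τ in Ioo 0 t, (ENNReal.ofReal (τ ^ (-θ - 1 / q) * a τ) * k τ) ^ q := by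
  have hat : 0 < a t := hapos t ht
  -- pointwise lower bound for the integrand on (t/2, t)
  have hlow : ∀ τ ∈ Ioo (t/2) t,
      (ENNReal.ofReal (t ^ (-θ - 1 / q) * (c₂ * a t)) * (ENNReal.ofReal (1/2) * k t)) ^ q ≤
        (ENNReal.ofReal (τ ^ (-θ - 1 / q) * a τ) * k τ) ^ q := by
    intro τ hτ
    have hτpos : 0 < τ := lt_of_lt_of_le (by linarith) hτ.1.le
    refine ENNReal.rpow_le_rpow ?_ hq.le
    refine mul_le_mul' ?_ ?_
    · -- real part
      refine ENNReal.ofReal_le_ofReal ?_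
      have hre : t ^ (-θ - 1 / q) ≤ τ ^ (-θ - 1 / q) := by
        refine Real.rpow_le_rpow_of_nonpos hτpos hτ.2.le (by
          have : 0 < 1/q := by positivity
          linarith)
      have haτ : c₂ * a t ≤ a τ := hsv t ht τ hτ.1.le hτ.2.le
      have h1 : 0 ≤ t ^ (-θ - 1/q) := Real.rpow_nonneg ht.le _
      have h2 : 0 < c₂ * a t := by positivity
      nlinarith [Real.rpow_nonneg hτpos.le (-θ - 1/q)]
    · -- k part : k τ ≥ (1/2) k t
      have h1 : k t / ENNReal.ofReal t ≤ k τ / ENNReal.ofReal τ :=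
        hk (mem_Ioi.2 hτpos) (mem_Ioi.2 ht) hτ.2.le
      have hτ0 : ENNReal.ofReal τ ≠ 0 := by
        simp only [ne_eq, ENNReal.ofReal_eq_zero, not_le]; linarith
      have hτtop : ENNReal.ofReal τ ≠ ∞ := ENNReal.ofReal_ne_top
      have h2 : k t / ENNReal.ofReal t * ENNReal.ofReal τ ≤ k τ := by
        calc k t / ENNReal.ofReal t * ENNReal.ofReal τ
            ≤ k τ / ENNReal.ofReal τ * ENNReal.ofReal τ := by gcongr
        _ = k τ := ENNReal.div_mul_cancel hτ0 hτtop
      refine le_trans ?_ h2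
      -- (1/2) * k t ≤ (k t / ofReal t) * ofReal τ
      have h3 : ENNReal.ofReal (t/2) ≤ ENNReal.ofReal τ := ENNReal.ofReal_le_ofReal hτ.1.le
      calc ENNReal.ofReal (1/2) * k t
          = k t * (ENNReal.ofReal (t/2) / ENNReal.ofReal t) := by
            rw [← ENNReal.ofReal_div_of_pos ht]
            have hhalf : t / 2 / t = 1 / 2 := by
              rw [div_div, mul_comm, ← div_div, div_self (ne_of_gt ht)]
            rw [hhalf, mul_comm]
        _ = k t / ENNReal.ofReal t * ENNReal.ofReal (t/2) := by
            simp only [div_eq_mul_inv]; ring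
        _ ≤ k t / ENNReal.ofReal t * ENNReal.ofReal τ := by gcongr
  -- integrate over (t/2, t)
  have hint : (ENNReal.ofReal (t ^ (-θ - 1 / q) * (c₂ * a t)) * (ENNReal.ofReal (1/2) * k t)) ^ q
        * ENNReal.ofReal (t/2)
      ≤ ∫⁻ τ in Ioo 0 t, (ENNReal.ofReal (τ ^ (-θ - 1 / q) * a τ) * k τ) ^ q := by
    calc (ENNReal.ofReal (t ^ (-θ - 1 / q) * (c₂ * a t)) * (ENNReal.ofReal (1/2) * k t)) ^ q
          * ENNReal.ofReal (t/2)
        = ∫⁻ _ in Ioo (t/2) t,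
            (ENNReal.ofReal (t ^ (-θ - 1 / q) * (c₂ * a t)) * (ENNReal.ofReal (1/2) * k t)) ^ q := by
          rw [MeasureTheory.setLIntegral_const, Real.volume_Ioo, show t - t/2 = t/2 by ring]
      _ ≤ ∫⁻ τ in Ioo (t/2) t, (ENNReal.ofReal (τ ^ (-θ - 1 / q) * a τ) * k τ) ^ q :=
          setLIntegral_mono' measurableSet_Ioo hlow
      _ ≤ ∫⁻ τ in Ioo 0 t, (ENNReal.ofReal (τ ^ (-θ - 1 / q) * a τ) * k τ) ^ q :=
          lintegral_mono_set (Ioo_subset_Ioo (by linarith) le_rfl)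
  refine le_trans ?_ (mul_le_mul_right hint _)
  -- now a pure computation
  rw [ENNReal.mul_rpow_of_nonneg _ _ hq.le, ENNReal.mul_rpow_of_nonneg _ _ hq.le,
    ENNReal.ofReal_rpow_of_nonneg (by positivity) hq.le,
    ENNReal.ofReal_rpow_of_nonneg (by positivity) hq.le,
    ENNReal.mul_rpow_of_nonneg _ _ hq.le,
    ENNReal.ofReal_rpow_of_nonneg (by positivity) hq.le]
  -- LHS: ofReal t * (ofReal ((t^e * a t)^q) * k t ^ q)
  -- RHS: ofReal(2^(1+q)/c₂^q) * (ofReal ((t^e*(c₂* a t))^q) * (ofReal((1/2)^q) * k t^q) * ofReal (t/2))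
  have hkey : t * (t ^ (-θ - 1/q) * a t) ^ q =
      2 ^ (1 + q) / c₂ ^ q * ((t ^ (-θ - 1/q) * (c₂ * a t)) ^ q * ((1/2) ^ q * (t/2))) := by
    rw [Real.mul_rpow (Real.rpow_nonneg ht.le _) (by positivity),
      Real.mul_rpow (Real.rpow_nonneg ht.le _) (by positivity),
      Real.mul_rpow (by positivity : (0:ℝ) ≤ c₂) hat.le,
      Real.rpow_add (by norm_num : (0:ℝ) < 2)]
    have h12 : ((1:ℝ)/2) ^ q = ((2:ℝ) ^ q)⁻¹ := by
      rw [one_div, Real.inv_rpow (by norm_num : (0:ℝ) ≤ 2)]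
    rw [h12, Real.rpow_one]
    have hc₂q : (0:ℝ) < c₂ ^ q := Real.rpow_pos_of_pos hc₂ q
    have h2q : (0:ℝ) < (2:ℝ) ^ q := Real.rpow_pos_of_pos (by norm_num) q
    field_simp
  calc ENNReal.ofReal t * (ENNReal.ofReal ((t ^ (-θ - 1/q) * a t) ^ q) * k t ^ q)
      = ENNReal.ofReal (t * (t ^ (-θ - 1/q) * a t) ^ q) * k t ^ q := by
        rw [ENNReal.ofReal_mul ht.le]; ring
    _ = ENNReal.ofReal (2 ^ (1 + q) / c₂ ^ q *
          ((t ^ (-θ - 1/q) * (c₂ * a t)) ^ q * ((1/2) ^ q * (t/2)))) * k t ^ q := by rw [hkey]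
    _ ≤ ENNReal.ofReal (2 ^ (1 + q) / c₂ ^ q) *
        (ENNReal.ofReal ((t ^ (-θ - 1/q) * (c₂ * a t)) ^ q) * (ENNReal.ofReal ((1/2) ^ q) * k t ^ q)
          * ENNReal.ofReal (t/2)) := by
        rw [ENNReal.ofReal_mul (by positivity), ENNReal.ofReal_mul (by positivity),
          ENNReal.ofReal_mul (by positivity)]
        calc ENNReal.ofReal (2 ^ (1 + q) / c₂ ^ q) *
            (ENNReal.ofReal ((t ^ (-θ - 1/q) * (c₂ * a t)) ^ q) *
              (ENNReal.ofReal ((1/2) ^ q) * ENNReal.ofReal (t/2))) * k t ^ q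
            = ENNReal.ofReal (2 ^ (1 + q) / c₂ ^ q) *
              (ENNReal.ofReal ((t ^ (-θ - 1/q) * (c₂ * a t)) ^ q) *
                (ENNReal.ofReal ((1/2) ^ q) * k t ^ q) * ENNReal.ofReal (t/2)) := by ring
        _ ≤ _ := le_rfl
  done

/-- The `K`-functional inequality expressing the embedding
`(X₀,X₁)^{L}_{θ,r,b,q,a} ↪ (X₀,X₁)_{θ,r,d}`, with
`d(x) = b(x) ((∫_x^∞ y⁻¹ (b(y)/a(y))^r dy)/(b(x)/a(x))^r)^{1/max{q,r}}`. -/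
theorem L_interp_embed (θ r q : ℝ) (hθ0 : 0 ≤ θ) (hθ1 : θ < 1)
    (hr : 0 < r) (hq : 0 < q)
    (a b : ℝ → ℝ) (ha : SlowlyVarying a) (hb : SlowlyVarying b)
    (hba : (∫⁻ y in Ioi (1 : ℝ), ENNReal.ofReal (y⁻¹ * (b y / a y) ^ r)) ≠ ∞)
    (d : ℝ → ℝ)
    (hd : ∀ x ∈ Ioi (0 : ℝ), d x =
      b x * ((∫⁻ y in Ioi x, ENNReal.ofReal (y⁻¹ * (b y / a y) ^ r)).toReal /
        (b x / a x) ^ r) ^ (1 / max q r)) :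
    ∃ C : ℝ, 0 < C ∧ ∀ k : ℝ → ℝ≥0∞, Measurable k →
      AntitoneOn (fun t => k t / ENNReal.ofReal t) (Ioi 0) →
      eLq (fun t => ENNReal.ofReal (t ^ (-θ - 1 / r) * d t) * k t) r (Ioi 0) ≤
        ENNReal.ofReal C *
          eLq (fun t => ENNReal.ofReal (t ^ (-(1 / r)) * (b t / a t)) *
            eLq (fun τ => ENNReal.ofReal (τ ^ (-θ - 1 / q) * a τ) * k τ) q (Ioo 0 t)) r
            (Ioi 0) := by
  obtain ⟨c₂, hc₂, hsv⟩ := sv_lower ha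
  have hameas : Measurable a := ha.1
  have hbmeas : Measurable b := hb.1
  have hapos : ∀ t ∈ Ioi (0:ℝ), 0 < a t := ha.2.1
  have hbpos : ∀ t ∈ Ioi (0:ℝ), 0 < b t := hb.2.1
  set p : ℝ := r / q with hpdef
  have hppos : 0 < p := div_pos hr hq
  have hqp : q * p = r := by rw [hpdef]; field_simp
  set Kr : ℝ := 2 ^ (1 + q) / c₂ ^ q with hKrdef
  have hKrpos : 0 < Kr := by
    have h1 := Real.rpow_pos_of_pos (show (0:ℝ) < 2 by norm_num) (1 + q)
    have h2 := Real.rpow_pos_of_pos hc₂ q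
    rw [hKrdef]; positivity
  set C1 : ℝ := (Kr ^ (p - 1)) ^ (1/r) with hC1def
  set C2 : ℝ := ((1/p) ^ p) ^ (1/r) with hC2def
  have hC1pos : 0 < C1 := Real.rpow_pos_of_pos (Real.rpow_pos_of_pos hKrpos _) _
  have hC2pos : 0 < C2 := Real.rpow_pos_of_pos (Real.rpow_pos_of_pos (by positivity) _) _
  set Creal : ℝ := max C1 C2 with hCrealdef
  have hCrealpos : 0 < Creal := lt_max_of_lt_left hC1pos
  refine ⟨Creal, hCrealpos, ?_⟩
  intro k hk hkanti
  set G : ℝ → ℝ≥0∞ := fun τ => ENNReal.ofReal (τ ^ (-θ - 1 / q) * a τ) * k τ with hGdef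
  have hGmeas : Measurable G := by
    rw [hGdef]; fun_prop
  set Φ : ℝ → ℝ≥0∞ := fun t => ∫⁻ τ in Ioo 0 t, G τ ^ q with hΦdef
  have hΦmono : Monotone Φ := fun x y h => lintegral_mono_set (Ioo_subset_Ioo le_rfl h)
  have hΦmeas : Measurable Φ := hΦmono.measurable
  set ψB : ℝ → ℝ≥0∞ := fun y => ENNReal.ofReal (y⁻¹ * (b y / a y) ^ r) with hψBdef
  have hψBmeas : Measurable ψB := by
    rw [hψBdef]; fun_prop
  set Bq : ℝ → ℝ≥0∞ := fun t => ∫⁻ y in Ioi t, ψB y with hBqdef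
  have hBqanti : Antitone Bq := fun x y h => lintegral_mono_set (Ioi_subset_Ioi h)
  have hBqmeas : Measurable Bq := hBqanti.measurable
  have hBqt : ∀ t : ℝ, (∫⁻ y in Ioi t, ψB y) = Bq t := fun t => by rw [hBqdef]
  set R : ℝ≥0∞ := ∫⁻ t in Ioi 0, ψB t * Φ t ^ p with hRdef
  -- reduce the RHS
  have hRHSeq : eLq (fun t => ENNReal.ofReal (t ^ (-(1 / r)) * (b t / a t)) *
      eLq G q (Ioo 0 t)) r (Ioi 0) = R ^ (1/r) := by
    rw [hRdef]
    unfold eLq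
    congr 1
    refine setLIntegral_congr_fun measurableSet_Ioi (fun t ht => ?_)
    have ht' : (0:ℝ) < t := ht
    dsimp only
    have h1 : (∫⁻ τ in Ioo 0 t, G τ ^ q) = Φ t := by rw [hΦdef]
    rw [h1]
    rw [ENNReal.mul_rpow_of_nonneg _ _ hr.le, ← ENNReal.rpow_mul]
    have h2 : 1 / q * r = p := by rw [hpdef]; field_simp
    rw [h2]
    congr 1
    have hba' : (0:ℝ) ≤ b t / a t := div_nonneg (hbpos t ht).le (hapos t ht).le
    rw [ENNReal.ofReal_rpow_of_nonneg (mul_nonneg (Real.rpow_nonneg ht'.le _) hba') hr.le]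
    simp only [hψBdef]
    congr 1
    rw [Real.mul_rpow (Real.rpow_nonneg ht'.le _) hba', ← Real.rpow_mul ht'.le]
    congr 1
    have h3 : -(1/r) * r = -1 := by field_simp
    rw [h3, Real.rpow_neg_one]
  rw [hRHSeq]
  have hLHSeq : eLq (fun t => ENNReal.ofReal (t ^ (-θ - 1 / r) * d t) * k t) r (Ioi 0)
      = (∫⁻ t in Ioi 0, (ENNReal.ofReal (t ^ (-θ - 1 / r) * d t) * k t) ^ r) ^ (1/r) := rfl
  rw [hLHSeq]
  suffices hmain : (∫⁻ t in Ioi 0, (ENNReal.ofReal (t ^ (-θ - 1 / r) * d t) * k t) ^ r)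
      ≤ ENNReal.ofReal (Creal ^ r) * R by
    calc (∫⁻ t in Ioi 0, (ENNReal.ofReal (t ^ (-θ - 1 / r) * d t) * k t) ^ r) ^ (1/r)
        ≤ (ENNReal.ofReal (Creal ^ r) * R) ^ (1/r) :=
          ENNReal.rpow_le_rpow hmain (by positivity)
      _ = ENNReal.ofReal Creal * R ^ (1/r) := by
          rw [ENNReal.mul_rpow_of_nonneg _ _ (by positivity : (0:ℝ) ≤ 1/r),
            ENNReal.ofReal_rpow_of_nonneg (Real.rpow_nonneg hCrealpos.le r) (by positivity)]
          congr 2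
          rw [← Real.rpow_mul hCrealpos.le]
          have h4 : r * (1/r) = 1 := by field_simp
          rw [h4, Real.rpow_one]
  -- the key estimate, in abbreviated form
  have hkey : ∀ t ∈ Ioi (0:ℝ), ENNReal.ofReal t * G t ^ q ≤ ENNReal.ofReal Kr * Φ t := by
    intro t ht
    have h := key_estimate hq hθ0 hc₂ hapos hsv hkanti (mem_Ioi.1 ht)
    simp only [hGdef, hΦdef, hKrdef]
    exact h
  -- the exponent-juggling identity
  have hfact1 : ∀ t ∈ Ioi (0:ℝ),
      ENNReal.ofReal (t ^ (-θ * r - 1) * a t ^ r) * k t ^ r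
        = ENNReal.ofReal t ^ (p - 1) * (G t ^ q) ^ p := by
    intro t ht
    have ht' : (0:ℝ) < t := ht
    have hat : 0 < a t := hapos t ht
    simp only [hGdef]
    rw [ENNReal.mul_rpow_of_nonneg _ _ hq.le, ENNReal.mul_rpow_of_nonneg _ _ hppos.le,
      ← ENNReal.rpow_mul, ← ENNReal.rpow_mul, hqp,
      ENNReal.ofReal_rpow_of_nonneg (mul_nonneg (Real.rpow_nonneg ht'.le _) hat.le) hr.le,
      ENNReal.ofReal_rpow_of_pos ht']
    rw [← mul_assoc, ← ENNReal.ofReal_mul (Real.rpow_nonneg ht'.le _)]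
    congr 2
    rw [Real.mul_rpow (Real.rpow_nonneg ht'.le _) hat.le, ← Real.rpow_mul ht'.le,
      ← mul_assoc, ← Real.rpow_add ht']
    congr 2
    rw [hpdef]; field_simp; ring
  rcases le_or_gt q r with hqr | hqr
  · -- CASE q ≤ r
    have hp1 : 1 ≤ p := by rw [hpdef]; exact (one_le_div hq).2 hqr
    have hpt : ∀ t ∈ Ioi (0:ℝ), (ENNReal.ofReal (t ^ (-θ - 1 / r) * d t) * k t) ^ r
        ≤ ENNReal.ofReal Kr ^ (p - 1) * (G t ^ q * Φ t ^ (p - 1) * Bq t) := by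
      intro t ht
      have ht' : (0:ℝ) < t := ht
      have hat : 0 < a t := hapos t ht
      have hbt : 0 < b t := hbpos t ht
      have hLt : 0 < (b t / a t) ^ r := Real.rpow_pos_of_pos (div_pos hbt hat) r
      have hBt : (lintegral (volume.restrict (Ioi t)) ψB) = Bq t := hBqt t
      have hZnn : (0:ℝ) ≤ (Bq t).toReal / (b t / a t) ^ r :=
        div_nonneg ENNReal.toReal_nonneg hLt.le
      have hdt : d t = b t * ((Bq t).toReal / (b t / a t) ^ r) ^ (1 / r) := by
        have h := hd t ht
        rw [hBt, max_eq_right hqr] at h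
        exact h
      have hdtnn : 0 ≤ d t := by
        rw [hdt]; exact mul_nonneg hbt.le (Real.rpow_nonneg hZnn _)
      have hreal : (t ^ (-θ - 1/r) * d t) ^ r = t ^ (-θ*r - 1) * a t ^ r * (Bq t).toReal := by
        rw [hdt]
        rw [show t ^ (-θ - 1/r) * (b t * ((Bq t).toReal / (b t / a t) ^ r) ^ (1/r))
            = (t ^ (-θ - 1/r) * b t) * ((Bq t).toReal / (b t / a t) ^ r) ^ (1/r) from by ring]
        rw [Real.mul_rpow (mul_nonneg (Real.rpow_nonneg ht'.le _) hbt.le)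
            (Real.rpow_nonneg hZnn _),
          Real.mul_rpow (Real.rpow_nonneg ht'.le _) hbt.le,
          ← Real.rpow_mul ht'.le, ← Real.rpow_mul hZnn]
        have h1 : (-θ - 1/r) * r = -θ*r - 1 := by field_simp
        have h2 : 1/r * r = 1 := by field_simp
        rw [h1, h2, Real.rpow_one]
        rw [Real.div_rpow hbt.le hat.le]
        have hbr : 0 < b t ^ r := Real.rpow_pos_of_pos hbt r
        have har : 0 < a t ^ r := Real.rpow_pos_of_pos hat r
        field_simp
      calc (ENNReal.ofReal (t ^ (-θ - 1 / r) * d t) * k t) ^ r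
          = ENNReal.ofReal ((t ^ (-θ - 1/r) * d t) ^ r) * k t ^ r := by
            rw [ENNReal.mul_rpow_of_nonneg _ _ hr.le,
              ENNReal.ofReal_rpow_of_nonneg
                (mul_nonneg (Real.rpow_nonneg ht'.le _) hdtnn) hr.le]
        _ = ENNReal.ofReal (t ^ (-θ*r - 1) * a t ^ r) * ENNReal.ofReal ((Bq t).toReal)
              * k t ^ r := by
            rw [hreal, ENNReal.ofReal_mul
              (mul_nonneg (Real.rpow_nonneg ht'.le _) (Real.rpow_nonneg hat.le _))]
        _ ≤ ENNReal.ofReal (t ^ (-θ*r - 1) * a t ^ r) * k t ^ r * Bq t := by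
            rw [mul_right_comm]
            gcongr
            exact ENNReal.ofReal_toReal_le
        _ = ENNReal.ofReal t ^ (p - 1) * (G t ^ q) ^ p * Bq t := by rw [hfact1 t ht]
        _ = G t ^ q * (ENNReal.ofReal t * G t ^ q) ^ (p - 1) * Bq t := by
            rw [ENNReal.mul_rpow_of_nonneg _ _ (by linarith : (0:ℝ) ≤ p - 1)]
            have h5 : (G t ^ q) ^ p = G t ^ q * (G t ^ q) ^ (p - 1) := by
              have h6 := ENNReal.rpow_add_of_nonneg (x := G t ^ q) 1 (p - 1)
                zero_le_one (by linarith : (0:ℝ) ≤ p - 1)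
              rw [show (1:ℝ) + (p - 1) = p from by ring] at h6
              rw [h6, ENNReal.rpow_one]
            rw [h5]; ring
        _ ≤ G t ^ q * (ENNReal.ofReal Kr * Φ t) ^ (p - 1) * Bq t := by
            exact mul_le_mul_left
              (mul_le_mul_right (ENNReal.rpow_le_rpow (hkey t ht) (by linarith)) _) _
        _ = ENNReal.ofReal Kr ^ (p - 1) * (G t ^ q * Φ t ^ (p - 1) * Bq t) := by
            rw [ENNReal.mul_rpow_of_nonneg _ _ (by linarith : (0:ℝ) ≤ p - 1)]
            ring
    have hWmeas : Measurable (fun t => G t ^ q * Φ t ^ (p - 1)) := by fun_prop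
    calc ∫⁻ t in Ioi 0, (ENNReal.ofReal (t ^ (-θ - 1 / r) * d t) * k t) ^ r
        ≤ ∫⁻ t in Ioi 0, ENNReal.ofReal Kr ^ (p - 1) * (G t ^ q * Φ t ^ (p - 1) * Bq t) :=
          setLIntegral_mono' measurableSet_Ioi hpt
      _ = ENNReal.ofReal Kr ^ (p - 1) *
            ∫⁻ t in Ioi 0, (fun u => G u ^ q * Φ u ^ (p - 1)) t * (∫⁻ s in Ioi t, ψB s) := by
          rw [lintegral_const_mul _ (by fun_prop)]
      _ = ENNReal.ofReal Kr ^ (p - 1) *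
            ∫⁻ s in Ioi 0, ψB s * ∫⁻ t in Ioo 0 s, G t ^ q * Φ t ^ (p - 1) := by
          rw [fubini_tail hWmeas hψBmeas]
      _ ≤ ENNReal.ofReal Kr ^ (p - 1) * ∫⁻ s in Ioi 0, ψB s * Φ s ^ p := by
          gcongr with s hs
          calc ∫⁻ t in Ioo 0 s, G t ^ q * Φ t ^ (p - 1)
              ≤ ∫⁻ t in Ioo 0 s, G t ^ q * Φ s ^ (p - 1) := by
                refine setLIntegral_mono' measurableSet_Ioo fun t ht => ?_
                exact mul_le_mul_right (ENNReal.rpow_le_rpow (hΦmono ht.2.le) (by linarith)) _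
            _ = Φ s * Φ s ^ (p - 1) := by
                rw [lintegral_mul_const _ (by fun_prop)]
            _ = Φ s ^ p := by
                have h6 := ENNReal.rpow_add_of_nonneg (x := Φ s) 1 (p - 1)
                  zero_le_one (by linarith : (0:ℝ) ≤ p - 1)
                rw [show (1:ℝ) + (p - 1) = p from by ring] at h6
                rw [h6, ENNReal.rpow_one]
      _ ≤ ENNReal.ofReal (Creal ^ r) * R := by
          rw [hRdef]
          gcongr
          rw [ENNReal.ofReal_rpow_of_pos hKrpos]
          refine ENNReal.ofReal_le_ofReal ?_
          have h7 : Kr ^ (p - 1) = C1 ^ r := by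
            rw [hC1def, ← Real.rpow_mul (Real.rpow_nonneg hKrpos.le _)]
            have h8 : 1/r * r = 1 := by field_simp
            rw [h8, Real.rpow_one]
          rw [h7]
          exact Real.rpow_le_rpow hC1pos.le (le_max_left _ _) hr.le
  · -- CASE r < q
    have hp1 : p < 1 := by rw [hpdef]; exact (div_lt_one hq).2 hqr
    by_cases htop : ∀ t ∈ Ioi (0:ℝ), Φ t ≠ ∞
    swap
    · -- degenerate case : R = ∞
      push_neg at htop
      obtain ⟨t₀, ht₀, hΦt₀⟩ := htop
      have hRtop : R = ∞ := by
        rw [hRdef, eq_top_iff]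
        refine le_trans ?_ (lintegral_mono_set (Ioi_subset_Ioi (le_of_lt ht₀)))
        have hcongr : ∀ s ∈ Ioi t₀, ψB s * Φ s ^ p = (fun _ : ℝ => (∞ : ℝ≥0∞)) s := by
          intro s hs
          have hs' : (0:ℝ) < s := lt_trans ht₀ hs
          have h1 : Φ s = ∞ := by
            rw [eq_top_iff, ← hΦt₀]
            exact hΦmono (le_of_lt hs)
          have h2 : ψB s ≠ 0 := by
            simp only [hψBdef, ne_eq, ENNReal.ofReal_eq_zero, not_le]
            have h3 := Real.rpow_pos_of_pos (div_pos (hbpos s hs') (hapos s hs')) r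
            positivity
          rw [h1, ENNReal.top_rpow_of_pos hppos, ENNReal.mul_top h2]
        rw [setLIntegral_congr_fun measurableSet_Ioi (hcongr),
          setLIntegral_const, Real.volume_Ioi]
        simp
      calc ∫⁻ t in Ioi 0, (ENNReal.ofReal (t ^ (-θ - 1 / r) * d t) * k t) ^ r
          ≤ ∞ := le_top
        _ = ENNReal.ofReal (Creal ^ r) * R := by
            rw [hRtop, ENNReal.mul_top ?_]
            simp only [ne_eq, ENNReal.ofReal_eq_zero, not_le]
            exact Real.rpow_pos_of_pos hCrealpos r
    -- main case : Φ everywhere finite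
    set f1 : ℝ → ℝ≥0∞ := fun u => G u ^ q * Φ u ^ (p - 1) * Bq u with hf1def
    set f2 : ℝ → ℝ≥0∞ := fun u => ψB u * Φ u ^ p with hf2def
    have hf1meas : Measurable f1 := by rw [hf1def]; fun_prop
    have hf2meas : Measurable f2 := by rw [hf2def]; fun_prop
    have hpt : ∀ t ∈ Ioi (0:ℝ), (ENNReal.ofReal (t ^ (-θ - 1 / r) * d t) * k t) ^ r
        ≤ f1 t ^ p * f2 t ^ (1 - p) := by
      intro t ht
      have ht' : (0:ℝ) < t := ht
      have hat : 0 < a t := hapos t ht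
      have hbt : 0 < b t := hbpos t ht
      have hLt : 0 < (b t / a t) ^ r := Real.rpow_pos_of_pos (div_pos hbt hat) r
      have hLne0 : ENNReal.ofReal ((b t / a t) ^ r) ≠ 0 := by
        simp only [ne_eq, ENNReal.ofReal_eq_zero, not_le]; exact hLt
      have hLnetop : ENNReal.ofReal ((b t / a t) ^ r) ≠ ∞ := ENNReal.ofReal_ne_top
      have hBt : (lintegral (volume.restrict (Ioi t)) ψB) = Bq t := hBqt t
      have hZnn : (0:ℝ) ≤ (Bq t).toReal / (b t / a t) ^ r :=
        div_nonneg ENNReal.toReal_nonneg hLt.le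
      have hdt : d t = b t * ((Bq t).toReal / (b t / a t) ^ r) ^ (1 / q) := by
        have h := hd t ht
        rw [hBt, max_eq_left hqr.le] at h
        exact h
      have hdtnn : 0 ≤ d t := by
        rw [hdt]; exact mul_nonneg hbt.le (Real.rpow_nonneg hZnn _)
      have hreal : (t ^ (-θ - 1/r) * d t) ^ r
          = t ^ (-θ*r - 1) * a t ^ r * ((b t / a t) ^ r *
              ((Bq t).toReal / (b t / a t) ^ r) ^ p) := by
        rw [hdt]
        rw [show t ^ (-θ - 1/r) * (b t * ((Bq t).toReal / (b t / a t) ^ r) ^ (1/q))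
            = (t ^ (-θ - 1/r) * b t) * ((Bq t).toReal / (b t / a t) ^ r) ^ (1/q) from by ring]
        rw [Real.mul_rpow (mul_nonneg (Real.rpow_nonneg ht'.le _) hbt.le)
            (Real.rpow_nonneg hZnn _),
          Real.mul_rpow (Real.rpow_nonneg ht'.le _) hbt.le,
          ← Real.rpow_mul ht'.le, ← Real.rpow_mul hZnn]
        have h1 : (-θ - 1/r) * r = -θ*r - 1 := by field_simp
        have h2 : 1/q * r = p := by rw [hpdef]; field_simp
        rw [h1, h2]
        rw [Real.div_rpow hbt.le hat.le]
        have hbr : 0 < b t ^ r := Real.rpow_pos_of_pos hbt r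
        have har : 0 < a t ^ r := Real.rpow_pos_of_pos hat r
        field_simp
      have hstep : (ENNReal.ofReal (t ^ (-θ - 1 / r) * d t) * k t) ^ r
          ≤ ENNReal.ofReal t ^ (p - 1) * (G t ^ q) ^ p *
              ENNReal.ofReal ((b t / a t) ^ r) *
              (Bq t / ENNReal.ofReal ((b t / a t) ^ r)) ^ p := by
        calc (ENNReal.ofReal (t ^ (-θ - 1 / r) * d t) * k t) ^ r
            = ENNReal.ofReal ((t ^ (-θ - 1/r) * d t) ^ r) * k t ^ r := by
              rw [ENNReal.mul_rpow_of_nonneg _ _ hr.le,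
                ENNReal.ofReal_rpow_of_nonneg
                  (mul_nonneg (Real.rpow_nonneg ht'.le _) hdtnn) hr.le]
          _ = ENNReal.ofReal (t ^ (-θ*r - 1) * a t ^ r) * k t ^ r *
                ENNReal.ofReal ((b t / a t) ^ r) *
                ENNReal.ofReal (((Bq t).toReal / (b t / a t) ^ r) ^ p) := by
              rw [hreal]
              rw [ENNReal.ofReal_mul (mul_nonneg (Real.rpow_nonneg ht'.le _)
                  (Real.rpow_nonneg hat.le _)),
                ENNReal.ofReal_mul hLt.le]
              ring
          _ ≤ ENNReal.ofReal t ^ (p - 1) * (G t ^ q) ^ p *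
                ENNReal.ofReal ((b t / a t) ^ r) *
                (Bq t / ENNReal.ofReal ((b t / a t) ^ r)) ^ p := by
              rw [hfact1 t ht]
              gcongr
              rw [← ENNReal.ofReal_rpow_of_nonneg hZnn hppos.le]
              refine ENNReal.rpow_le_rpow ?_ hppos.le
              rw [ENNReal.ofReal_div_of_pos hLt]
              gcongr
              exact ENNReal.ofReal_toReal_le
      refine le_trans hstep ?_
      by_cases hΦ0 : Φ t = 0
      · -- degenerate point : G t ^ q = 0
        have hG0 : G t ^ q = 0 := by
          have h1 := hkey t ht
          rw [hΦ0, mul_zero, nonpos_iff_eq_zero, mul_eq_zero] at h1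
          rcases h1 with h1 | h1
          · exact absurd h1 (by simp only [ne_eq, ENNReal.ofReal_eq_zero, not_le]; exact ht')
          · exact h1
        rw [hG0, ENNReal.zero_rpow_of_pos hppos]
        simp
      · -- nondegenerate point : pure algebra
        have hΦtop' : Φ t ≠ ∞ := htop t ht
        have hΦid : Φ t ^ ((p - 1) * p) * Φ t ^ (p * (1 - p)) = 1 := by
          rw [← ENNReal.rpow_add _ _ hΦ0 hΦtop']
          rw [show (p - 1) * p + p * (1 - p) = 0 from by ring, ENNReal.rpow_zero]
        have hLid : ENNReal.ofReal ((b t / a t) ^ r) *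
            (ENNReal.ofReal ((b t / a t) ^ r) ^ p)⁻¹
            = ENNReal.ofReal ((b t / a t) ^ r) ^ (1 - p) := by
          rw [← ENNReal.rpow_neg]
          nth_rewrite 1 [← ENNReal.rpow_one (ENNReal.ofReal ((b t / a t) ^ r))]
          rw [← ENNReal.rpow_add _ _ hLne0 hLnetop,
            show (1:ℝ) + -p = 1 - p from by ring]
        refine le_of_eq ?_
        have hψBt : ψB t = (ENNReal.ofReal t)⁻¹ * ENNReal.ofReal ((b t / a t) ^ r) := by
          simp only [hψBdef]
          rw [ENNReal.ofReal_mul (by positivity), ENNReal.ofReal_inv_of_pos ht']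
        calc ENNReal.ofReal t ^ (p - 1) * (G t ^ q) ^ p *
              ENNReal.ofReal ((b t / a t) ^ r) *
              (Bq t / ENNReal.ofReal ((b t / a t) ^ r)) ^ p
            = (G t ^ q) ^ p * Bq t ^ p * ENNReal.ofReal t ^ (p - 1) *
              (ENNReal.ofReal ((b t / a t) ^ r) *
                (ENNReal.ofReal ((b t / a t) ^ r) ^ p)⁻¹) := by
              rw [ENNReal.div_rpow_of_nonneg _ _ hppos.le]
              simp only [div_eq_mul_inv]
              ring
          _ = (G t ^ q) ^ p * Bq t ^ p * ENNReal.ofReal t ^ (p - 1) *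
              ENNReal.ofReal ((b t / a t) ^ r) ^ (1 - p) := by rw [hLid]
          _ = (Φ t ^ ((p - 1) * p) * Φ t ^ (p * (1 - p))) *
              ((G t ^ q) ^ p * Bq t ^ p * ENNReal.ofReal t ^ (p - 1) *
              ENNReal.ofReal ((b t / a t) ^ r) ^ (1 - p)) := by rw [hΦid, one_mul]
          _ = f1 t ^ p * f2 t ^ (1 - p) := by
              simp only [hf1def, hf2def]
              rw [hψBt]
              rw [ENNReal.mul_rpow_of_nonneg (G t ^ q * Φ t ^ (p-1)) (Bq t) hppos.le,
                ENNReal.mul_rpow_of_nonneg (G t ^ q) (Φ t ^ (p-1)) hppos.le,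
                ← ENNReal.rpow_mul (Φ t),
                ENNReal.mul_rpow_of_nonneg ((ENNReal.ofReal t)⁻¹ *
                  ENNReal.ofReal ((b t / a t) ^ r)) (Φ t ^ p) (by linarith : (0:ℝ) ≤ 1 - p),
                ENNReal.mul_rpow_of_nonneg ((ENNReal.ofReal t)⁻¹)
                  (ENNReal.ofReal ((b t / a t) ^ r)) (by linarith : (0:ℝ) ≤ 1 - p),
                ← ENNReal.rpow_mul (Φ t),
                ← ENNReal.rpow_neg_one (ENNReal.ofReal t), ← ENNReal.rpow_mul]
              rw [← ENNReal.rpow_mul (ENNReal.ofReal t),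
                show (-1 : ℝ) * (1 - p) = p - 1 from by ring]
              ring
    -- Hoelder
    have hconj : (1/p).HolderConjugate (1/(1-p)) := by
      rw [Real.holderConjugate_iff]; constructor
      · rw [lt_div_iff₀ hppos]; linarith
      · rw [one_div, one_div, inv_inv, inv_inv]; ring
    have hf1p : ∀ u : ℝ, (f1 u ^ p) ^ (1/p) = f1 u := fun u => by
      rw [← ENNReal.rpow_mul, show p * (1/p) = 1 from by field_simp, ENNReal.rpow_one]
    have hf2p : ∀ u : ℝ, (f2 u ^ (1-p)) ^ (1/(1-p)) = f2 u := fun u => by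
      rw [← ENNReal.rpow_mul, show (1-p) * (1/(1-p)) = 1 from by
        have : 1 - p ≠ 0 := by linarith
        field_simp, ENNReal.rpow_one]
    have hholder : ∫⁻ t in Ioi 0, f1 t ^ p * f2 t ^ (1 - p)
        ≤ (∫⁻ t in Ioi 0, f1 t) ^ p * (∫⁻ t in Ioi 0, f2 t) ^ (1 - p) := by
      have h := ENNReal.lintegral_mul_le_Lp_mul_Lq (volume.restrict (Ioi 0)) hconj
        (by fun_prop : Measurable fun u => f1 u ^ p).aemeasurable
        (by fun_prop : Measurable fun u => f2 u ^ (1-p)).aemeasurable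
      simp only [Pi.mul_apply] at h
      refine le_trans h ?_
      rw [one_div_one_div, one_div_one_div]
      refine le_of_eq ?_
      congr 1
      · congr 1
        exact lintegral_congr fun u => hf1p u
      · congr 1
        exact lintegral_congr fun u => hf2p u
    have hf2R : (∫⁻ t in Ioi 0, f2 t) = R := by
      rw [hRdef, hf2def]
    have hA : (∫⁻ t in Ioi 0, f1 t) ≤ ENNReal.ofReal (1/p) * R := by
      have h1 : ∫⁻ t in Ioi 0, f1 t
          = ∫⁻ t in Ioi 0, (fun u => G u ^ q * Φ u ^ (p - 1)) t * (∫⁻ s in Ioi t, ψB s) := by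
        refine setLIntegral_congr_fun measurableSet_Ioi
          (fun t _ => ?_)
        simp only [hf1def]
        rw [hBqt]
      rw [h1, fubini_tail (by fun_prop) hψBmeas]
      calc ∫⁻ s in Ioi 0, ψB s * ∫⁻ t in Ioo 0 s, G t ^ q * Φ t ^ (p - 1)
          ≤ ∫⁻ s in Ioi 0, ψB s * (ENNReal.ofReal (1/p) * Φ s ^ p) := by
            refine setLIntegral_mono' measurableSet_Ioi fun s hs => ?_
            gcongr
            have hd' := dagger (by fun_prop : Measurable fun τ => G τ ^ q) hppos hp1 s
              (by rw [show (∫⁻ τ in Ioo 0 s, G τ ^ q) = Φ s from by rw [hΦdef]]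
                  exact htop s hs)
            refine le_trans (le_of_eq ?_) (le_trans hd' (le_of_eq ?_))
            · refine setLIntegral_congr_fun measurableSet_Ioo
                (fun t _ => ?_)
              rw [show (∫⁻ τ in Ioo 0 t, G τ ^ q) = Φ t from by rw [hΦdef], mul_comm]
            · rw [show (∫⁻ τ in Ioo 0 s, G τ ^ q) = Φ s from by rw [hΦdef]]
        _ = ENNReal.ofReal (1/p) * R := by
            rw [hRdef]
            rw [← lintegral_const_mul _ (by fun_prop : Measurable fun s => ψB s * Φ s ^ p)]
            refine setLIntegral_congr_fun measurableSet_Ioi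
              (fun s _ => ?_)
            ring
    calc ∫⁻ t in Ioi 0, (ENNReal.ofReal (t ^ (-θ - 1 / r) * d t) * k t) ^ r
        ≤ ∫⁻ t in Ioi 0, f1 t ^ p * f2 t ^ (1 - p) :=
          setLIntegral_mono' measurableSet_Ioi hpt
      _ ≤ (∫⁻ t in Ioi 0, f1 t) ^ p * (∫⁻ t in Ioi 0, f2 t) ^ (1 - p) := hholder
      _ ≤ (ENNReal.ofReal (1/p) * R) ^ p * R ^ (1 - p) := by
          rw [hf2R]
          gcongr
      _ = ENNReal.ofReal ((1/p) ^ p) * R := by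
          rw [ENNReal.mul_rpow_of_nonneg _ _ hppos.le, mul_assoc,
            ← ENNReal.rpow_add_of_nonneg _ _ hppos.le (by linarith : (0:ℝ) ≤ 1 - p),
            show p + (1 - p) = 1 from by ring, ENNReal.rpow_one,
            ENNReal.ofReal_rpow_of_nonneg (by positivity) hppos.le]
      _ ≤ ENNReal.ofReal (Creal ^ r) * R := by
          gcongr
          have h7 : (1/p) ^ p = C2 ^ r := by
            rw [hC2def, ← Real.rpow_mul (Real.rpow_nonneg (by positivity) _)]
            have h8 : 1/r * r = 1 := by field_simp
            rw [h8, Real.rpow_one]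
          rw [h7]
          exact Real.rpow_le_rpow hC2pos.le (le_max_right _ _) hr.le


end
end

section
/- Let 1 ≤ P ≤ Q < ∞, let φ : (0,∞) × (0,∞) → [0,∞) be measurable, let v, w be measurable functions on (0,∞) that are positive and finite a.e., and let C > 0. Then the inequality (∫_0^∞ h(x)^Q v(x) dx)^{1/Q} ≤ C (∫_0^∞ (∫_0^∞ φ(x,y) h(y) dy)^P w(x) dx)^{1/P} holds for all non-increasing h : (0,∞) → [0,∞] if and only if (∫_0^z v(x) dx)^{1/Q} ≤ C (∫_0^∞ (∫_0^z φ(x,y) dy)^P w(x) dx)^{1/P} holds for all z ∈ (0,∞) (with the same constant C in both inequalities). -/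
open MeasureTheory Set
open scoped ENNReal


/-- Monotonicity of `x ↦ (x+e)^r - x^r` on `[0,∞)` for `r ≥ 1`, `e ≥ 0`. -/
lemma core_mono {r e : ℝ} (hr : 1 ≤ r) (he : 0 ≤ e) :
    MonotoneOn (fun x : ℝ => (x + e) ^ r - x ^ r) (Ici 0) := by
  have hdiff : ∀ x : ℝ, HasDerivAt (fun x : ℝ => (x + e) ^ r - x ^ r)
      (1 * r * (x + e) ^ (r - 1) - 1 * r * x ^ (r - 1)) x := by
    intro x
    exact (((hasDerivAt_id x).add_const e).rpow_const (Or.inr hr)).sub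
      ((hasDerivAt_id x).rpow_const (Or.inr hr))
  apply monotoneOn_of_deriv_nonneg (convex_Ici 0)
  · exact (Differentiable.continuous (fun x => (hdiff x).differentiableAt)).continuousOn
  · exact (Differentiable.differentiableOn (fun x => (hdiff x).differentiableAt))
  · intro x hx
    rw [interior_Ici] at hx
    rw [(hdiff x).deriv]
    have h1 : x ^ (r - 1) ≤ (x + e) ^ (r - 1) :=
      Real.rpow_le_rpow hx.le (by linarith) (by linarith)
    nlinarith [h1]

/-- Real core inequality: for `0 ≤ c ≤ a`, `c ≤ d`,
`a^r + d^r - c^r ≤ (a + d - c)^r`. -/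
lemma core_ineq {r a c d : ℝ} (hr : 1 ≤ r) (hc : 0 ≤ c) (hca : c ≤ a) (hcd : c ≤ d) :
    a ^ r + (d ^ r - c ^ r) ≤ (a + (d - c)) ^ r := by
  have := core_mono hr (sub_nonneg.mpr hcd) hc (le_trans hc hca : (0:ℝ) ≤ a) hca
  simp only [] at this
  have hcd' : c + (d - c) = d := by ring
  rw [hcd'] at this
  linarith



/-- Discrete key lemma. -/
lemma discrete_key {r : ℝ} (hr : 1 ≤ r) (b : ℕ → ℝ≥0∞) (hb : Antitone b)
    (y : ℕ → ℝ) (hy0 : y 0 = 0) (hy : Monotone y) :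
    ∀ n, ∑ i ∈ Finset.range n, ENNReal.ofReal (y (i+1) ^ r - y i ^ r) * b i ^ r ≤
      (∑ i ∈ Finset.range n, ENNReal.ofReal (y (i+1) - y i) * b i) ^ r := by
  have hr0 : (0:ℝ) < r := lt_of_lt_of_le one_pos hr
  have hynn : ∀ i, 0 ≤ y i := fun i => hy0 ▸ hy (Nat.zero_le i)
  intro n
  induction n with
  | zero => simp [Real.zero_rpow (ne_of_gt hr0)]
  | succ n ih =>
    rw [Finset.sum_range_succ, Finset.sum_range_succ]
    set A : ℝ≥0∞ := ∑ i ∈ Finset.range n, ENNReal.ofReal (y (i+1) - y i) * b i with hA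
    -- key lower bound : ofReal (y n) * b n ≤ A
    have hAlow : ENNReal.ofReal (y n) * b n ≤ A := by
      calc ENNReal.ofReal (y n) * b n
          = (∑ i ∈ Finset.range n, ENNReal.ofReal (y (i+1) - y i)) * b n := by
            rw [← ENNReal.ofReal_sum_of_nonneg (fun i _ => sub_nonneg.mpr (hy (Nat.le_succ i)))]
            rw [Finset.sum_range_sub (fun i => y i), hy0, sub_zero]
        _ = ∑ i ∈ Finset.range n, ENNReal.ofReal (y (i+1) - y i) * b n := by
            rw [Finset.sum_mul]
        _ ≤ A := Finset.sum_le_sum fun i hi => by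
            exact mul_le_mul_right (hb (le_of_lt (Finset.mem_range.mp hi))) _
    rcases eq_or_ne (b n) ∞ with hbn | hbn
    · rcases eq_or_lt_of_le (hy (Nat.le_succ n)) with heq | hlt
      · rw [← heq]
        simp only [sub_self, ENNReal.ofReal_zero, zero_mul, add_zero]
        exact ih
      · have : ENNReal.ofReal (y (n+1) - y n) * b n = ∞ := by
          rw [hbn, ENNReal.mul_top (by simp [ENNReal.ofReal_eq_zero]; linarith)]
        rw [this]
        simp [ENNReal.top_rpow_of_pos hr0]
    rcases eq_or_ne A ∞ with hAt | hAt
    · rw [hAt]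
      simp [ENNReal.top_rpow_of_pos hr0]
    -- finite case
    set β := (b n).toReal with hβ
    have hβnn : 0 ≤ β := ENNReal.toReal_nonneg
    have hbβ : b n = ENNReal.ofReal β := (ENNReal.ofReal_toReal hbn).symm
    set a := A.toReal with ha
    have hann : 0 ≤ a := ENNReal.toReal_nonneg
    have hAa : A = ENNReal.ofReal a := (ENNReal.ofReal_toReal hAt).symm
    set c := y n * β with hc
    set d := y (n+1) * β with hd
    have hcd : c ≤ d := mul_le_mul_of_nonneg_right (hy (Nat.le_succ n)) hβnn
    have hcnn : 0 ≤ c := mul_nonneg (hynn n) hβnn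
    have hca : c ≤ a := by
      have := hAlow
      rw [hbβ, hAa, ← ENNReal.ofReal_mul (hynn n)] at this
      exact (ENNReal.ofReal_le_ofReal_iff hann).mp this
    have hterm : ENNReal.ofReal (y (n+1) ^ r - y n ^ r) * b n ^ r
        = ENNReal.ofReal (d ^ r - c ^ r) := by
      have hsub : (0:ℝ) ≤ y (n+1) ^ r - y n ^ r :=
        sub_nonneg.mpr (Real.rpow_le_rpow (hynn n) (hy (Nat.le_succ n)) hr0.le)
      rw [hbβ, ENNReal.ofReal_rpow_of_nonneg hβnn hr0.le,
        ← ENNReal.ofReal_mul hsub]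
      congr 1
      rw [sub_mul, hd, hc, Real.mul_rpow (hynn _) hβnn, Real.mul_rpow (hynn _) hβnn]
    have hterm2 : ENNReal.ofReal (y (n+1) - y n) * b n = ENNReal.ofReal (d - c) := by
      rw [hbβ, ← ENNReal.ofReal_mul (sub_nonneg.mpr (hy (Nat.le_succ n))), sub_mul]
    rw [hterm, hterm2]
    calc (∑ i ∈ Finset.range n, ENNReal.ofReal (y (i+1) ^ r - y i ^ r) * b i ^ r)
          + ENNReal.ofReal (d ^ r - c ^ r)
        ≤ A ^ r + ENNReal.ofReal (d ^ r - c ^ r) := add_le_add ih le_rfl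
      _ = ENNReal.ofReal (a ^ r + (d ^ r - c ^ r)) := by
          rw [hAa, ENNReal.ofReal_rpow_of_nonneg hann hr0.le,
            ← ENNReal.ofReal_add (by positivity) (sub_nonneg.mpr
              (Real.rpow_le_rpow hcnn hcd hr0.le))]
      _ ≤ ENNReal.ofReal ((a + (d - c)) ^ r) :=
          ENNReal.ofReal_le_ofReal (core_ineq hr hcnn hca hcd)
      _ = (A + ENNReal.ofReal (d - c)) ^ r := by
          rw [hAa, ← ENNReal.ofReal_add hann (sub_nonneg.mpr hcd),
            ENNReal.ofReal_rpow_of_nonneg (add_nonneg hann (sub_nonneg.mpr hcd)) hr0.le]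


/-- `∫⁻ t in Ioc a b, ofReal (q * t^(q-1)) = ofReal (b^q - a^q)` for `0 ≤ a ≤ b`, `1 ≤ q`. -/
lemma lint_rpow_Ioc {q a b : ℝ} (hq : 0 < q) (ha : 0 ≤ a) (hab : a ≤ b) :
    ∫⁻ t in Ioc a b, ENNReal.ofReal (q * t ^ (q - 1)) = ENNReal.ofReal (b ^ q - a ^ q) := by
  have hint : IntervalIntegrable (fun t : ℝ => q * t ^ (q - 1)) volume a b :=
    (intervalIntegral.intervalIntegrable_rpow' (by linarith)).const_mul q
  have hIoc : IntegrableOn (fun t : ℝ => q * t ^ (q - 1)) (Ioc a b) volume :=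
    (intervalIntegrable_iff_integrableOn_Ioc_of_le hab).mp hint
  rw [← MeasureTheory.ofReal_integral_eq_lintegral_ofReal hIoc]
  · congr 1
    have := intervalIntegral.integral_of_le (μ := volume)
      (f := fun t : ℝ => q * t ^ (q - 1)) hab
    rw [← this, intervalIntegral.integral_const_mul, integral_rpow (Or.inl (by linarith))]
    rw [sub_add_cancel]
    field_simp [hq.ne']
  · filter_upwards [ae_restrict_mem measurableSet_Ioc] with t ht
    exact mul_nonneg hq.le (Real.rpow_nonneg (le_trans ha ht.1.le) _)

/-- Tail divergence. -/
lemma lint_rpow_Ioi_top {q : ℝ} (hq : 1 ≤ q) :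
    ∫⁻ t in Ioi (0:ℝ), ENNReal.ofReal (q * t ^ (q - 1)) = ∞ := by
  have hq0 : (0:ℝ) < q := lt_of_lt_of_le one_pos hq
  refine ENNReal.eq_top_of_forall_nnreal_le fun r => ?_
  obtain ⟨n, hn⟩ := exists_nat_ge (r : ℝ)
  calc (r : ℝ≥0∞) ≤ ENNReal.ofReal ((n+1 : ℝ) ^ q - 0 ^ q) := by
        rw [Real.zero_rpow hq0.ne', sub_zero]
        rw [← ENNReal.ofReal_coe_nnreal]
        apply ENNReal.ofReal_le_ofReal
        calc (r:ℝ) ≤ n := hn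
          _ ≤ (n+1:ℝ) := by linarith
          _ = (n+1:ℝ) ^ (1:ℝ) := (Real.rpow_one _).symm
          _ ≤ (n+1:ℝ) ^ q := Real.rpow_le_rpow_of_exponent_le (by simp) hq
    _ = ∫⁻ t in Ioc (0:ℝ) (n+1), ENNReal.ofReal (q * t ^ (q - 1)) :=
        (lint_rpow_Ioc hq0 le_rfl (by positivity)).symm
    _ ≤ ∫⁻ t in Ioi (0:ℝ), ENNReal.ofReal (q * t ^ (q - 1)) :=
        lintegral_mono_set Ioc_subset_Ioi_self

/-- Layer-cake for a single value. -/
lemma layer_cake_pt {q : ℝ} (hq : 1 ≤ q) (a : ℝ≥0∞) :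
    ∫⁻ t in Ioi (0:ℝ),
      (if ENNReal.ofReal t < a then ENNReal.ofReal (q * t ^ (q - 1)) else 0) = a ^ q := by
  have hq0 : (0:ℝ) < q := lt_of_lt_of_le one_pos hq
  rcases eq_or_ne a ∞ with rfl | ha
  · calc ∫⁻ t in Ioi (0:ℝ),
          (if ENNReal.ofReal t < ⊤ then ENNReal.ofReal (q * t ^ (q - 1)) else 0)
        = ∫⁻ t in Ioi (0:ℝ), ENNReal.ofReal (q * t ^ (q - 1)) :=
          lintegral_congr fun t => if_pos ENNReal.ofReal_lt_top
      _ = ⊤ ^ q := by rw [lint_rpow_Ioi_top hq, ENNReal.top_rpow_of_pos hq0]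
  · have hset : Ioi (0:ℝ) ∩ {t : ℝ | ENNReal.ofReal t < a} = Ioo 0 a.toReal := by
      ext t
      simp only [mem_inter_iff, mem_Ioi, mem_setOf_eq, mem_Ioo]
      constructor
      · rintro ⟨ht, hta⟩
        exact ⟨ht, (ENNReal.ofReal_lt_iff_lt_toReal ht.le ha).mp hta⟩
      · rintro ⟨ht, hta⟩
        exact ⟨ht, (ENNReal.ofReal_lt_iff_lt_toReal ht.le ha).mpr hta⟩
    have hmeas : MeasurableSet {t : ℝ | ENNReal.ofReal t < a} :=
      measurableSet_lt (ENNReal.measurable_ofReal) measurable_const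
    calc ∫⁻ t in Ioi (0:ℝ),
          (if ENNReal.ofReal t < a then ENNReal.ofReal (q * t ^ (q - 1)) else 0)
        = ∫⁻ t in Ioi (0:ℝ) ∩ {t : ℝ | ENNReal.ofReal t < a},
            ENNReal.ofReal (q * t ^ (q - 1)) := by
          rw [← lintegral_indicator (measurableSet_Ioi.inter hmeas)]
          rw [← lintegral_indicator measurableSet_Ioi]
          congr 1
          ext t
          by_cases ht : t ∈ Ioi (0:ℝ) <;> by_cases hta : ENNReal.ofReal t < a <;>
            simp [indicator, ht, hta, mem_inter_iff]
      _ = ∫⁻ t in Ioc 0 a.toReal, ENNReal.ofReal (q * t ^ (q - 1)) := by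
          rw [hset]
          exact setLIntegral_congr Ioo_ae_eq_Ioc
      _ = ENNReal.ofReal (a.toReal ^ q - 0 ^ q) := lint_rpow_Ioc hq0 le_rfl ENNReal.toReal_nonneg
      _ = a ^ q := by
          rw [Real.zero_rpow hq0.ne', sub_zero, ← ENNReal.ofReal_rpow_of_nonneg
            ENNReal.toReal_nonneg hq0.le, ENNReal.ofReal_toReal ha]





lemma ennreal_iSup_rpow {r : ℝ} (hr : 0 < r) (x : ℕ → ℝ≥0∞) :
    (⨆ n, x n) ^ r = ⨆ n, x n ^ r := by
  have key : ∀ s : ℝ, 0 < s → ∀ y : ℕ → ℝ≥0∞, ⨆ n, y n ^ s ≤ (⨆ n, y n) ^ s := by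
    intro s hs y
    exact iSup_le fun n => ENNReal.rpow_le_rpow (le_iSup y n) hs.le
  refine le_antisymm ?_ (key r hr x)
  have h2 := key (1/r) (by positivity) (fun n => x n ^ r)
  have h3 : ∀ n, (x n ^ r) ^ (1/r) = x n := by
    intro n
    rw [← ENNReal.rpow_mul, mul_one_div, div_self hr.ne', ENNReal.rpow_one]
  simp only [h3] at h2
  calc (⨆ n, x n) ^ r ≤ ((⨆ n, x n ^ r) ^ (1/r)) ^ r :=
        ENNReal.rpow_le_rpow h2 hr.le
    _ = ⨆ n, x n ^ r := by
        rw [← ENNReal.rpow_mul, one_div_mul_cancel hr.ne', ENNReal.rpow_one]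

namespace LaiAux

noncomputable def dc (n : ℕ) (t : ℝ) : ℝ := (⌈t * 2 ^ n⌉ : ℤ) / 2 ^ n

lemma dc_ge (n : ℕ) (t : ℝ) : t ≤ dc n t := by
  rw [dc, le_div_iff₀ (by positivity)]
  exact Int.le_ceil _

lemma dc_le (n : ℕ) (t : ℝ) : dc n t ≤ t + ((2:ℝ) ^ n)⁻¹ := by
  rw [dc, div_le_iff₀ (by positivity)]
  have := (Int.ceil_lt_add_one (t * 2 ^ n)).le
  calc ((⌈t * 2 ^ n⌉ : ℤ) : ℝ) ≤ t * 2 ^ n + 1 := this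
    _ = (t + ((2:ℝ) ^ n)⁻¹) * 2 ^ n := by field_simp
  
lemma dc_mono_n (n : ℕ) (t : ℝ) : dc (n+1) t ≤ dc n t := by
  rw [dc, dc, div_le_div_iff₀ (by positivity) (by positivity)]
  have h1 : (⌈t * 2 ^ (n+1)⌉ : ℤ) ≤ 2 * ⌈t * 2 ^ n⌉ := by
    apply Int.ceil_le.mpr
    push_cast
    calc t * 2 ^ (n+1) = (t * 2 ^ n) * 2 := by ring
      _ ≤ (⌈t * 2 ^ n⌉ : ℝ) * 2 := by
          have := Int.le_ceil (t * 2 ^ n)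
          linarith
      _ = 2 * (⌈t * 2 ^ n⌉ : ℝ) := by ring
  have h2 : ((⌈t * 2 ^ (n+1)⌉ : ℤ) : ℝ) ≤ 2 * ((⌈t * 2 ^ n⌉ : ℤ) : ℝ) := by exact_mod_cast h1
  have h3 : (0:ℝ) ≤ 2 ^ n := by positivity
  calc ((⌈t * 2 ^ (n+1)⌉ : ℤ) : ℝ) * 2 ^ n ≤ (2 * ((⌈t * 2 ^ n⌉ : ℤ) : ℝ)) * 2 ^ n :=
        mul_le_mul_of_nonneg_right h2 h3
    _ = ((⌈t * 2 ^ n⌉ : ℤ) : ℝ) * 2 ^ (n+1) := by ring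

lemma dc_eq {n i : ℕ} {t : ℝ} (ht : t ∈ Ioc ((i:ℝ)/2^n) ((i+1:ℝ)/2^n)) :
    dc n t = (i+1:ℝ)/2^n := by
  have h2 : (0:ℝ) < 2 ^ n := by positivity
  have hc : ⌈t * 2 ^ n⌉ = (i+1 : ℤ) := by
    apply Int.ceil_eq_iff.mpr
    constructor
    · push_cast
      have := ht.1
      rw [div_lt_iff₀ h2] at this
      linarith
    · push_cast
      have := ht.2
      rw [le_div_iff₀ h2] at this
      linarith
  rw [dc, hc]
  push_cast
  ring

/-- The dyadic step approximation of `f`. -/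
noncomputable def stepf (f : ℝ → ℝ≥0∞) (n : ℕ) (t : ℝ) : ℝ≥0∞ :=
  if t ∈ Ioc (0:ℝ) (n:ℝ) then f (dc n t) else 0

lemma stepf_le {f : ℝ → ℝ≥0∞} (hf : Antitone f) (n : ℕ) (t : ℝ) : stepf f n t ≤ f t := by
  rw [stepf]
  split
  · exact hf (dc_ge n t)
  · exact zero_le

lemma stepf_mono {f : ℝ → ℝ≥0∞} (hf : Antitone f) : Monotone (stepf f) := by
  apply monotone_nat_of_le_succ
  intro n t
  rw [stepf, stepf]
  split
  · rename_i h
    rw [if_pos ⟨h.1, h.2.trans (by exact_mod_cast Nat.le_succ n)⟩]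
    exact hf (dc_mono_n n t)
  · exact zero_le

lemma stepf_measurable {f : ℝ → ℝ≥0∞} (hf : Antitone f) (n : ℕ) :
    Measurable (stepf f n) := by
  have hdc : Measurable (dc n) := by
    have : Monotone (dc n) := by
      intro s t hst
      unfold dc
      gcongr
    exact this.measurable
  unfold stepf
  exact Measurable.ite measurableSet_Ioc (hf.measurable.comp hdc) measurable_const

lemma stepf_tendsto {f : ℝ → ℝ≥0∞} (hf : Antitone f) {t : ℝ} (ht : 0 < t)
    (hcont : ContinuousAt f t) : (⨆ n, stepf f n t) = f t := by
  have h1 : Filter.Tendsto (fun n => dc n t) Filter.atTop (nhds t) := by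
    have hsq : Filter.Tendsto (fun n : ℕ => t + ((2:ℝ)^n)⁻¹) Filter.atTop (nhds t) := by
      have : Filter.Tendsto (fun n : ℕ => ((2:ℝ)⁻¹)^n) Filter.atTop (nhds 0) :=
        tendsto_pow_atTop_nhds_zero_of_lt_one (by norm_num) (by norm_num)
      simp_rw [inv_pow] at this
      simpa using Filter.Tendsto.add (tendsto_const_nhds) this
    exact tendsto_of_tendsto_of_tendsto_of_le_of_le tendsto_const_nhds hsq
      (fun n => dc_ge n t) (fun n => dc_le n t)
  have h2 : Filter.Tendsto (fun n => stepf f n t) Filter.atTop (nhds (f t)) := by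
    apply Filter.Tendsto.congr' ?_ ((hcont.tendsto).comp h1)
    filter_upwards [Filter.eventually_ge_atTop ⌈t⌉₊] with n hn
    rw [Function.comp_apply, stepf, if_pos]
    exact ⟨ht, le_trans (Nat.le_ceil t) (by exact_mod_cast hn)⟩
  exact tendsto_nhds_unique (tendsto_atTop_iSup
    (fun a b hab => stepf_mono hf hab t)) h2



lemma Ioc_biUnion_range (z : ℕ → ℝ) (hz : Monotone z) (N : ℕ) :
    ⋃ i ∈ Finset.range N, Ioc (z i) (z (i+1)) = Ioc (z 0) (z N) := by
  induction N with
  | zero => simp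
  | succ N ih =>
    rw [Finset.range_add_one, Finset.set_biUnion_insert, ih, Set.union_comm,
      Set.Ioc_union_Ioc_eq_Ioc (hz (Nat.zero_le N)) (hz (Nat.le_succ N))]

lemma step_eval {s e : ℝ} (hs : 0 < s) (he : 0 < e) (n : ℕ) (f : ℝ → ℝ≥0∞)
    (hfm : Measurable f) :
    ∫⁻ t in Ioi (0:ℝ), ENNReal.ofReal (s * t ^ (s - 1)) * (stepf f n t) ^ e =
      ∑ i ∈ Finset.range (n * 2 ^ n),
        ENNReal.ofReal ((((i:ℝ)+1)/2^n) ^ s - ((i:ℝ)/2^n) ^ s) *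
          f (((i:ℝ)+1)/2^n) ^ e := by
  set N := n * 2 ^ n with hN
  set z : ℕ → ℝ := fun i => (i:ℝ)/2^n with hz
  have h2n : (0:ℝ) < 2 ^ n := by positivity
  have hzmono : Monotone z := fun i j hij => by
    simp only [hz]
    gcongr
  have hznn : ∀ i, 0 ≤ z i := fun i => by positivity
  have hzN : z N = n := by
    simp only [hz, hN]
    push_cast
    field_simp
  have hsplit : Ioi (0:ℝ) = Ioc (0:ℝ) (n:ℝ) ∪ Ioi (n:ℝ) :=
    (Set.Ioc_union_Ioi_eq_Ioi (by positivity : (0:ℝ) ≤ (n:ℝ))).symm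
  rw [hsplit, lintegral_union measurableSet_Ioi (Set.Ioc_disjoint_Ioi le_rfl)]
  have htail : ∫⁻ t in Ioi (n:ℝ), ENNReal.ofReal (s * t ^ (s - 1)) * (stepf f n t) ^ e = 0 := by
    rw [setLIntegral_congr_fun measurableSet_Ioi
      (fun t (ht : t ∈ Ioi (n:ℝ)) => ?_), lintegral_zero]
    rw [stepf, if_neg (fun hmem => absurd hmem.2 (not_le.mpr ht)),
      ENNReal.zero_rpow_of_pos he, mul_zero]
  rw [htail, add_zero]
  have hcover : Ioc (0:ℝ) (n:ℝ) = ⋃ i ∈ Finset.range N, Ioc (z i) (z (i+1)) := by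
    rw [Ioc_biUnion_range z hzmono N, hzN]
    norm_num [hz]
  have hdisj : Set.PairwiseDisjoint ↑(Finset.range N) (fun i => Ioc (z i) (z (i+1))) := by
    intro i _ j _ hij
    rcases hij.lt_or_gt with h | h
    · exact Set.Ioc_disjoint_Ioc.mpr (le_trans (min_le_left _ _)
        (le_trans (hzmono h) (le_max_right _ _)))
    · exact Set.Ioc_disjoint_Ioc.mpr (le_trans (min_le_right _ _)
        (le_trans (hzmono h) (le_max_left _ _)))
  rw [hcover, lintegral_biUnion_finset hdisj (fun i _ => measurableSet_Ioc)]
  apply Finset.sum_congr rfl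
  intro i hi
  have hiN : i + 1 ≤ N := Finset.mem_range.mp hi
  have hpc : ∀ t ∈ Ioc (z i) (z (i+1)),
      ENNReal.ofReal (s * t ^ (s - 1)) * (stepf f n t) ^ e
        = ENNReal.ofReal (s * t ^ (s - 1)) * f (z (i+1)) ^ e := by
    intro t ht
    have ht1 : t ∈ Ioc (0:ℝ) (n:ℝ) :=
      ⟨lt_of_le_of_lt (hznn i) ht.1, le_trans ht.2 (hzN ▸ hzmono hiN)⟩
    have hdc : dc n t = z (i+1) := by
      have : t ∈ Ioc ((i:ℝ)/2^n) ((i+1:ℝ)/2^n) := by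
        refine ⟨ht.1, ?_⟩
        have := ht.2
        simp only [hz] at this ⊢
        push_cast at this ⊢
        linarith
      rw [dc_eq this, hz]
      push_cast
      ring
    rw [stepf, if_pos ht1, hdc]
  rw [setLIntegral_congr_fun measurableSet_Ioc hpc]
  have hkmeas : Measurable fun t : ℝ => ENNReal.ofReal (s * t ^ (s - 1)) :=
    ENNReal.measurable_ofReal.comp (measurable_const.mul (measurable_id.pow measurable_const))
  rw [lintegral_mul_const _ hkmeas, lint_rpow_Ioc hs (hznn i) (hzmono (Nat.le_succ i))]
  have hz1 : z (i+1) = ((i:ℝ)+1)/2^n := by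
    simp only [hz]; push_cast; ring
  rw [hz1, mul_comm]

/-- The key inequality (continuous version). -/
lemma key_ineq {p q : ℝ} (hp : 1 ≤ p) (hpq : p ≤ q) {f : ℝ → ℝ≥0∞} (hf : Antitone f) :
    ∫⁻ t in Ioi (0:ℝ), ENNReal.ofReal (q * t ^ (q - 1)) * f t ^ (q/p) ≤
      (∫⁻ t in Ioi (0:ℝ), ENNReal.ofReal (p * t ^ (p - 1)) * f t) ^ (q/p) := by
  have hp0 : (0:ℝ) < p := lt_of_lt_of_le one_pos hp
  have hq0 : (0:ℝ) < q := lt_of_lt_of_le hp0 hpq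
  set r : ℝ := q / p with hrdef
  have hr1 : 1 ≤ r := (one_le_div hp0).mpr hpq
  have hr0 : (0:ℝ) < r := lt_of_lt_of_le one_pos hr1
  have hfm : Measurable f := hf.measurable
  have hkmeas : ∀ s : ℝ, Measurable fun t : ℝ => ENNReal.ofReal (s * t ^ (s - 1)) := fun s =>
    ENNReal.measurable_ofReal.comp (measurable_const.mul (measurable_id.pow measurable_const))
  have hstep : ∀ n : ℕ,
      ∫⁻ t in Ioi (0:ℝ), ENNReal.ofReal (q * t ^ (q - 1)) * (stepf f n t) ^ r ≤
      (∫⁻ t in Ioi (0:ℝ), ENNReal.ofReal (p * t ^ (p - 1)) * f t) ^ r := by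
    intro n
    rw [step_eval hq0 hr0 n f hfm]
    have h2n : (0:ℝ) < 2 ^ n := by positivity
    set b : ℕ → ℝ≥0∞ := fun i => f (((i:ℝ)+1)/2^n) with hb
    set y : ℕ → ℝ := fun i => ((i:ℝ)/2^n) ^ p with hy
    have hbmono : Antitone b := fun i j hij => hf (by gcongr)
    have hymono : Monotone y := fun i j hij => by
      simp only [hy]
      gcongr
    have hy0 : y 0 = 0 := by
      simp only [hy]
      norm_num [Real.zero_rpow hp0.ne']
    have hd := discrete_key hr1 b hbmono y hy0 hymono (n * 2 ^ n)
    have hpr : p * r = q := by rw [hrdef]; field_simp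
    have hyr : ∀ i : ℕ, y i ^ r = (((i:ℕ):ℝ)/2^n) ^ q := fun i => by
      simp only [hy]
      rw [← Real.rpow_mul (by positivity : (0:ℝ) ≤ ((i:ℕ):ℝ)/2^n), hpr]
    calc ∑ i ∈ Finset.range (n * 2 ^ n),
          ENNReal.ofReal ((((i:ℝ)+1)/2^n) ^ q - ((i:ℝ)/2^n) ^ q) * f (((i:ℝ)+1)/2^n) ^ r
        = ∑ i ∈ Finset.range (n * 2 ^ n),
            ENNReal.ofReal (y (i+1) ^ r - y i ^ r) * b i ^ r := by
          refine Finset.sum_congr rfl fun i _ => ?_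
          rw [hyr (i+1), hyr i]
          simp only [hb]
          push_cast
          ring_nf
      _ ≤ (∑ i ∈ Finset.range (n * 2 ^ n),
            ENNReal.ofReal (y (i+1) - y i) * b i) ^ r := hd
      _ = (∫⁻ t in Ioi (0:ℝ),
            ENNReal.ofReal (p * t ^ (p - 1)) * (stepf f n t) ^ (1:ℝ)) ^ r := by
          rw [step_eval hp0 one_pos n f hfm]
          congr 1
          refine Finset.sum_congr rfl fun i _ => ?_
          simp only [hy, hb, ENNReal.rpow_one]
          push_cast
          ring_nf
      _ ≤ (∫⁻ t in Ioi (0:ℝ), ENNReal.ofReal (p * t ^ (p - 1)) * f t) ^ r := by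
          apply ENNReal.rpow_le_rpow ?_ hr0.le
          apply lintegral_mono fun t => ?_
          rw [ENNReal.rpow_one]
          exact mul_le_mul_right (stepf_le hf n t) _
  -- monotone convergence
  have hmono : Monotone fun n : ℕ => fun t : ℝ =>
      ENNReal.ofReal (q * t ^ (q - 1)) * (stepf f n t) ^ r := fun m n hmn => by
    intro t
    exact mul_le_mul_right (ENNReal.rpow_le_rpow (stepf_mono hf hmn t) hr0.le) _
  have hmeasn : ∀ n : ℕ, Measurable fun t : ℝ =>
      ENNReal.ofReal (q * t ^ (q - 1)) * (stepf f n t) ^ r := fun n =>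
    (hkmeas q).mul ((stepf_measurable hf n).pow measurable_const)
  have hae : ∀ᵐ t ∂(volume.restrict (Ioi (0:ℝ))),
      ENNReal.ofReal (q * t ^ (q - 1)) * f t ^ r =
        ⨆ n, ENNReal.ofReal (q * t ^ (q - 1)) * (stepf f n t) ^ r := by
    have hD : Set.Countable {t : ℝ | ¬ContinuousAt f t} := hf.countable_not_continuousAt
    have hD0 : ∀ᵐ t ∂volume, t ∉ {t : ℝ | ¬ContinuousAt f t} :=
      measure_eq_zero_iff_ae_notMem.mp (hD.measure_zero volume)
    filter_upwards [ae_restrict_mem measurableSet_Ioi, ae_restrict_of_ae hD0] with t ht hct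
    have hcont : ContinuousAt f t := not_not.mp hct
    rw [← ENNReal.mul_iSup, ← ennreal_iSup_rpow hr0, stepf_tendsto hf ht hcont]
  calc ∫⁻ t in Ioi (0:ℝ), ENNReal.ofReal (q * t ^ (q - 1)) * f t ^ r
      = ∫⁻ t in Ioi (0:ℝ),
          ⨆ n, ENNReal.ofReal (q * t ^ (q - 1)) * (stepf f n t) ^ r :=
        lintegral_congr_ae hae
    _ = ⨆ n, ∫⁻ t in Ioi (0:ℝ),
          ENNReal.ofReal (q * t ^ (q - 1)) * (stepf f n t) ^ r :=
        lintegral_iSup hmeasn hmono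
    _ ≤ (∫⁻ t in Ioi (0:ℝ), ENNReal.ofReal (p * t ^ (p - 1)) * f t) ^ r :=
        iSup_le hstep

lemma extend_antitone {h : ℝ → ℝ≥0∞} (hh : AntitoneOn h (Ioi 0)) :
    ∃ g : ℝ → ℝ≥0∞, Antitone g ∧ ∀ t ∈ Ioi (0:ℝ), g t = h t := by
  refine ⟨fun t => if 0 < t then h t else ⊤, ?_, fun t ht => if_pos ht⟩
  intro s t hst
  dsimp only
  by_cases hs : 0 < s
  · rw [if_pos hs, if_pos (lt_of_lt_of_le hs hst)]
    exact hh hs (lt_of_lt_of_le hs hst) hst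
  · rw [if_neg hs]
    exact le_top

lemma keyA {p q : ℝ} (hp : 1 ≤ p) (hpq : p ≤ q) {f : ℝ → ℝ≥0∞}
    (hf : AntitoneOn f (Ioi 0)) :
    ∫⁻ t in Ioi (0:ℝ), ENNReal.ofReal (q * t ^ (q - 1)) * f t ^ (q/p) ≤
      (∫⁻ t in Ioi (0:ℝ), ENNReal.ofReal (p * t ^ (p - 1)) * f t) ^ (q/p) := by
  obtain ⟨g, hg, hgf⟩ := extend_antitone hf
  have h1 : ∫⁻ t in Ioi (0:ℝ), ENNReal.ofReal (q * t ^ (q - 1)) * f t ^ (q/p)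
      = ∫⁻ t in Ioi (0:ℝ), ENNReal.ofReal (q * t ^ (q - 1)) * g t ^ (q/p) :=
    setLIntegral_congr_fun measurableSet_Ioi
      (fun t ht => by rw [hgf t ht])
  have h2 : ∫⁻ t in Ioi (0:ℝ), ENNReal.ofReal (p * t ^ (p - 1)) * f t
      = ∫⁻ t in Ioi (0:ℝ), ENNReal.ofReal (p * t ^ (p - 1)) * g t :=
    setLIntegral_congr_fun measurableSet_Ioi
      (fun t ht => by rw [hgf t ht])
  rw [h1, h2]
  exact key_ineq hp hpq hg

lemma keyB {p : ℝ} (hp : 1 ≤ p) {f : ℝ → ℝ≥0∞} (hf : AntitoneOn f (Ioi 0)) :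
    ∫⁻ t in Ioi (0:ℝ), ENNReal.ofReal (p * t ^ (p - 1)) * f t ^ p ≤
      (∫⁻ t in Ioi (0:ℝ), f t) ^ p := by
  have := keyA le_rfl hp hf
  rw [div_one] at this
  refine le_trans (le_of_eq ?_) (this.trans (le_of_eq ?_))
  · rfl
  · congr 1
    apply lintegral_congr fun t => ?_
    norm_num [Real.rpow_zero]

lemma B_swap {g : ℝ → ℝ≥0∞} (hgm : Measurable g) {c : ℝ → ℝ≥0∞} (hcm : Measurable c)
    {q : ℝ} (hq : 1 ≤ q) :
    ∫⁻ s in Ioi (0:ℝ), g s ^ q * c s =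
      ∫⁻ t in Ioi (0:ℝ), ENNReal.ofReal (q * t ^ (q - 1)) *
        ∫⁻ s in {s : ℝ | ENNReal.ofReal t < g s} ∩ Ioi 0, c s := by
  have hq0 : (0:ℝ) < q := lt_of_lt_of_le one_pos hq
  have hkm : ∀ s0 : ℝ, Measurable fun t : ℝ =>
      (if ENNReal.ofReal t < g s0 then ENNReal.ofReal (q * t ^ (q - 1)) else 0) := by
    intro s0
    apply Measurable.ite ?_ (ENNReal.measurable_ofReal.comp
      (measurable_const.mul (measurable_id.pow measurable_const))) measurable_const
    exact measurableSet_lt ENNReal.measurable_ofReal measurable_const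
  calc ∫⁻ s in Ioi (0:ℝ), g s ^ q * c s
      = ∫⁻ s in Ioi (0:ℝ), ∫⁻ t in Ioi (0:ℝ),
          (if ENNReal.ofReal t < g s then ENNReal.ofReal (q * t ^ (q - 1)) else 0) * c s := by
        apply lintegral_congr fun s => ?_
        rw [lintegral_mul_const _ (hkm s), layer_cake_pt hq (g s)]
    _ = ∫⁻ t in Ioi (0:ℝ), ∫⁻ s in Ioi (0:ℝ),
          (if ENNReal.ofReal t < g s then ENNReal.ofReal (q * t ^ (q - 1)) else 0) * c s := by
        apply lintegral_lintegral_swap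
        apply Measurable.aemeasurable
        apply Measurable.mul ?_ (hcm.comp measurable_fst)
        apply Measurable.ite ?_ (ENNReal.measurable_ofReal.comp
          (measurable_const.mul ((measurable_snd).pow measurable_const))) measurable_const
        exact measurableSet_lt (ENNReal.measurable_ofReal.comp measurable_snd)
          (hgm.comp measurable_fst)
    _ = ∫⁻ t in Ioi (0:ℝ), ENNReal.ofReal (q * t ^ (q - 1)) *
          ∫⁻ s in {s : ℝ | ENNReal.ofReal t < g s} ∩ Ioi 0, c s := by
        apply lintegral_congr fun t => ?_
        have hset : MeasurableSet {s : ℝ | ENNReal.ofReal t < g s} :=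
          measurableSet_lt measurable_const hgm
        calc ∫⁻ s in Ioi (0:ℝ),
              (if ENNReal.ofReal t < g s then ENNReal.ofReal (q * t ^ (q - 1)) else 0) * c s
            = ∫⁻ s in Ioi (0:ℝ), {s : ℝ | ENNReal.ofReal t < g s}.indicator
                (fun s => ENNReal.ofReal (q * t ^ (q - 1)) * c s) s := by
              apply lintegral_congr fun s => ?_
              by_cases hst : ENNReal.ofReal t < g s
              · simp [Set.indicator_apply, hst]
              · simp [Set.indicator_apply, hst]
          _ = ∫⁻ s in {s : ℝ | ENNReal.ofReal t < g s} ∩ Ioi 0,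
                ENNReal.ofReal (q * t ^ (q - 1)) * c s := by
              rw [lintegral_indicator hset, Measure.restrict_restrict hset]
          _ = ENNReal.ofReal (q * t ^ (q - 1)) *
                ∫⁻ s in {s : ℝ | ENNReal.ofReal t < g s} ∩ Ioi 0, c s :=
              lintegral_const_mul _ hcm

end LaiAux

open LaiAux


lemma hyp_ext {P Q : ℝ} (hP : 1 ≤ P) (hPQ : P ≤ Q) (φ : ℝ → ℝ → ℝ) (v w : ℝ → ℝ)
    (hv : Measurable v) (C : ℝ)
    (hz : ∀ z ∈ Ioi (0 : ℝ),
      (∫⁻ x in Ioo (0 : ℝ) z, ENNReal.ofReal (v x)) ^ (1 / Q) ≤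
        ENNReal.ofReal C *
          (∫⁻ x in Ioi (0 : ℝ),
            (∫⁻ y in Ioo (0 : ℝ) z, ENNReal.ofReal (φ x y)) ^ P *
              ENNReal.ofReal (w x)) ^ (1 / P))
    (S : Set ℝ) (hS1 : S ⊆ Ioi 0) (hS2 : ∀ a ∈ S, ∀ b, 0 < b → b ≤ a → b ∈ S) :
    (∫⁻ x in S, ENNReal.ofReal (v x)) ^ (1 / Q) ≤
      ENNReal.ofReal C *
        (∫⁻ x in Ioi (0 : ℝ),
          (∫⁻ y in S, ENNReal.ofReal (φ x y)) ^ P * ENNReal.ofReal (w x)) ^ (1 / P) := by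
  have hP0 : (0:ℝ) < P := lt_of_lt_of_le one_pos hP
  have hQ0 : (0:ℝ) < Q := lt_of_lt_of_le hP0 hPQ
  rcases S.eq_empty_or_nonempty with rfl | hS
  · rw [Measure.restrict_empty, lintegral_zero_measure,
      ENNReal.zero_rpow_of_pos (by positivity)]
    exact zero_le
  by_cases hbdd : BddAbove S
  · -- bounded case : S is a.e. equal to Ioo 0 (sSup S)
    set z := sSup S with hzdef
    obtain ⟨a, haS⟩ := hS
    have hz0 : 0 < z := lt_of_lt_of_le (hS1 haS) (le_csSup hbdd haS)
    have hsub1 : Ioo 0 z ⊆ S := by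
      intro b hb
      obtain ⟨a', ha'S, hba'⟩ := exists_lt_of_lt_csSup (Set.nonempty_of_mem haS) hb.2
      exact hS2 a' ha'S b hb.1 hba'.le
    have hsub2 : S ⊆ Ioc 0 z := fun x hx => ⟨hS1 hx, le_csSup hbdd hx⟩
    have hae : S =ᵐ[volume] Ioo 0 z := by
      rw [MeasureTheory.ae_eq_set]
      constructor
      · apply measure_mono_null (t := {z}) ?_ Real.volume_singleton
        rintro x ⟨hxS, hxn⟩
        have h1 := hsub2 hxS
        have hxz : ¬ x < z := fun hc => hxn (Set.mem_Ioo.mpr ⟨h1.1, hc⟩)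
        exact mem_singleton_iff.mpr (le_antisymm h1.2 (not_lt.mp hxz))
      · rw [Set.diff_eq_empty.mpr hsub1]
        exact measure_empty
    rw [setLIntegral_congr hae]
    have hinner : ∀ x, (∫⁻ y in S, ENNReal.ofReal (φ x y))
        = ∫⁻ y in Ioo 0 z, ENNReal.ofReal (φ x y) := fun x => setLIntegral_congr hae
    calc (∫⁻ x in Ioo 0 z, ENNReal.ofReal (v x)) ^ (1 / Q)
        ≤ ENNReal.ofReal C * (∫⁻ x in Ioi (0:ℝ),
            (∫⁻ y in Ioo (0:ℝ) z, ENNReal.ofReal (φ x y)) ^ P *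
              ENNReal.ofReal (w x)) ^ (1 / P) := hz z hz0
      _ = ENNReal.ofReal C * (∫⁻ x in Ioi (0:ℝ),
            (∫⁻ y in S, ENNReal.ofReal (φ x y)) ^ P *
              ENNReal.ofReal (w x)) ^ (1 / P) := by
          congr 2
          exact lintegral_congr fun x => by rw [hinner x]
  · -- unbounded case : S = Ioi 0
    have hSeq : S = Ioi 0 := by
      apply Set.Subset.antisymm hS1
      intro x hx
      obtain ⟨a, haS, hxa⟩ := not_bddAbove_iff.mp hbdd x
      exact hS2 a haS x hx hxa.le
    subst hSeq
    set Z : ℝ≥0∞ := ENNReal.ofReal C * (∫⁻ x in Ioi (0:ℝ),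
      (∫⁻ y in Ioi (0:ℝ), ENNReal.ofReal (φ x y)) ^ P *
        ENNReal.ofReal (w x)) ^ (1 / P) with hZdef
    have hVn : ∀ n : ℕ, ∫⁻ x in Ioo (0:ℝ) n, ENNReal.ofReal (v x) ≤ Z ^ Q := by
      intro n
      rcases Nat.eq_zero_or_pos n with rfl | hn
      · simp
      have hn0 : (0:ℝ) < n := by exact_mod_cast hn
      have h1 := hz n hn0
      have h2 : (∫⁻ x in Ioi (0:ℝ), (∫⁻ y in Ioo (0:ℝ) n, ENNReal.ofReal (φ x y)) ^ P *
          ENNReal.ofReal (w x)) ^ (1/P) ≤ (∫⁻ x in Ioi (0:ℝ),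
          (∫⁻ y in Ioi (0:ℝ), ENNReal.ofReal (φ x y)) ^ P *
          ENNReal.ofReal (w x)) ^ (1/P) := by
        apply ENNReal.rpow_le_rpow ?_ (by positivity)
        apply lintegral_mono fun x => ?_
        exact mul_le_mul_left (ENNReal.rpow_le_rpow
          (lintegral_mono_set Ioo_subset_Ioi_self) hP0.le) _
      have h3 : (∫⁻ x in Ioo (0:ℝ) n, ENNReal.ofReal (v x)) ^ (1/Q) ≤ Z :=
        le_trans h1 (mul_le_mul_right h2 _)
      have h4 := ENNReal.rpow_le_rpow h3 hQ0.le
      rwa [← ENNReal.rpow_mul, one_div, inv_mul_cancel₀ hQ0.ne', ENNReal.rpow_one] at h4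
    have hind : ∫⁻ x in Ioi (0:ℝ), ENNReal.ofReal (v x)
        = ⨆ n : ℕ, ∫⁻ x in Ioo (0:ℝ) n, ENNReal.ofReal (v x) := by
      have hmeas : Measurable fun x => ENNReal.ofReal (v x) :=
        ENNReal.measurable_ofReal.comp hv
      have h1 : ∀ x : ℝ, (Ioi (0:ℝ)).indicator (fun x => ENNReal.ofReal (v x)) x
          = ⨆ n : ℕ, (Ioo (0:ℝ) (n:ℝ)).indicator (fun x => ENNReal.ofReal (v x)) x := by
        intro x
        by_cases hx : 0 < x
        · rw [Set.indicator_of_mem (show x ∈ Ioi (0:ℝ) from hx)]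
          apply le_antisymm
          · apply le_iSup_of_le (⌊x⌋₊ + 1)
            rw [Set.indicator_of_mem (show x ∈ Ioo (0:ℝ) ((⌊x⌋₊ + 1 : ℕ):ℝ) from Set.mem_Ioo.mpr ⟨hx, by exact_mod_cast Nat.lt_floor_add_one x⟩)]
          · exact iSup_le fun n => Set.indicator_le_self _ _ x
        · rw [Set.indicator_of_notMem (show x ∉ Ioi (0:ℝ) from fun hc => hx hc)]
          symm
          rw [ENNReal.iSup_eq_zero]
          intro n
          apply Set.indicator_of_notMem
          exact fun hc => hx hc.1
      calc ∫⁻ x in Ioi (0:ℝ), ENNReal.ofReal (v x)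
          = ∫⁻ x, (Ioi (0:ℝ)).indicator (fun x => ENNReal.ofReal (v x)) x :=
            (lintegral_indicator measurableSet_Ioi _).symm
        _ = ∫⁻ x, ⨆ n : ℕ, (Ioo (0:ℝ) (n:ℝ)).indicator
              (fun x => ENNReal.ofReal (v x)) x := lintegral_congr h1
        _ = ⨆ n : ℕ, ∫⁻ x, (Ioo (0:ℝ) (n:ℝ)).indicator
              (fun x => ENNReal.ofReal (v x)) x := by
            apply lintegral_iSup (fun n => hmeas.indicator measurableSet_Ioo)
            intro m n hmn
            apply Set.indicator_le_indicator_of_subset ?_ (fun x => zero_le)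
            exact Ioo_subset_Ioo_right (by exact_mod_cast hmn)
        _ = ⨆ n : ℕ, ∫⁻ x in Ioo (0:ℝ) (n:ℝ), ENNReal.ofReal (v x) := by
            exact iSup_congr fun n => lintegral_indicator measurableSet_Ioo _
    have h5 : ∫⁻ x in Ioi (0:ℝ), ENNReal.ofReal (v x) ≤ Z ^ Q := by
      rw [hind]
      exact iSup_le hVn
    have h6 := ENNReal.rpow_le_rpow h5 (by positivity : (0:ℝ) ≤ 1/Q)
    rwa [← ENNReal.rpow_mul, mul_one_div, div_self hQ0.ne', ENNReal.rpow_one] at h6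



lemma ite_inter_lint {pred : ℝ → Prop} [DecidablePred pred]
    (hA : MeasurableSet {y | pred y}) (F : ℝ → ℝ≥0∞) :
    ∫⁻ y in Ioi (0:ℝ), (if pred y then F y else 0) = ∫⁻ y in {y | pred y} ∩ Ioi 0, F y := by
  calc ∫⁻ y in Ioi (0:ℝ), (if pred y then F y else 0)
      = ∫⁻ y in Ioi (0:ℝ), {y | pred y}.indicator F y := by
        apply lintegral_congr fun y => ?_
        by_cases hy : pred y <;> simp [Set.indicator_apply, hy]
    _ = ∫⁻ y in {y | pred y} ∩ Ioi 0, F y := by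
        rw [lintegral_indicator hA, Measure.restrict_restrict hA]

/-- Lai, Theorem 2.1. For `1 ≤ P ≤ Q < ∞`, a measurable nonnegative kernel
`φ` and a.e. positive measurable weights `v, w` on `(0,∞)`, the weighted inequality for all
non-increasing `h : (0,∞) → [0,∞]` holds with constant `C` iff it holds for the
characteristic functions of the intervals `(0,z)` with the same constant. -/
theorem lai_duality (P Q : ℝ) (hP : 1 ≤ P) (hPQ : P ≤ Q)
    (φ : ℝ → ℝ → ℝ) (hφmeas : Measurable (Function.uncurry φ)) (hφ0 : ∀ x y, 0 ≤ φ x y)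
    (v w : ℝ → ℝ) (hv : Measurable v) (hw : Measurable w)
    (hvpos : ∀ᵐ x ∂(volume.restrict (Ioi (0 : ℝ))), 0 < v x)
    (hwpos : ∀ᵐ x ∂(volume.restrict (Ioi (0 : ℝ))), 0 < w x)
    (C : ℝ) (hC : 0 < C) :
    (∀ h : ℝ → ℝ≥0∞, AntitoneOn h (Ioi 0) →
      (∫⁻ x in Ioi (0 : ℝ), h x ^ Q * ENNReal.ofReal (v x)) ^ (1 / Q) ≤
        ENNReal.ofReal C *
          (∫⁻ x in Ioi (0 : ℝ),
            (∫⁻ y in Ioi (0 : ℝ), ENNReal.ofReal (φ x y) * h y) ^ P *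
              ENNReal.ofReal (w x)) ^ (1 / P)) ↔
    (∀ z ∈ Ioi (0 : ℝ),
      (∫⁻ x in Ioo (0 : ℝ) z, ENNReal.ofReal (v x)) ^ (1 / Q) ≤
        ENNReal.ofReal C *
          (∫⁻ x in Ioi (0 : ℝ),
            (∫⁻ y in Ioo (0 : ℝ) z, ENNReal.ofReal (φ x y)) ^ P *
              ENNReal.ofReal (w x)) ^ (1 / P)) := by
  have hP0 : (0:ℝ) < P := lt_of_lt_of_le one_pos hP
  have hQ0 : (0:ℝ) < Q := lt_of_lt_of_le hP0 hPQ
  have hQ1 : (1:ℝ) ≤ Q := le_trans hP hPQ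
  constructor
  · -- h-form implies z-form
    intro hall z hz
    set h : ℝ → ℝ≥0∞ := (Ioo (0:ℝ) z).indicator (fun _ => (1:ℝ≥0∞)) with hdef
    have hanti : AntitoneOn h (Ioi 0) := by
      intro s hs t ht hst
      by_cases htm : t ∈ Ioo (0:ℝ) z
      · have hsm : s ∈ Ioo (0:ℝ) z := ⟨hs, lt_of_le_of_lt hst htm.2⟩
        rw [hdef]
        rw [Set.indicator_of_mem htm, Set.indicator_of_mem hsm]
      · rw [hdef, Set.indicator_of_notMem htm]
        exact zero_le
    have comp1 : ∫⁻ x in Ioi (0:ℝ), h x ^ Q * ENNReal.ofReal (v x)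
        = ∫⁻ x in Ioo (0:ℝ) z, ENNReal.ofReal (v x) := by
      have hpt : ∀ x, h x ^ Q * ENNReal.ofReal (v x)
          = (Ioo (0:ℝ) z).indicator (fun x => ENNReal.ofReal (v x)) x := by
        intro x
        by_cases hx : x ∈ Ioo (0:ℝ) z
        · rw [hdef, Set.indicator_of_mem hx, Set.indicator_of_mem hx,
            ENNReal.one_rpow, one_mul]
        · rw [hdef, Set.indicator_of_notMem hx, Set.indicator_of_notMem hx,
            ENNReal.zero_rpow_of_pos hQ0, zero_mul]
      rw [lintegral_congr hpt, lintegral_indicator measurableSet_Ioo,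
        Measure.restrict_restrict measurableSet_Ioo,
        Set.inter_eq_self_of_subset_left Ioo_subset_Ioi_self]
    have comp2 : ∫⁻ x in Ioi (0:ℝ),
        (∫⁻ y in Ioi (0:ℝ), ENNReal.ofReal (φ x y) * h y) ^ P * ENNReal.ofReal (w x)
        = ∫⁻ x in Ioi (0:ℝ),
          (∫⁻ y in Ioo (0:ℝ) z, ENNReal.ofReal (φ x y)) ^ P * ENNReal.ofReal (w x) := by
      apply lintegral_congr fun x => ?_
      congr 2
      have hpt : ∀ y, ENNReal.ofReal (φ x y) * h y
          = (Ioo (0:ℝ) z).indicator (fun y => ENNReal.ofReal (φ x y)) y := by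
        intro y
        by_cases hy : y ∈ Ioo (0:ℝ) z
        · rw [hdef, Set.indicator_of_mem hy, Set.indicator_of_mem hy, mul_one]
        · rw [hdef, Set.indicator_of_notMem hy, Set.indicator_of_notMem hy, mul_zero]
      rw [lintegral_congr hpt, lintegral_indicator measurableSet_Ioo,
        Measure.restrict_restrict measurableSet_Ioo,
        Set.inter_eq_self_of_subset_left Ioo_subset_Ioi_self]
    have := hall h hanti
    rwa [comp1, comp2] at this
  · -- z-form implies h-form
    intro hz h hh
    obtain ⟨g, hg, hgh⟩ := extend_antitone hh
    have hgm : Measurable g := hg.measurable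
    have hcvm : Measurable fun x => ENNReal.ofReal (v x) := ENNReal.measurable_ofReal.comp hv
    have e1 : ∫⁻ x in Ioi (0:ℝ), h x ^ Q * ENNReal.ofReal (v x)
        = ∫⁻ x in Ioi (0:ℝ), g x ^ Q * ENNReal.ofReal (v x) :=
      setLIntegral_congr_fun measurableSet_Ioi (fun x hx => by rw [hgh x hx])
    have e2 : ∫⁻ x in Ioi (0:ℝ),
        (∫⁻ y in Ioi (0:ℝ), ENNReal.ofReal (φ x y) * h y) ^ P * ENNReal.ofReal (w x)
        = ∫⁻ x in Ioi (0:ℝ),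
          (∫⁻ y in Ioi (0:ℝ), ENNReal.ofReal (φ x y) * g y) ^ P * ENNReal.ofReal (w x) := by
      apply lintegral_congr fun x => ?_
      congr 2
      exact setLIntegral_congr_fun measurableSet_Ioi
        (fun y hy => by rw [hgh y hy])
    rw [e1, e2]
    -- abbreviations
    set St : ℝ → Set ℝ := fun t => {s : ℝ | ENNReal.ofReal t < g s} ∩ Ioi 0 with hSt
    set Φf : ℝ → ℝ → ℝ≥0∞ := fun x t => ∫⁻ y in St t, ENNReal.ofReal (φ x y) with hΦf
    set Ft : ℝ → ℝ≥0∞ := fun t => ∫⁻ x in Ioi (0:ℝ), Φf x t ^ P * ENNReal.ofReal (w x)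
      with hFt
    set Z : ℝ≥0∞ := ∫⁻ x in Ioi (0:ℝ),
      (∫⁻ y in Ioi (0:ℝ), ENNReal.ofReal (φ x y) * g y) ^ P * ENNReal.ofReal (w x) with hZ
    have hB1 : ∫⁻ x in Ioi (0:ℝ), g x ^ Q * ENNReal.ofReal (v x)
        = ∫⁻ t in Ioi (0:ℝ), ENNReal.ofReal (Q * t ^ (Q - 1)) *
            ∫⁻ s in St t, ENNReal.ofReal (v s) := B_swap hgm hcvm hQ1
    have hStmono : ∀ t1 t2 : ℝ, t1 ≤ t2 → St t2 ⊆ St t1 := by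
      intro t1 t2 h12 s hs
      exact ⟨lt_of_le_of_lt (ENNReal.ofReal_le_ofReal h12) hs.1, hs.2⟩
    have hVa : ∀ t : ℝ, (∫⁻ s in St t, ENNReal.ofReal (v s))
        ≤ ENNReal.ofReal C ^ Q * Ft t ^ (Q/P) := by
      intro t
      have hinit : ∀ a ∈ St t, ∀ b, 0 < b → b ≤ a → b ∈ St t := by
        intro a ha b hb0 hba
        exact ⟨lt_of_lt_of_le ha.1 (hg hba), hb0⟩
      have h1 := hyp_ext hP hPQ φ v w hv C hz (St t) inter_subset_right hinit
      have h2 := ENNReal.rpow_le_rpow h1 hQ0.le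
      rw [← ENNReal.rpow_mul, one_div, inv_mul_cancel₀ hQ0.ne', ENNReal.rpow_one,
        ENNReal.mul_rpow_of_nonneg _ _ hQ0.le, ← ENNReal.rpow_mul] at h2
      have hexp : 1/P * Q = Q/P := by field_simp
      rwa [hexp] at h2
    have hCQfin : ENNReal.ofReal C ^ Q ≠ ∞ :=
      (ENNReal.rpow_lt_top_of_nonneg hQ0.le ENNReal.ofReal_ne_top).ne
    have step1 : ∫⁻ t in Ioi (0:ℝ), ENNReal.ofReal (Q * t ^ (Q - 1)) *
        ∫⁻ s in St t, ENNReal.ofReal (v s)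
        ≤ ENNReal.ofReal C ^ Q * ∫⁻ t in Ioi (0:ℝ),
            ENNReal.ofReal (Q * t ^ (Q - 1)) * Ft t ^ (Q/P) := by
      calc ∫⁻ t in Ioi (0:ℝ), ENNReal.ofReal (Q * t ^ (Q - 1)) *
            ∫⁻ s in St t, ENNReal.ofReal (v s)
          ≤ ∫⁻ t in Ioi (0:ℝ), ENNReal.ofReal (Q * t ^ (Q - 1)) *
              (ENNReal.ofReal C ^ Q * Ft t ^ (Q/P)) :=
            lintegral_mono fun t => mul_le_mul_right (hVa t) _
        _ = ENNReal.ofReal C ^ Q * ∫⁻ t in Ioi (0:ℝ),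
              ENNReal.ofReal (Q * t ^ (Q - 1)) * Ft t ^ (Q/P) := by
            rw [← lintegral_const_mul' _ _ hCQfin]
            exact lintegral_congr fun t => by ring
    have hFtanti : Antitone Ft := by
      intro t1 t2 h12
      apply lintegral_mono fun x => ?_
      exact mul_le_mul_left (ENNReal.rpow_le_rpow
        (lintegral_mono_set (hStmono t1 t2 h12)) hP0.le) _
    have step2 : ∫⁻ t in Ioi (0:ℝ), ENNReal.ofReal (Q * t ^ (Q - 1)) * Ft t ^ (Q/P)
        ≤ (∫⁻ t in Ioi (0:ℝ), ENNReal.ofReal (P * t ^ (P - 1)) * Ft t) ^ (Q/P) :=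
      keyA hP hPQ (hFtanti.antitoneOn _)
    -- measurability of Φf as a function of (t, x)
    have hΦeq : ∀ x t : ℝ, Φf x t = ∫⁻ y in Ioi (0:ℝ),
        (if ENNReal.ofReal t < g y then ENNReal.ofReal (φ x y) else 0) := by
      intro x t
      rw [hΦf]
      exact (ite_inter_lint (measurableSet_lt measurable_const hgm) _).symm
    have hΦm : Measurable fun p : ℝ × ℝ => Φf p.2 p.1 := by
      have : (fun p : ℝ × ℝ => Φf p.2 p.1) = fun p : ℝ × ℝ => ∫⁻ y in Ioi (0:ℝ),
          (if ENNReal.ofReal p.1 < g y then ENNReal.ofReal (φ p.2 y) else 0) := by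
        funext p
        rw [hΦeq p.2 p.1]
      rw [this]
      exact Measurable.lintegral_prod_right'
        (f := fun q : (ℝ × ℝ) × ℝ =>
          if ENNReal.ofReal q.1.1 < g q.2 then ENNReal.ofReal (φ q.1.2 q.2) else 0)
        (Measurable.ite
          (measurableSet_lt
            (ENNReal.measurable_ofReal.comp (measurable_fst.comp measurable_fst))
            (hgm.comp measurable_snd))
          (ENNReal.measurable_ofReal.comp (hφmeas.comp
            ((measurable_snd.comp measurable_fst).prodMk measurable_snd)))
          measurable_const)
    have hΦanti : ∀ x : ℝ, Antitone (Φf x) :=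
      fun x t1 t2 h12 => lintegral_mono_set (hStmono t1 t2 h12)
    have B2' : ∀ x : ℝ, ∫⁻ t in Ioi (0:ℝ), Φf x t
        = ∫⁻ y in Ioi (0:ℝ), ENNReal.ofReal (φ x y) * g y := by
      intro x
      have hcφm : Measurable fun y => ENNReal.ofReal (φ x y) :=
        ENNReal.measurable_ofReal.comp (hφmeas.comp (measurable_const.prodMk measurable_id))
      calc ∫⁻ t in Ioi (0:ℝ), Φf x t
          = ∫⁻ t in Ioi (0:ℝ), ENNReal.ofReal (1 * t ^ ((1:ℝ) - 1)) * Φf x t := by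
            apply (lintegral_congr fun t => ?_).symm
            norm_num [Real.rpow_zero]
        _ = ∫⁻ s in Ioi (0:ℝ), g s ^ (1:ℝ) * ENNReal.ofReal (φ x s) :=
            (B_swap hgm hcφm le_rfl).symm
        _ = ∫⁻ y in Ioi (0:ℝ), ENNReal.ofReal (φ x y) * g y :=
            lintegral_congr fun y => by rw [ENNReal.rpow_one, mul_comm]
    have stepY : ∫⁻ t in Ioi (0:ℝ), ENNReal.ofReal (P * t ^ (P - 1)) * Ft t ≤ Z := by
      calc ∫⁻ t in Ioi (0:ℝ), ENNReal.ofReal (P * t ^ (P - 1)) * Ft t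
          = ∫⁻ t in Ioi (0:ℝ), ∫⁻ x in Ioi (0:ℝ),
              ENNReal.ofReal (P * t ^ (P - 1)) * (Φf x t ^ P * ENNReal.ofReal (w x)) :=
            lintegral_congr fun t =>
              (lintegral_const_mul' _ _ ENNReal.ofReal_ne_top).symm
        _ = ∫⁻ x in Ioi (0:ℝ), ∫⁻ t in Ioi (0:ℝ),
              ENNReal.ofReal (P * t ^ (P - 1)) * (Φf x t ^ P * ENNReal.ofReal (w x)) := by
            apply lintegral_lintegral_swap
            apply Measurable.aemeasurable
            apply Measurable.mul
            · exact (ENNReal.measurable_ofReal.comp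
                (measurable_const.mul (measurable_id.pow measurable_const))).comp
                  measurable_fst
            · exact ((hΦm.comp (measurable_fst.prodMk measurable_snd)).pow
                  measurable_const).mul
                ((ENNReal.measurable_ofReal.comp hw).comp measurable_snd)
        _ = ∫⁻ x in Ioi (0:ℝ), (∫⁻ t in Ioi (0:ℝ),
              ENNReal.ofReal (P * t ^ (P - 1)) * Φf x t ^ P) * ENNReal.ofReal (w x) := by
            apply lintegral_congr fun x => ?_
            rw [← lintegral_mul_const' _ _ ENNReal.ofReal_ne_top]
            exact lintegral_congr fun t => by ring
        _ ≤ ∫⁻ x in Ioi (0:ℝ), (∫⁻ t in Ioi (0:ℝ), Φf x t) ^ P * ENNReal.ofReal (w x) :=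
            lintegral_mono fun x => mul_le_mul_left
              (keyB hP ((hΦanti x).antitoneOn _)) _
        _ = Z := lintegral_congr fun x => by rw [B2' x]
    calc (∫⁻ x in Ioi (0:ℝ), g x ^ Q * ENNReal.ofReal (v x)) ^ (1/Q)
        = (∫⁻ t in Ioi (0:ℝ), ENNReal.ofReal (Q * t ^ (Q - 1)) *
            ∫⁻ s in St t, ENNReal.ofReal (v s)) ^ (1/Q) := by rw [hB1]
      _ ≤ (ENNReal.ofReal C ^ Q *
            (∫⁻ t in Ioi (0:ℝ), ENNReal.ofReal (P * t ^ (P - 1)) * Ft t) ^ (Q/P)) ^ (1/Q) :=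
          ENNReal.rpow_le_rpow (le_trans step1 (mul_le_mul_right step2 _)) (by positivity)
      _ ≤ (ENNReal.ofReal C ^ Q * Z ^ (Q/P)) ^ (1/Q) :=
          ENNReal.rpow_le_rpow (mul_le_mul_right
            (ENNReal.rpow_le_rpow stepY (by positivity)) _) (by positivity)
      _ = ENNReal.ofReal C * Z ^ (1/P) := by
          rw [ENNReal.mul_rpow_of_nonneg _ _ (by positivity), ← ENNReal.rpow_mul,
            ← ENNReal.rpow_mul, mul_one_div, div_self hQ0.ne', ENNReal.rpow_one]
          congr 1
          rw [div_mul_eq_mul_div, mul_one_div, div_self hQ0.ne']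
end
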